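/- arXiv:1703.02939 — 4 statements merged into one kernel-verified Lean document; each statement's English description precedes it below -/
import Mathlib

section
/- Let p ≥ 2 and d ≥ 1 be integers and let H be a finite family of d-intervals with |H| ≥ p. If H satisfies the (p,p) property, then the fractional covering number satisfies τ*(H) < (p·d)^{1/(p-1)} + 1. -/
/-- A `d`-interval: a nonempty subset of `ℝ` that is a union of at most `d`
closed bounded intervals. -/
def IsDInterval (d : ℕ) (s : Set ℝ) : Prop :=
  s.Nonempty ∧ ∃ P : Finset (ℝ × ℝ), P.card ≤ d ∧ s = ⋃ I ∈ P, Set.Icc I.1 I.2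

/-- A finite family `H` of sets satisfies the `(p,q)` property if among every
`p` distinct members of `H` some `q` have a point in common. -/
def HasPQProperty (H : Finset (Set ℝ)) (p q : ℕ) : Prop :=
  ∀ S ⊆ H, S.card = p → ∃ T ⊆ S, T.card = q ∧ (⋂ h ∈ T, (h : Set ℝ)).Nonempty

namespace PPaux

open Classical in
noncomputable def rep (d : ℕ) (s : Set ℝ) : Finset (ℝ × ℝ) :=
  if h : IsDInterval d s then h.2.choose else ∅

lemma rep_card {d : ℕ} {s : Set ℝ} (h : IsDInterval d s) : (rep d s).card ≤ d := by
  rw [rep, dif_pos h]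
  exact h.2.choose_spec.1

lemma mem_rep_iff {d : ℕ} {s : Set ℝ} (h : IsDInterval d s) {x : ℝ} :
    x ∈ s ↔ ∃ I ∈ rep d s, x ∈ Set.Icc I.1 I.2 := by
  rw [rep, dif_pos h]
  conv_lhs => rw [h.2.choose_spec.2]
  simp only [Set.mem_iUnion, Set.mem_Icc, Prod.exists]
  tauto

/-- the finset of left endpoints of the chosen representation -/
noncomputable def lep (d : ℕ) (s : Set ℝ) : Finset ℝ := (rep d s).image Prod.fst

lemma lep_card {d : ℕ} {s : Set ℝ} (h : IsDInterval d s) : (lep d s).card ≤ d :=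
  le_trans (Finset.card_image_le) (rep_card h)

lemma exists_lep_mem {d : ℕ} {s : Set ℝ} (h : IsDInterval d s) :
    ∃ e ∈ lep d s, e ∈ s := by
  obtain ⟨x, hx⟩ := h.1
  obtain ⟨I, hI, hxI⟩ := (mem_rep_iff h).1 hx
  refine ⟨I.1, Finset.mem_image_of_mem _ hI, ?_⟩
  exact (mem_rep_iff h).2 ⟨I, hI, le_refl _, le_trans hxI.1 hxI.2⟩

lemma tuple_lemma {p d : ℕ} {H : Finset (Set ℝ)} (hH : ∀ s ∈ H, IsDInterval d s)
    (hcard : p ≤ H.card) (hprop : HasPQProperty H p p) (hp : 0 < p)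
    (g : Fin p → Set ℝ) (hg : ∀ j, g j ∈ H) :
    ∃ i : Fin p, ∃ e ∈ lep d (g i), ∀ j, e ∈ g j := by
  classical
  set T := Finset.image g Finset.univ with hT
  have hTH : T ⊆ H := by
    intro t ht
    rw [hT, Finset.mem_image] at ht
    obtain ⟨j, -, rfl⟩ := ht; exact hg j
  have hTcard : T.card ≤ p := le_trans Finset.card_image_le (by simp)
  obtain ⟨S, hTS, hSH, hScard⟩ := Finset.exists_subsuperset_card_eq hTH hTcard hcard
  obtain ⟨T', hT'S, hT'card, x, hx⟩ := hprop S hSH hScard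
  have hT'eq : T' = S := Finset.eq_of_subset_of_card_le hT'S (by rw [hT'card, hScard])
  simp only [Set.mem_iInter] at hx
  have hxall : ∀ j, x ∈ g j := by
    intro j
    have hgT : g j ∈ T' := by
      rw [hT'eq]
      exact hTS (by rw [hT]; exact Finset.mem_image_of_mem g (Finset.mem_univ j))
    exact hx _ hgT
  have hI : ∀ j, ∃ I ∈ rep d (g j), x ∈ Set.Icc I.1 I.2 :=
    fun j => (mem_rep_iff (hH _ (hg j))).1 (hxall j)
  choose I hIrep hIx using hI
  obtain ⟨i, -, hmax⟩ := Finset.exists_max_image Finset.univ (fun j => (I j).1)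
    ⟨⟨0, hp⟩, Finset.mem_univ _⟩
  refine ⟨i, (I i).1, Finset.mem_image_of_mem _ (hIrep i), fun j => ?_⟩
  exact (mem_rep_iff (hH _ (hg j))).2
    ⟨I j, hIrep j, hmax j (Finset.mem_univ j), le_trans (hIx i).1 (hIx j).2⟩

end PPaux

namespace PPaux2
open PPaux Finset

open Classical in
lemma matching_bound {p d : ℕ} {H : Finset (Set ℝ)} (hH : ∀ s ∈ H, IsDInterval d s)
    (hcard : p ≤ H.card) (hprop : HasPQProperty H p p) (hp : 2 ≤ p) (hd : 1 ≤ d)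
    (f : Set ℝ → ℝ) (hf0 : ∀ h ∈ H, 0 ≤ f h)
    (hfl : ∀ e ∈ H.biUnion (lep d), ∑ h ∈ H.filter (fun h => e ∈ h), f h ≤ 1) :
    ∑ h ∈ H, f h ≤ ((p : ℝ) * d) ^ (1 / ((p : ℝ) - 1)) := by
  classical
  set E := H.biUnion (lep d) with hE
  set t := ∑ h ∈ H, f h with ht
  set r := ((p : ℝ) * d) ^ (1 / ((p : ℝ) - 1)) with hrdef
  have hpd1 : (1:ℝ) ≤ (p:ℝ) * d := by
    have : (1:ℝ) ≤ (p:ℝ) := by exact_mod_cast le_trans (by norm_num) hp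
    have h2 : (1:ℝ) ≤ (d:ℝ) := by exact_mod_cast hd
    nlinarith
  have hexp : (0:ℝ) ≤ 1 / ((p:ℝ) - 1) := by
    have : (2:ℝ) ≤ (p:ℝ) := by exact_mod_cast hp
    have h1 : (0:ℝ) ≤ (p:ℝ) - 1 := by linarith
    exact div_nonneg zero_le_one h1
  have hr1 : (1:ℝ) ≤ r := Real.one_le_rpow hpd1 hexp
  -- main counting inequality
  have key : t ^ p ≤ (p : ℝ) * d * t := by
    have stepA : t ^ p = ∑ g ∈ Fintype.piFinset (fun _ : Fin p => H), ∏ j, f (g j) := by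
      rw [← Finset.prod_univ_sum]
      rw [Finset.prod_const, Finset.card_univ, Fintype.card_fin]
    -- pointwise bound via tuple lemma
    have stepB : ∀ g ∈ Fintype.piFinset (fun _ : Fin p => H),
        ∏ j, f (g j) ≤ ∑ ie ∈ Finset.univ ×ˢ E,
          (if (ie.2 ∈ lep d (g ie.1) ∧ ∀ j, ie.2 ∈ g j) then ∏ j, f (g j) else 0) := by
      intro g hg
      rw [Fintype.mem_piFinset] at hg
      obtain ⟨i₀, e₀, he₀, hall⟩ := tuple_lemma hH hcard hprop (by omega) g hg
      have hie : (i₀, e₀) ∈ Finset.univ ×ˢ E := by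
        rw [Finset.mem_product]
        exact ⟨Finset.mem_univ _, Finset.mem_biUnion.2 ⟨g i₀, hg i₀, he₀⟩⟩
      have hterm : (if (e₀ ∈ lep d (g i₀) ∧ ∀ j, e₀ ∈ g j) then ∏ j, f (g j) else 0)
          = ∏ j, f (g j) := if_pos ⟨he₀, hall⟩
      calc ∏ j, f (g j)
          = (if (e₀ ∈ lep d (g i₀) ∧ ∀ j, e₀ ∈ g j) then ∏ j, f (g j) else 0) := hterm.symm
        _ ≤ _ := Finset.single_le_sum (f := fun ie => if (ie.2 ∈ lep d (g ie.1) ∧ ∀ j, ie.2 ∈ g j) then ∏ j, f (g j) else 0)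
            (fun ie _ => by
              split
              · exact Finset.prod_nonneg (fun j _ => hf0 _ (hg j))
              · exact le_refl 0) hie
    have stepD : ∀ i : Fin p, ∀ e ∈ E,
        (∑ g ∈ Fintype.piFinset (fun _ : Fin p => H),
          (if (e ∈ lep d (g i) ∧ ∀ j, e ∈ g j) then ∏ j, f (g j) else 0))
        ≤ ∑ h ∈ H, (if e ∈ lep d h then f h else 0) := by
      intro i e he
      set c : Fin p → Set ℝ → ℝ := fun j h =>
        if j = i then (if e ∈ lep d h then f h else 0) else (if e ∈ h then f h else 0) with hc
      have hstep1 : (∑ g ∈ Fintype.piFinset (fun _ : Fin p => H),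
          (if (e ∈ lep d (g i) ∧ ∀ j, e ∈ g j) then ∏ j, f (g j) else 0))
          ≤ ∑ g ∈ Fintype.piFinset (fun _ : Fin p => H), ∏ j, c j (g j) := by
        refine Finset.sum_le_sum (fun g hg => ?_)
        rw [Fintype.mem_piFinset] at hg
        split
        · rename_i hcond
          refine le_of_eq (Finset.prod_congr rfl (fun j _ => ?_))
          simp only [hc]
          by_cases hji : j = i
          · subst hji; simp [hcond.1]
          · simp [hji, hcond.2 j]
        · refine Finset.prod_nonneg (fun j _ => ?_)
          simp only [hc]
          split <;> split <;> first | exact hf0 _ (hg j) | exact le_refl 0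
      have hstep2 : ∑ g ∈ Fintype.piFinset (fun _ : Fin p => H), ∏ j, c j (g j)
          = ∏ j, ∑ h ∈ H, c j h := (Finset.prod_univ_sum _ _).symm
      have hstep3 : ∏ j, ∑ h ∈ H, c j h
          = (∑ h ∈ H, (if e ∈ lep d h then f h else 0)) *
            (∑ h ∈ H, (if e ∈ h then f h else 0)) ^ (Finset.univ.erase i).card := by
        rw [← Finset.mul_prod_erase Finset.univ _ (Finset.mem_univ i)]
        congr 1
        · simp [hc]
        · rw [Finset.prod_congr rfl (fun j hj => ?_), Finset.prod_const]
          simp only [hc, if_neg (Finset.ne_of_mem_erase hj)]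
      have hX1 : ∑ h ∈ H, (if e ∈ h then f h else 0) ≤ 1 := by
        rw [← Finset.sum_filter]; exact hfl e he
      have hX0 : 0 ≤ ∑ h ∈ H, (if e ∈ h then f h else 0) := by
        refine Finset.sum_nonneg (fun h hh => ?_)
        split; exacts [hf0 _ hh, le_refl 0]
      have hA0 : 0 ≤ ∑ h ∈ H, (if e ∈ lep d h then f h else 0) := by
        refine Finset.sum_nonneg (fun h hh => ?_)
        split; exacts [hf0 _ hh, le_refl 0]
      calc _ ≤ ∑ g ∈ Fintype.piFinset (fun _ : Fin p => H), ∏ j, c j (g j) := hstep1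
        _ = _ := hstep2
        _ = _ := hstep3
        _ ≤ (∑ h ∈ H, (if e ∈ lep d h then f h else 0)) * 1 := by
            exact mul_le_mul_of_nonneg_left (pow_le_one₀ hX0 hX1) hA0
        _ = _ := mul_one _
    have stepF : ∀ h ∈ H, ∑ e ∈ E, (if e ∈ lep d h then f h else 0) ≤ (d:ℝ) * f h := by
      intro h hh
      rw [Finset.sum_ite_mem, Finset.inter_eq_right.2
        (fun e he => Finset.mem_biUnion.2 ⟨h, hh, he⟩), Finset.sum_const, nsmul_eq_mul]
      exact mul_le_mul_of_nonneg_right (by exact_mod_cast lep_card (hH h hh)) (hf0 h hh)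
    calc t ^ p = ∑ g ∈ Fintype.piFinset (fun _ : Fin p => H), ∏ j, f (g j) := stepA
      _ ≤ ∑ g ∈ Fintype.piFinset (fun _ : Fin p => H), ∑ ie ∈ Finset.univ ×ˢ E,
          (if (ie.2 ∈ lep d (g ie.1) ∧ ∀ j, ie.2 ∈ g j) then ∏ j, f (g j) else 0) :=
        Finset.sum_le_sum stepB
      _ = ∑ ie ∈ Finset.univ ×ˢ E, ∑ g ∈ Fintype.piFinset (fun _ : Fin p => H),
          (if (ie.2 ∈ lep d (g ie.1) ∧ ∀ j, ie.2 ∈ g j) then ∏ j, f (g j) else 0) :=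
        Finset.sum_comm
      _ ≤ ∑ ie ∈ Finset.univ ×ˢ E, ∑ h ∈ H, (if ie.2 ∈ lep d h then f h else 0) := by
        refine Finset.sum_le_sum (fun ie hie => ?_)
        rw [Finset.mem_product] at hie
        exact stepD ie.1 ie.2 hie.2
      _ = ∑ _i : Fin p, ∑ e ∈ E, ∑ h ∈ H, (if e ∈ lep d h then f h else 0) :=
        Finset.sum_product _ _ _
      _ = (p : ℝ) * ∑ e ∈ E, ∑ h ∈ H, (if e ∈ lep d h then f h else 0) := by
        rw [Finset.sum_const, Finset.card_univ, Fintype.card_fin, nsmul_eq_mul]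
      _ = (p : ℝ) * ∑ h ∈ H, ∑ e ∈ E, (if e ∈ lep d h then f h else 0) := by
        rw [Finset.sum_comm]
      _ ≤ (p : ℝ) * ∑ h ∈ H, (d:ℝ) * f h := by
        refine mul_le_mul_of_nonneg_left (Finset.sum_le_sum stepF) (by positivity)
      _ = (p : ℝ) * d * t := by rw [← Finset.mul_sum]; ring
  -- conclude
  by_cases ht1 : t ≤ 1
  · exact le_trans ht1 hr1
  push_neg at ht1
  have ht0 : 0 < t := lt_trans one_pos ht1
  have hkey2 : t ^ (p - 1) ≤ (p:ℝ) * d := by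
    have hsplit : t ^ p = t ^ (p - 1) * t := by
      conv_lhs => rw [show p = (p-1) + 1 by omega]
      rw [pow_succ]
    rw [hsplit] at key
    exact le_of_mul_le_mul_right key ht0
  have hcast : ((p - 1 : ℕ) : ℝ) = (p : ℝ) - 1 := by
    have : (1:ℕ) ≤ p := by omega
    push_cast [this]; ring
  have hne : ((p:ℝ) - 1) ≠ 0 := by
    have : (2:ℝ) ≤ (p:ℝ) := by exact_mod_cast hp
    linarith
  have : (t ^ ((p - 1:ℕ):ℝ)) ^ (1 / ((p:ℝ) - 1)) ≤ ((p:ℝ) * d) ^ (1 / ((p:ℝ) - 1)) := by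
    refine Real.rpow_le_rpow (by positivity) ?_ hexp
    rwa [Real.rpow_natCast]
  rwa [← Real.rpow_mul (le_of_lt ht0), hcast, mul_one_div, div_self hne,
    Real.rpow_one] at this

end PPaux2

open PPaux PPaux2 Finset in
open Classical in
set_option maxHeartbeats 1000000 in
lemma exists_cover {p d : ℕ} {H : Finset (Set ℝ)} (hH : ∀ s ∈ H, IsDInterval d s)
    (hcard : p ≤ H.card) (hprop : HasPQProperty H p p) (hp : 2 ≤ p) (hd : 1 ≤ d) :
    ∃ w : ℝ → ℝ, (∀ x, 0 ≤ w x) ∧ (∀ x, w x ≠ 0 → x ∈ H.biUnion (lep d)) ∧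
      (∀ h ∈ H, 1 ≤ ∑ e ∈ (H.biUnion (lep d)).filter (fun e => e ∈ h), w e) ∧
      ∑ e ∈ H.biUnion (lep d), w e < ((p : ℝ) * d) ^ (1 / ((p : ℝ) - 1)) + 1 := by
  classical
  set E := H.biUnion (lep d) with hE
  set r := ((p : ℝ) * d) ^ (1 / ((p : ℝ) - 1)) with hrdef
  have hp2 : (2:ℝ) ≤ (p:ℝ) := by exact_mod_cast hp
  have hd1 : (1:ℝ) ≤ (d:ℝ) := by exact_mod_cast hd
  have hr1 : (1:ℝ) < r := by
    rw [hrdef]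
    rw [Real.one_lt_rpow_iff_of_pos (by nlinarith)]
    left
    constructor
    · nlinarith
    · have : (0:ℝ) < (p:ℝ) - 1 := by linarith
      positivity
  have hr0 : (0:ℝ) < r := by linarith
  set β : ℝ := (2*r+1)/(2*r+2) with hβdef
  clear_value β
  have hden : (0:ℝ) < 2*r+2 := by linarith
  have hβ0 : 0 < β := by rw [hβdef]; positivity
  have hβ1 : β < 1 := by
    rw [hβdef, div_lt_one hden]; linarith
  have h1β : 1 - β = 1/(2*r+2) := by
    rw [hβdef]; field_simp; ring
  set q : ℝ := 1 - (1-β)/r with hqdef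
  clear_value q
  have hq1 : q < 1 := by
    rw [hqdef]
    have : 0 < (1-β)/r := by
      apply div_pos _ hr0; linarith
    linarith
  have hq0 : 0 < q := by
    rw [hqdef, h1β]
    have h2 : 1/(2*r+2)/r < 1 := by
      rw [div_lt_one hr0, div_lt_iff₀ hden]; nlinarith
    linarith
  -- the number of sets
  set n := H.card with hn
  have hn2 : 2 ≤ n := le_trans hp hcard
  have hn1 : (1:ℝ) ≤ (n:ℝ) := by exact_mod_cast le_trans (by norm_num) hn2
  have hHne : H.Nonempty := Finset.card_pos.1 (by omega)
  have hEne : ∃ e₀ h₀, h₀ ∈ H ∧ e₀ ∈ E ∧ e₀ ∈ h₀ := by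
    obtain ⟨h₀, hh₀⟩ := hHne
    obtain ⟨e₀, he₀, he₀h⟩ := exists_lep_mem (hH h₀ hh₀)
    exact ⟨e₀, h₀, hh₀, Finset.mem_biUnion.2 ⟨h₀, hh₀, he₀⟩, he₀h⟩
  -- the greedy point choice
  have exists_good : ∀ c : Set ℝ → ℕ, ∃ e ∈ E,
      ∑ h ∈ H, β ^ c h ≤ r * ∑ h ∈ H.filter (fun h => e ∈ h), β ^ c h := by
    intro c
    obtain ⟨e₀, h₀, hh₀, he₀E, he₀h⟩ := hEne
    obtain ⟨estar, heE, hmax⟩ := Finset.exists_max_image E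
      (fun e => ∑ h ∈ H.filter (fun h => e ∈ h), β ^ c h) ⟨e₀, he₀E⟩
    set L := ∑ h ∈ H.filter (fun h => estar ∈ h), β ^ c h with hL
    have hL0 : 0 < L := by
      have h1 : β ^ c h₀ ≤ ∑ h ∈ H.filter (fun h => e₀ ∈ h), β ^ c h := by
        apply Finset.single_le_sum (f := fun h => β ^ c h)
          (fun h _ => by positivity) (Finset.mem_filter.2 ⟨hh₀, he₀h⟩)
      have h2 : (0:ℝ) < β ^ c h₀ := by positivity
      exact lt_of_lt_of_le h2 (le_trans h1 (hmax e₀ he₀E))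
    have hm := matching_bound hH hcard hprop hp hd (fun h => β ^ c h / L)
      (fun h _ => by positivity)
      (fun e he => by
        rw [← Finset.sum_div, div_le_one hL0]
        exact hmax e he)
    rw [← Finset.sum_div, div_le_iff₀ hL0] at hm
    refine ⟨estar, heE, ?_⟩
    rw [hrdef]
    linarith [hm]
  choose pick hpickE hpickGood using exists_good
  -- the counting process
  set counts : ℕ → Set ℝ → ℕ := fun k => Nat.rec (fun _ => 0)
    (fun _ c h => c h + if pick c ∈ h then 1 else 0) k with hcounts
  have hc0 : ∀ h, counts 0 h = 0 := fun _ => rfl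
  have hcs : ∀ k h, counts (k+1) h = counts k h + (if pick (counts k) ∈ h then 1 else 0) :=
    fun _ _ => rfl
  clear_value counts
  set Sf : ℕ → ℝ := fun k => ∑ h ∈ H, β ^ counts k h with hSf
  clear_value Sf
  have hS0 : Sf 0 = n := by
    simp only [hSf, hc0, pow_zero, Finset.sum_const, nsmul_eq_mul, mul_one, hn]
  have hSstep : ∀ k, Sf (k+1) ≤ q * Sf k := by
    intro k
    set e := pick (counts k) with he
    set load := ∑ h ∈ H.filter (fun h => e ∈ h), β ^ counts k h with hload
    have hsplit : Sf k = load + ∑ h ∈ H.filter (fun h => ¬ e ∈ h), β ^ counts k h := by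
      rw [hSf, hload]
      exact (Finset.sum_filter_add_sum_filter_not H _ _).symm
    have hnew : Sf (k+1) = β * load + ∑ h ∈ H.filter (fun h => ¬ e ∈ h), β ^ counts k h := by
      simp only [hSf]
      rw [← Finset.sum_filter_add_sum_filter_not H (fun h => e ∈ h)]
      congr 1
      · rw [hload, Finset.mul_sum]
        refine Finset.sum_congr rfl (fun h hh => ?_)
        rw [hcs k h, ← he, if_pos (Finset.mem_filter.1 hh).2, pow_succ]
        ring
      · refine Finset.sum_congr rfl (fun h hh => ?_)
        rw [hcs k h, ← he, if_neg (Finset.mem_filter.1 hh).2, add_zero]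
    have hgood : Sf k ≤ r * load := by
      simp only [hSf, hload]
      exact hpickGood (counts k)
    have h3 : (1-β)/r * Sf k ≤ (1-β) * load := by
      have h4 : (1-β)/r * Sf k ≤ (1-β)/r * (r * load) := by
        apply mul_le_mul_of_nonneg_left hgood
        apply div_nonneg (by linarith) (le_of_lt hr0)
      calc (1-β)/r * Sf k ≤ (1-β)/r * (r * load) := h4
        _ = (1-β) * load := by field_simp
    have hq' : q * Sf k = Sf k - (1-β)/r * Sf k := by rw [hqdef]; ring
    rw [hnew, hq']
    linarith [h3, hsplit]
  have hSK : ∀ k, Sf k ≤ (n:ℝ) * q ^ k := by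
    intro k
    induction k with
    | zero => rw [hS0, pow_zero, mul_one]
    | succ k ih =>
      calc Sf (k+1) ≤ q * Sf k := hSstep k
        _ ≤ q * ((n:ℝ) * q ^ k) := mul_le_mul_of_nonneg_left ih (le_of_lt hq0)
        _ = (n:ℝ) * q ^ (k+1) := by ring
  -- choice of K
  set K : ℕ := ⌈(2*r+1) * (2*r*(r+1)) * Real.log n⌉₊ + 1 with hK
  clear_value K
  have hlogn0 : 0 ≤ Real.log n := Real.log_nonneg hn1
  have hKbig : (2*r+1) * (2*r*(r+1)) * Real.log n < (K:ℝ) := by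
    have h1 := Nat.le_ceil ((2*r+1) * (2*r*(r+1)) * Real.log n)
    have h2 : ((⌈(2*r+1) * (2*r*(r+1)) * Real.log n⌉₊ : ℝ)) < (K:ℝ) := by
      rw [hK]; push_cast; linarith
    linarith
  -- gamma
  set γ : ℝ := ((K:ℝ) * (-Real.log q) - Real.log n) / (-Real.log β) with hγdef
  clear_value γ
  have hlogβpos : 0 < -Real.log β := by
    have := Real.log_neg hβ0 hβ1
    linarith
  have hlogq : (1-β)/r ≤ -Real.log q := by
    have := Real.log_le_sub_one_of_pos hq0
    have h2 : 1 - q = (1-β)/r := by rw [hqdef]; ring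
    linarith
  have hlogβ : -Real.log β ≤ (1-β)/β := by
    have h1 := Real.log_le_sub_one_of_pos (inv_pos.2 hβ0)
    rw [Real.log_inv] at h1
    have h2 : β⁻¹ - 1 = (1-β)/β := by field_simp
    linarith
  set γ₁ : ℝ := (K:ℝ)*β/r - β*Real.log n/(1-β) with hγ₁def
  clear_value γ₁
  have h1βpos : 0 < 1 - β := by linarith
  have hβratio : β/(1-β) = 2*r+1 := by
    rw [h1β, hβdef]
    field_simp
  have hnum0 : 0 ≤ (K:ℝ) * ((1-β)/r) - Real.log n := by
    have hpos : (0:ℝ) < (2*r+2)*r := by nlinarith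
    have hAB : (2*r+2)*r ≤ (2*r+1)*(2*r*(r+1)) := by nlinarith
    have hc2 : Real.log n * ((2*r+2)*r) ≤ (K:ℝ) := by
      have h7 := mul_le_mul_of_nonneg_left hAB hlogn0
      nlinarith [hKbig]
    have h5 : Real.log n ≤ (K:ℝ)/((2*r+2)*r) := (le_div_iff₀ hpos).2 hc2
    have h6 : (K:ℝ)*((1-β)/r) = (K:ℝ)/((2*r+2)*r) := by
      rw [h1β]; field_simp
    rw [h6]
    linarith
  have hγ₁γ : γ₁ ≤ γ := by
    have hnum2 : (K:ℝ) * ((1-β)/r) - Real.log n ≤ (K:ℝ) * (-Real.log q) - Real.log n := by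
      have : (K:ℝ) * ((1-β)/r) ≤ (K:ℝ) * (-Real.log q) :=
        mul_le_mul_of_nonneg_left hlogq (Nat.cast_nonneg K)
      linarith
    have hstep1 : ((K:ℝ) * ((1-β)/r) - Real.log n) / (-Real.log β) ≤ γ := by
      rw [hγdef]
      exact div_le_div_of_nonneg_right hnum2 hlogβpos.le
    have hstep2 : ((K:ℝ) * ((1-β)/r) - Real.log n) / ((1-β)/β)
        ≤ ((K:ℝ) * ((1-β)/r) - Real.log n) / (-Real.log β) :=
      div_le_div_of_nonneg_left hnum0 hlogβpos hlogβ
    have hstep3 : γ₁ = ((K:ℝ) * ((1-β)/r) - Real.log n) / ((1-β)/β) := by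
      rw [hγ₁def]
      rw [eq_div_iff (ne_of_gt (div_pos h1βpos hβ0))]
      field_simp
    linarith
  have hK1 : (1:ℝ) ≤ (K:ℝ) := by
    have : 1 ≤ K := by omega
    exact_mod_cast this
  have hγ₁K : (K:ℝ)/(r+1) < γ₁ := by
    have e1 : β*Real.log n/(1-β) = (2*r+1)*Real.log n := by
      have h' : β*Real.log n/(1-β) = β/(1-β)*Real.log n := by ring
      rw [h', hβratio]
    have e2 : β/r - 1/(r+1) = 1/(2*r*(r+1)) := by
      rw [hβdef]
      field_simp
      ring
    have hkey : γ₁ - (K:ℝ)/(r+1) = (K:ℝ)*(1/(2*r*(r+1))) - (2*r+1)*Real.log n := by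
      rw [hγ₁def, e1, ← e2]
      ring
    have hpos : 0 < (K:ℝ)*(1/(2*r*(r+1))) - (2*r+1)*Real.log n := by
      rw [sub_pos]
      have h2 : 0 < 2*r*(r+1) := by nlinarith
      rw [mul_one_div, lt_div_iff₀ h2]
      calc (2*r+1)*Real.log n * (2*r*(r+1)) = (2*r+1) * (2*r*(r+1)) * Real.log n := by ring
        _ < (K:ℝ) := hKbig
    linarith
  have hγpos : 0 < γ := by
    have h1 : 0 < (K:ℝ)/(r+1) := by positivity
    linarith
  -- count lower bound
  have hcount : ∀ h ∈ H, γ ≤ (counts K h : ℝ) := by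
    intro h hh
    have h1 : β ^ counts K h ≤ (n:ℝ) * q ^ K := by
      refine le_trans ?_ (hSK K)
      simp only [hSf]
      exact Finset.single_le_sum (f := fun h => β ^ counts K h)
        (fun h _ => by positivity) hh
    have h2 : Real.log (β ^ counts K h) ≤ Real.log ((n:ℝ) * q ^ K) :=
      Real.log_le_log (by positivity) h1
    rw [Real.log_pow, Real.log_mul (by positivity) (by positivity), Real.log_pow] at h2
    rw [hγdef, div_le_iff₀ hlogβpos]
    linarith [h2]
  -- the cover
  set w : ℝ → ℝ := fun x => (∑ k ∈ Finset.range K, if pick (counts k) = x then (1:ℝ) else 0) / γ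
    with hw
  have hgen : ∀ h : Set ℝ, ∀ m : ℕ,
      (∑ k ∈ Finset.range m, if pick (counts k) ∈ h then (1:ℝ) else 0) = (counts m h : ℝ) := by
    intro h m
    induction m with
    | zero => simp [hc0]
    | succ m ih =>
      rw [Finset.sum_range_succ, ih, hcs m h]
      push_cast
      ring
  refine ⟨w, ?_, ?_, ?_, ?_⟩
  · intro x
    simp only [hw]
    apply div_nonneg _ (le_of_lt hγpos)
    apply Finset.sum_nonneg
    intro k _
    split <;> norm_num
  · intro x hx
    by_contra hxE
    apply hx
    simp only [hw]
    have hz : ∀ k ∈ Finset.range K, (if pick (counts k) = x then (1:ℝ) else 0) = 0 := by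
      intro k _
      rw [if_neg]
      intro hcontra
      exact hxE (hcontra ▸ hpickE (counts k))
    rw [Finset.sum_congr rfl hz, Finset.sum_const, smul_zero, zero_div]
  · intro h hh
    have hswap : ∑ e ∈ E.filter (fun e => e ∈ h), w e
        = (∑ k ∈ Finset.range K, if pick (counts k) ∈ h then (1:ℝ) else 0) / γ := by
      simp only [hw]
      rw [← Finset.sum_div]
      congr 1
      rw [Finset.sum_comm]
      refine Finset.sum_congr rfl (fun k _ => ?_)
      rw [Finset.sum_ite_eq (E.filter (fun e => e ∈ h)) (pick (counts k)) (fun _ => (1:ℝ))]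
      by_cases hph : pick (counts k) ∈ h
      · rw [if_pos (Finset.mem_filter.2 ⟨hpickE _, hph⟩), if_pos hph]
      · rw [if_neg (fun hmem => hph (Finset.mem_filter.1 hmem).2), if_neg hph]
    rw [hswap, hgen h K, le_div_iff₀ hγpos, one_mul]
    exact hcount h hh
  · have htot : ∑ e ∈ E, w e = (K:ℝ)/γ := by
      simp only [hw]
      rw [← Finset.sum_div]
      congr 1
      rw [Finset.sum_comm]
      have : ∀ k ∈ Finset.range K,
          (∑ e ∈ E, if pick (counts k) = e then (1:ℝ) else 0) = 1 := by
        intro k _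
        rw [Finset.sum_ite_eq E (pick (counts k)) (fun _ => (1:ℝ)), if_pos (hpickE _)]
      rw [Finset.sum_congr rfl this, Finset.sum_const, Finset.card_range, nsmul_eq_mul, mul_one]
    rw [htot, div_lt_iff₀ hγpos]
    have hr1' : 0 < r + 1 := by linarith
    have : (K:ℝ) < (r+1) * γ₁ := by
      rw [← div_lt_iff₀' hr1']
      exact hγ₁K
    nlinarith


/-- The fractional covering number `τ*(H)`: the infimum of total weights of
finitely supported fractional covers of `H`. -/
noncomputable def fracCoverNum (H : Finset (Set ℝ)) : ℝ :=
  sInf { t : ℝ | ∃ w : ℝ →₀ ℝ, (∀ x, 0 ≤ w x) ∧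
    (∀ h ∈ H, 1 ≤ ∑ x ∈ w.support, Set.indicator h (fun y => w y) x) ∧
    t = ∑ x ∈ w.support, w x }

theorem fracCover_of_pp_property (p d : ℕ) (hp : 2 ≤ p) (hd : 1 ≤ d)
    (H : Finset (Set ℝ)) (hH : ∀ s ∈ H, IsDInterval d s) (hcard : p ≤ H.card)
    (hprop : HasPQProperty H p p) :
    fracCoverNum H < ((p : ℝ) * d) ^ (1 / ((p : ℝ) - 1)) + 1 := by
  classical
  obtain ⟨w, hw0, hwsupp, hwcov, hwtot⟩ := exists_cover hH hcard hprop hp hd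
  set E := H.biUnion (PPaux.lep d) with hE
  set w₀ : ℝ →₀ ℝ := Finsupp.onFinset E w hwsupp with hw₀
  have happ : ∀ x, w₀ x = w x := fun x => rfl
  have hsupp : w₀.support ⊆ E := Finsupp.support_onFinset_subset
  have hsum : ∀ (f : ℝ → ℝ), (∀ x, w₀ x = 0 → f x = 0) →
      ∑ x ∈ w₀.support, f x = ∑ x ∈ E, f x := by
    intro f hf
    apply Finset.sum_subset hsupp
    intro x _ hxs
    exact hf x (Finsupp.notMem_support_iff.1 hxs)
  have hmem : (∑ x ∈ E, w x) ∈ { t : ℝ | ∃ w : ℝ →₀ ℝ, (∀ x, 0 ≤ w x) ∧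
      (∀ h ∈ H, 1 ≤ ∑ x ∈ w.support, Set.indicator h (fun y => w y) x) ∧
      t = ∑ x ∈ w.support, w x } := by
    refine ⟨w₀, fun x => hw0 x, ?_, ?_⟩
    · intro h hh
      have h1 : ∑ x ∈ w₀.support, Set.indicator h (fun y => w₀ y) x
          = ∑ x ∈ E, Set.indicator h (fun y => w₀ y) x := by
        apply hsum
        intro x hx
        rw [Set.indicator_apply]
        split
        · exact hx
        · rfl
      rw [h1]
      have h2 : ∑ x ∈ E, Set.indicator h (fun y => w₀ y) x
          = ∑ x ∈ E.filter (fun e => e ∈ h), w x := by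
        rw [Finset.sum_filter]
        refine Finset.sum_congr rfl (fun x _ => ?_)
        rw [Set.indicator_apply]
        exact if_congr Iff.rfl (happ x) rfl
      rw [h2]
      exact hwcov h hh
    · exact (hsum (fun x => w₀ x) (fun _ hx => hx)).symm
  have hbdd : BddBelow { t : ℝ | ∃ w : ℝ →₀ ℝ, (∀ x, 0 ≤ w x) ∧
      (∀ h ∈ H, 1 ≤ ∑ x ∈ w.support, Set.indicator h (fun y => w y) x) ∧
      t = ∑ x ∈ w.support, w x } := by
    refine ⟨0, fun t ht => ?_⟩
    obtain ⟨w', h0, -, rfl⟩ := ht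
    exact Finset.sum_nonneg (fun x _ => h0 x)
  calc fracCoverNum H ≤ ∑ x ∈ E, w x := csInf_le hbdd hmem
    _ < _ := hwtot
end

section
/- Let p ≥ 2 and d ≥ 1 be integers and let H be a finite family of d-intervals with |H| ≥ p. If H satisfies the (p,p) property, then the covering number satisfies τ(H) < p^{1/(p-1)} · d^{p/(p-1)} + d. -/
/-- The covering number `τ(H)`: the minimum cardinality of a finite set of
points meeting every member of `H`. -/
noncomputable def coverNum (H : Finset (Set ℝ)) : ℕ :=
  sInf { n : ℕ | ∃ C : Finset ℝ, C.card = n ∧ ∀ h ∈ H, ∃ x ∈ C, x ∈ h }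

open Finset
open scoped Classical


lemma lp_duality {U S : Type*} [Fintype U] [Fintype S] [Nonempty U] [DecidableEq U] [DecidableEq S]
    (A : U → S → ℝ) (c : ℝ) (hc : 0 ≤ c)
    (hmatch : ∀ y : S → ℝ, (∀ s, 0 ≤ y s) → (∀ u, ∑ s, y s * A u s ≤ 1) →
      ∑ s, y s ≤ c) :
    ∃ w : U → ℝ, (∀ u, 0 ≤ w u) ∧ (∀ s, 1 ≤ ∑ u, w u * A u s) ∧ ∑ u, w u ≤ c := by
  by_contra hno
  classical
  set Tmap : (U → ℝ) →ₗ[ℝ] (S → ℝ) :=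
    { toFun := fun w s => ∑ u, w u * A u s
      map_add' := by
        intro w1 w2; funext s; simp [add_mul, Finset.sum_add_distrib]
      map_smul' := by
        intro r w; funext s; simp [Finset.mul_sum, mul_assoc] } with hTmap
  set Wset : Set (U → ℝ) := {w | (∀ u, 0 ≤ w u) ∧ ∑ u, w u ≤ c} with hWset
  have hWconv : Convex ℝ Wset := by
    rintro w1 ⟨h1a, h1b⟩ w2 ⟨h2a, h2b⟩ a b ha hb hab
    constructor
    · intro u
      have : 0 ≤ a * w1 u + b * w2 u := by
        have := h1a u; have := h2a u; nlinarith
      simpa using this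
    · have : ∑ u, (a * w1 u + b * w2 u) ≤ c := by
        rw [Finset.sum_add_distrib, ← Finset.mul_sum, ← Finset.mul_sum]
        nlinarith
      simpa using this
  have hWclosed : IsClosed Wset := by
    have h1 : IsClosed {w : U → ℝ | ∀ u, 0 ≤ w u} := by
      have : {w : U → ℝ | ∀ u, 0 ≤ w u} = ⋂ u, (fun w : U → ℝ => w u) ⁻¹' Set.Ici 0 := by
        ext w; simp [Set.mem_iInter]
      rw [this]
      exact isClosed_iInter fun u => (isClosed_Ici).preimage (continuous_apply u)
    have h2 : IsClosed {w : U → ℝ | ∑ u, w u ≤ c} := by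
      have : Continuous fun w : U → ℝ => ∑ u, w u :=
        continuous_finset_sum _ fun u _ => continuous_apply u
      exact (isClosed_Iic).preimage this
    exact h1.inter h2
  have hWcpt : IsCompact Wset := by
    refine IsCompact.of_isClosed_subset (isCompact_univ_pi fun _ => isCompact_Icc
      (a := (0:ℝ)) (b := c)) hWclosed ?_
    rintro w ⟨hwa, hwb⟩
    intro u _
    refine ⟨hwa u, le_trans ?_ hwb⟩
    exact Finset.single_le_sum (fun v _ => hwa v) (Finset.mem_univ u)
  set K : Set (S → ℝ) := Tmap '' Wset with hK
  set Q : Set (S → ℝ) := {z | ∀ s, 1 ≤ z s} with hQ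
  have hQconv : Convex ℝ Q := by
    rintro z1 h1 z2 h2 a b ha hb hab
    intro s
    have h1s := h1 s; have h2s := h2 s
    have : a * 1 + b * 1 ≤ a * z1 s + b * z2 s := by nlinarith
    simpa [hab] using this.trans_eq' (by linarith)
  have hQclosed : IsClosed Q := by
    have : Q = ⋂ s, (fun z : S → ℝ => z s) ⁻¹' Set.Ici 1 := by
      ext z; simp [Set.mem_iInter, hQ]
    rw [this]
    exact isClosed_iInter fun s => (isClosed_Ici).preimage (continuous_apply s)
  have hdisj : Disjoint K Q := by
    rw [Set.disjoint_left]
    rintro z ⟨w, hw, rfl⟩ hzQ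
    exact hno ⟨w, hw.1, fun s => hzQ s, hw.2⟩
  obtain ⟨f, u, v, hfK, huv, hfQ⟩ :=
    geometric_hahn_banach_compact_closed (hWconv.linear_image Tmap)
      (hWcpt.image Tmap.continuous_of_finiteDimensional)
      hQconv hQclosed hdisj
  set y : S → ℝ := fun s => f (Pi.single s 1) with hy
  have hrep : ∀ z : S → ℝ, f z = ∑ s, z s * y s := by
    intro z
    have hz : ∑ s, (z s) • (Pi.single s (1:ℝ) : S → ℝ) = z := by
      funext t
      simp [Pi.single_apply, Finset.sum_apply, Finset.sum_ite_eq]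
    calc f z = f (∑ s, (z s) • (Pi.single s (1:ℝ) : S → ℝ)) := by rw [hz]
      _ = ∑ s, (z s) • f (Pi.single s (1:ℝ)) := by rw [map_sum]; simp
      _ = ∑ s, z s * y s := by simp [hy, smul_eq_mul]
  have hsy : f (fun _ => (1:ℝ)) = ∑ s, y s := by
    rw [hrep (fun _ => (1:ℝ))]; simp
  have hz₀Q : (fun _ => (1:ℝ)) ∈ Q := fun s => le_refl 1
  have hvlt : v < ∑ s, y s := by rw [← hsy]; exact hfQ _ hz₀Q
  have hynn : ∀ s, 0 ≤ y s := by
    intro s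
    by_contra hneg
    push_neg at hneg
    have h1 : 0 < -(y s) := by linarith
    have h2 : 0 < (∑ s', y s') - v + 1 := by linarith
    have htpos : 0 ≤ ((∑ s', y s') - v + 1) / (-(y s)) := (div_pos h2 h1).le
    set D : ℝ := ((∑ s', y s') - v + 1) / (-(y s)) with hD
    have hmem : (fun t => if t = s then 1 + D else (1:ℝ)) ∈ Q := by
      intro t
      show (1:ℝ) ≤ if t = s then 1 + D else 1
      by_cases htt : t = s
      · rw [if_pos htt]; linarith
      · rw [if_neg htt]
    have hgt := hfQ _ hmem
    rw [hrep] at hgt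
    have hexp : ∑ t, (if t = s then 1 + D else (1:ℝ)) * y t
        = (∑ t, y t) + D * y s := by
      have hterm : ∀ t, (if t = s then 1 + D else (1:ℝ)) * y t
          = y t + (if t = s then D * y s else 0) := by
        intro t
        by_cases h : t = s
        · rw [if_pos h, if_pos h, h]; ring
        · rw [if_neg h, if_neg h]; ring
      rw [Finset.sum_congr rfl (fun t _ => hterm t), Finset.sum_add_distrib,
        Finset.sum_ite_eq' Finset.univ s (fun _ => D * y s)]
      simp
    rw [hexp] at hgt
    have hcancel : D * y s = -((∑ s', y s') - v + 1) := by
      rw [hD]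
      rw [div_mul_eq_mul_div, mul_div_assoc, div_neg, div_self (ne_of_lt hneg)]
      ring
    rw [hcancel] at hgt
    linarith
  have hKlt : ∀ w ∈ Wset, ∑ s, (∑ u', w u' * A u' s) * y s < ∑ s, y s := by
    intro w hw
    have h1 := hfK (Tmap w) (Set.mem_image_of_mem _ hw)
    have h2 : f (Tmap w) = ∑ s, (∑ u', w u' * A u' s) * y s := hrep _
    linarith
  set g : U → ℝ := fun u' => ∑ s, y s * A u' s with hg
  obtain ⟨u₀, -, hmax⟩ := Finset.exists_max_image Finset.univ g univ_nonempty
  have hmax' : ∀ u', g u' ≤ g u₀ := fun u' => hmax u' (mem_univ u')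
  have hsypos : 0 < ∑ s, y s := by
    have h0W : (0 : U → ℝ) ∈ Wset := by
      constructor
      · intro u'; exact le_refl 0
      · simpa using hc
    have := hKlt 0 h0W
    simpa using this
  by_cases hgpos : 0 < g u₀
  · -- case 2
    have hw₀ : (fun u' => if u' = u₀ then c else 0) ∈ Wset := by
      constructor
      · intro u'; by_cases h : u' = u₀ <;> simp [h, hc]
      · simp
    have hval := hKlt _ hw₀
    have heq : ∑ s, (∑ u', (if u' = u₀ then c else 0) * A u' s) * y s = c * g u₀ := by
      have : ∀ s, (∑ u', (if u' = u₀ then c else 0) * A u' s) = c * A u₀ s := by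
        intro s
        rw [Finset.sum_eq_single u₀]
        · simp
        · intro b _ hb; simp [hb]
        · intro h; exact absurd (mem_univ u₀) h
      simp only [this, hg, Finset.mul_sum]
      apply Finset.sum_congr rfl
      intro s _; ring
    rw [heq] at hval
    have hy' : ∀ u', ∑ s, (y s / g u₀) * A u' s ≤ 1 := by
      intro u'
      have : ∑ s, (y s / g u₀) * A u' s = g u' / g u₀ := by
        rw [hg, Finset.sum_div]
        apply Finset.sum_congr rfl
        intro s _; ring
      rw [this, div_le_one hgpos]
      exact hmax' u'
    have := hmatch (fun s => y s / g u₀) (fun s => div_nonneg (hynn s) hgpos.le) hy'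
    rw [← Finset.sum_div, div_le_iff₀ hgpos] at this
    linarith
  · -- case 1 : g u₀ ≤ 0
    push_neg at hgpos
    have hMpos : 0 < (c + 1) / (∑ s, y s) := by
      apply div_pos _ hsypos; linarith
    have hy' : ∀ u', ∑ s, (((c + 1) / (∑ s', y s')) * y s) * A u' s ≤ 1 := by
      intro u'
      have heq : ∑ s, (((c + 1) / (∑ s', y s')) * y s) * A u' s
          = ((c + 1) / (∑ s', y s')) * g u' := by
        rw [hg, Finset.mul_sum]
        apply Finset.sum_congr rfl
        intro s _; ring
      rw [heq]
      have h1 : g u' ≤ 0 := le_trans (hmax' u') hgpos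
      nlinarith
    have hle := hmatch (fun s => ((c + 1) / (∑ s', y s')) * y s)
      (fun s => mul_nonneg hMpos.le (hynn s)) hy'
    rw [← Finset.mul_sum] at hle
    rw [div_mul_cancel₀ (c + 1) (ne_of_gt hsypos)] at hle
    linarith


lemma counting_bound (p d : ℕ) (hp : 2 ≤ p)
    (H : Finset (Set ℝ)) (LE : Set ℝ → Finset ℝ)
    (hLEcard : ∀ s ∈ H, (LE s).card ≤ d)
    (hcanon : ∀ g : Fin p → Set ℝ, (∀ i, g i ∈ H) →
      ∃ u : ℝ, ∃ i : Fin p, u ∈ LE (g i) ∧ ∀ j, u ∈ g j)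
    (y : Set ℝ → ℝ) (hy0 : ∀ s, 0 ≤ y s)
    (hdeg : ∀ u ∈ H.biUnion LE, ∑ s ∈ H.filter (fun s => u ∈ s), y s ≤ 1) :
    (∑ s ∈ H, y s) ^ p ≤ (p : ℝ) * d * ∑ s ∈ H, y s := by
  classical
  set t := ∑ s ∈ H, y s with ht
  set UU := H.biUnion LE with hUU
  have hp0 : 0 < p := by omega
  -- step 1
  have h1 : t ^ p = ∑ g ∈ Fintype.piFinset (fun _ : Fin p => H), ∏ i, y (g i) := by
    have h0 : t ^ p = ∏ _i : Fin p, t := by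
      simp [Finset.prod_const]
    rw [h0, ht, Finset.prod_univ_sum]
  -- choice of canonical point
  choose u0 i0 hLE0 hall0 using hcanon
  set key : (Fin p → Set ℝ) → Fin p × ℝ := fun g =>
    if h : ∀ i, g i ∈ H then (i0 g h, u0 g h) else (⟨0, hp0⟩, 0) with hkeydef
  have hmapsto : ∀ g ∈ Fintype.piFinset (fun _ : Fin p => H),
      key g ∈ (Finset.univ : Finset (Fin p)) ×ˢ UU := by
    intro g hg
    have hgH : ∀ i, g i ∈ H := fun i => Fintype.mem_piFinset.mp hg i
    rw [hkeydef]
    simp only [dif_pos hgH]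
    rw [Finset.mem_product]
    refine ⟨Finset.mem_univ _, ?_⟩
    rw [hUU, Finset.mem_biUnion]
    exact ⟨g (i0 g hgH), hgH _, hLE0 g hgH⟩
  have h2 : ∑ g ∈ Fintype.piFinset (fun _ : Fin p => H), ∏ i, y (g i)
      = ∑ x ∈ (Finset.univ : Finset (Fin p)) ×ˢ UU,
          ∑ g ∈ (Fintype.piFinset (fun _ : Fin p => H)).filter (fun g => key g = x),
            ∏ i, y (g i) :=
    (Finset.sum_fiberwise_of_maps_to hmapsto _).symm
  -- step 3 : fiber bound
  have h3 : ∀ x ∈ (Finset.univ : Finset (Fin p)) ×ˢ UU,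
      (∑ g ∈ (Fintype.piFinset (fun _ : Fin p => H)).filter (fun g => key g = x),
        ∏ i, y (g i)) ≤ ∑ s ∈ H.filter (fun s => x.2 ∈ LE s), y s := by
    rintro ⟨i, u⟩ hx
    rw [Finset.mem_product] at hx
    have huUU : u ∈ UU := hx.2
    set A := Fintype.piFinset (fun j : Fin p =>
      if j = i then H.filter (fun s => u ∈ LE s ∧ u ∈ s)
      else H.filter (fun s => u ∈ s)) with hA
    have hsub : (Fintype.piFinset (fun _ : Fin p => H)).filter
        (fun g => key g = (i, u)) ⊆ A := by
      intro g hg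
      rw [Finset.mem_filter] at hg
      obtain ⟨hg1, hg2⟩ := hg
      have hgH : ∀ j, g j ∈ H := fun j => Fintype.mem_piFinset.mp hg1 j
      rw [hkeydef] at hg2
      simp only [dif_pos hgH] at hg2
      have hii : i0 g hgH = i := (Prod.mk.injEq _ _ _ _).mp hg2 |>.1
      have huu : u0 g hgH = u := (Prod.mk.injEq _ _ _ _).mp hg2 |>.2
      have hLE : u ∈ LE (g i) := by
        rw [← hii, ← huu]; exact hLE0 g hgH
      have hall : ∀ j, u ∈ g j := by
        intro j; rw [← huu]; exact hall0 g hgH j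
      rw [hA, Fintype.mem_piFinset]
      intro j
      by_cases hj : j = i
      · rw [if_pos hj, Finset.mem_filter, hj]
        exact ⟨hgH i, hLE, hall i⟩
      · rw [if_neg hj, Finset.mem_filter]
        exact ⟨hgH j, hall j⟩
    have hAsum : ∑ g ∈ A, ∏ j, y (g j)
        = ∏ j, ∑ s ∈ (if j = i then H.filter (fun s => u ∈ LE s ∧ u ∈ s)
            else H.filter (fun s => u ∈ s)), y s := by
      rw [hA, ← Finset.prod_univ_sum]
    have hstep : (∑ g ∈ (Fintype.piFinset (fun _ : Fin p => H)).filter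
        (fun g => key g = (i, u)), ∏ j, y (g j)) ≤ ∑ g ∈ A, ∏ j, y (g j) := by
      apply Finset.sum_le_sum_of_subset_of_nonneg hsub
      intro g _ _
      exact Finset.prod_nonneg fun j _ => hy0 _
    refine hstep.trans ?_
    rw [hAsum]
    have hfi : (fun j : Fin p => ∑ s ∈ (if j = i then H.filter (fun s => u ∈ LE s ∧ u ∈ s)
        else H.filter (fun s => u ∈ s)), y s) i
        = ∑ s ∈ H.filter (fun s => u ∈ LE s ∧ u ∈ s), y s := by simp
    rw [← Finset.mul_prod_erase Finset.univ _ (Finset.mem_univ i)]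
    have hrest : ∏ j ∈ Finset.univ.erase i,
        ∑ s ∈ (if j = i then H.filter (fun s => u ∈ LE s ∧ u ∈ s)
          else H.filter (fun s => u ∈ s)), y s ≤ 1 := by
      apply Finset.prod_le_one
      · intro j _
        exact Finset.sum_nonneg fun s _ => hy0 s
      · intro j hj
        have hj' : j ≠ i := (Finset.mem_erase.mp hj).1
        rw [if_neg hj']
        exact hdeg u huUU
    have hfirst : (∑ s ∈ (if i = i then H.filter (fun s => u ∈ LE s ∧ u ∈ s)
        else H.filter (fun s => u ∈ s)), y s) ≤ ∑ s ∈ H.filter (fun s => u ∈ LE s), y s := by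
      rw [if_pos rfl]
      apply Finset.sum_le_sum_of_subset_of_nonneg
      · intro s hs
        rw [Finset.mem_filter] at hs ⊢
        exact ⟨hs.1, hs.2.1⟩
      · intro s _ _; exact hy0 s
    have hnn : (0:ℝ) ≤ ∑ s ∈ (if i = i then H.filter (fun s => u ∈ LE s ∧ u ∈ s)
        else H.filter (fun s => u ∈ s)), y s :=
      Finset.sum_nonneg fun s _ => hy0 s
    calc (∑ s ∈ (if i = i then H.filter (fun s => u ∈ LE s ∧ u ∈ s)
          else H.filter (fun s => u ∈ s)), y s) *
          ∏ j ∈ Finset.univ.erase i,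
            ∑ s ∈ (if j = i then H.filter (fun s => u ∈ LE s ∧ u ∈ s)
              else H.filter (fun s => u ∈ s)), y s
        ≤ (∑ s ∈ (if i = i then H.filter (fun s => u ∈ LE s ∧ u ∈ s)
            else H.filter (fun s => u ∈ s)), y s) * 1 := by
          exact mul_le_mul_of_nonneg_left hrest hnn
      _ = _ := by rw [mul_one]
      _ ≤ ∑ s ∈ H.filter (fun s => u ∈ LE s), y s := hfirst
  -- step 4+5
  have h4 : ∑ x ∈ (Finset.univ : Finset (Fin p)) ×ˢ UU,
      ∑ s ∈ H.filter (fun s => x.2 ∈ LE s), y s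
      = (p : ℝ) * ∑ u ∈ UU, ∑ s ∈ H.filter (fun s => u ∈ LE s), y s := by
    rw [Finset.sum_product]
    have hcst : ∀ x : Fin p, (∑ u ∈ UU, ∑ s ∈ H.filter (fun s => ((x, u) : Fin p × ℝ).2 ∈ LE s), y s)
        = ∑ u ∈ UU, ∑ s ∈ H.filter (fun s => u ∈ LE s), y s := fun _ => rfl
    rw [Finset.sum_congr rfl (fun x _ => hcst x), Finset.sum_const, Finset.card_univ,
      Fintype.card_fin, nsmul_eq_mul]
  have h5 : ∑ u ∈ UU, ∑ s ∈ H.filter (fun s => u ∈ LE s), y s ≤ (d : ℝ) * t := by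
    have hswap : ∑ u ∈ UU, ∑ s ∈ H.filter (fun s => u ∈ LE s), y s
        = ∑ s ∈ H, ((UU.filter (fun u => u ∈ LE s)).card : ℝ) * y s := by
      rw [Finset.sum_comm' (s := UU) (t := fun u => H.filter (fun s => u ∈ LE s))
        (t' := H) (s' := fun s => UU.filter (fun u => u ∈ LE s))]
      · apply Finset.sum_congr rfl
        intro s _
        rw [Finset.sum_const, nsmul_eq_mul]
      · intro u s
        simp only [Finset.mem_filter]
        tauto
    rw [hswap, ht, Finset.mul_sum]
    apply Finset.sum_le_sum
    intro s hs
    have hcard : (UU.filter (fun u => u ∈ LE s)).card ≤ d := by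
      refine le_trans (Finset.card_le_card ?_) (hLEcard s hs)
      intro u hu
      exact (Finset.mem_filter.mp hu).2
    have := hy0 s
    have hc' : ((UU.filter (fun u => u ∈ LE s)).card : ℝ) ≤ (d : ℝ) := by
      exact_mod_cast hcard
    nlinarith
  calc t ^ p = _ := h1
    _ = _ := h2
    _ ≤ ∑ x ∈ (Finset.univ : Finset (Fin p)) ×ˢ UU,
          ∑ s ∈ H.filter (fun s => x.2 ∈ LE s), y s := Finset.sum_le_sum h3
    _ = (p : ℝ) * ∑ u ∈ UU, ∑ s ∈ H.filter (fun s => u ∈ LE s), y s := h4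
    _ ≤ (p : ℝ) * ((d:ℝ) * t) := by
        apply mul_le_mul_of_nonneg_left h5 (by positivity)
    _ = (p : ℝ) * d * t := by ring


lemma sweep_cover (d : ℕ) (hd : 0 < d) (UU : Finset ℝ) (w : ℝ → ℝ) (hw : ∀ u, 0 ≤ w u)
    (a b : Set ℝ → ℝ) :
    ∀ F : Finset (Set ℝ),
      (∀ s ∈ F, a s ≤ b s ∧ Set.Icc (a s) (b s) ⊆ s ∧
        (1:ℝ)/d ≤ ∑ u ∈ UU.filter (fun u => u ∈ Set.Icc (a s) (b s)), w u) →
      ∃ C : Finset ℝ, (∀ s ∈ F, ∃ x ∈ C, x ∈ s) ∧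
        (C.card : ℝ) ≤ d * ∑ u ∈ UU.filter (fun u => ∃ s ∈ F, u ∈ Set.Icc (a s) (b s)), w u := by
  intro F
  induction F using Finset.strongInductionOn with
  | _ F ih =>
  intro hF
  rcases F.eq_empty_or_nonempty with rfl | hne
  · refine ⟨∅, by simp, ?_⟩
    simp only [Finset.card_empty, Nat.cast_zero]
    have : (0:ℝ) ≤ ∑ u ∈ UU.filter (fun u => ∃ s ∈ (∅ : Finset (Set ℝ)),
        u ∈ Set.Icc (a s) (b s)), w u := Finset.sum_nonneg fun u _ => hw u
    positivity
  obtain ⟨s₀, hs₀F, hmin⟩ := F.exists_min_image b hne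
  set F' := F.filter (fun s => ¬ a s ≤ b s₀) with hF'
  have hs₀notF' : s₀ ∉ F' := by
    rw [hF', Finset.mem_filter]
    push_neg
    intro _
    exact (hF s₀ hs₀F).1
  have hFss : F' ⊂ F := by
    refine Finset.ssubset_iff_of_subset (Finset.filter_subset _ _) |>.mpr ⟨s₀, hs₀F, hs₀notF'⟩
  obtain ⟨C', hC'cov, hC'card⟩ := ih F' hFss
    (fun s hs => hF s (Finset.filter_subset _ _ hs))
  refine ⟨insert (b s₀) C', ?_, ?_⟩
  · intro s hsF
    by_cases ha : a s ≤ b s₀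
    · refine ⟨b s₀, Finset.mem_insert_self _ _, ?_⟩
      exact (hF s hsF).2.1 ⟨ha, hmin s hsF⟩
    · obtain ⟨x, hxC, hxs⟩ := hC'cov s (by rw [hF', Finset.mem_filter]; exact ⟨hsF, ha⟩)
      exact ⟨x, Finset.mem_insert_of_mem hxC, hxs⟩
  · set T₀ := UU.filter (fun u => u ∈ Set.Icc (a s₀) (b s₀)) with hT₀
    set T' := UU.filter (fun u => ∃ s ∈ F', u ∈ Set.Icc (a s) (b s)) with hT'
    set T := UU.filter (fun u => ∃ s ∈ F, u ∈ Set.Icc (a s) (b s)) with hT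
    have hdisj : Disjoint T₀ T' := by
      rw [Finset.disjoint_left]
      intro u hu hu'
      rw [hT₀, Finset.mem_filter] at hu
      rw [hT', Finset.mem_filter] at hu'
      have hu2 := hu.2
      obtain ⟨s, hsF', hus⟩ := hu'.2
      have h1 : ¬ a s ≤ b s₀ := (Finset.mem_filter.mp hsF').2
      have h2 : a s ≤ u := hus.1
      have h3 : u ≤ b s₀ := hu2.2
      exact h1 (le_trans h2 h3)
    have hsub : T₀ ∪ T' ⊆ T := by
      intro u hu
      rcases Finset.mem_union.mp hu with h | h
      · rw [hT₀, Finset.mem_filter] at h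
        rw [hT, Finset.mem_filter]
        exact ⟨h.1, s₀, hs₀F, h.2⟩
      · rw [hT', Finset.mem_filter] at h
        rw [hT, Finset.mem_filter]
        obtain ⟨s, hs, hus⟩ := h.2
        exact ⟨h.1, s, Finset.filter_subset _ _ hs, hus⟩
    have hkey : ∑ u ∈ T₀, w u + ∑ u ∈ T', w u ≤ ∑ u ∈ T, w u := by
      rw [← Finset.sum_union hdisj]
      exact Finset.sum_le_sum_of_subset_of_nonneg hsub (fun u _ _ => hw u)
    have h10 : (1:ℝ)/d ≤ ∑ u ∈ T₀, w u := (hF s₀ hs₀F).2.2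
    have hcard : ((insert (b s₀) C').card : ℝ) ≤ (C'.card : ℝ) + 1 := by
      have := Finset.card_insert_le (b s₀) C'
      exact_mod_cast this
    have hdpos : (0:ℝ) < d := by exact_mod_cast hd
    calc ((insert (b s₀) C').card : ℝ) ≤ (C'.card : ℝ) + 1 := hcard
      _ ≤ d * ∑ u ∈ T', w u + d * (1/d) := by
          rw [mul_one_div, div_self (ne_of_gt hdpos)]
          exact add_le_add hC'card (le_refl 1)
      _ ≤ d * ∑ u ∈ T', w u + d * ∑ u ∈ T₀, w u := by
          exact add_le_add (le_refl _) (mul_le_mul_of_nonneg_left h10 hdpos.le)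
      _ = d * (∑ u ∈ T₀, w u + ∑ u ∈ T', w u) := by ring
      _ ≤ d * ∑ u ∈ T, w u := mul_le_mul_of_nonneg_left hkey hdpos.le


private lemma sum_le_sum_biUnion_aux {ι : Type*} [DecidableEq ι] (f : ℝ → ℝ)
    (hf : ∀ u, 0 ≤ f u) :
    ∀ (Q : Finset ι) (g : ι → Finset ℝ) (A : Finset ℝ), A ⊆ Q.biUnion g →
      ∑ u ∈ A, f u ≤ ∑ I ∈ Q, ∑ u ∈ g I, f u := by
  classical
  intro Q
  induction Q using Finset.induction_on with
  | empty =>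
    intro g A hA
    simp only [Finset.biUnion_empty, Finset.subset_empty] at hA
    simp [hA]
  | insert I Q hIQ ih =>
    intro g A hA
    rw [Finset.sum_insert hIQ]
    have h1 : ∑ u ∈ A, f u ≤ ∑ u ∈ (insert I Q).biUnion g, f u :=
      Finset.sum_le_sum_of_subset_of_nonneg hA (fun u _ _ => hf u)
    have h2 : (insert I Q).biUnion g = g I ∪ Q.biUnion g := Finset.biUnion_insert
    rw [h2] at h1
    have h3 : ∑ u ∈ g I ∪ Q.biUnion g, f u ≤ ∑ u ∈ g I, f u + ∑ u ∈ Q.biUnion g, f u := by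
      have h4 := Finset.sum_union_inter (s₁ := g I) (s₂ := Q.biUnion g) (f := f)
      have h5 : 0 ≤ ∑ u ∈ g I ∩ Q.biUnion g, f u := Finset.sum_nonneg fun u _ => hf u
      linarith
    have h6 : ∑ u ∈ Q.biUnion g, f u ≤ ∑ I ∈ Q, ∑ u ∈ g I, f u :=
      ih g (Q.biUnion g) (le_refl _)
    linarith

theorem cover_of_pp_property (p d : ℕ) (hp : 2 ≤ p) (hd : 1 ≤ d)
    (H : Finset (Set ℝ)) (hH : ∀ s ∈ H, IsDInterval d s) (hcard : p ≤ H.card)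
    (hprop : HasPQProperty H p p) :
    (coverNum H : ℝ) <
      (p : ℝ) ^ (1 / ((p : ℝ) - 1)) * (d : ℝ) ^ ((p : ℝ) / ((p : ℝ) - 1)) + d := by
  classical
  have hp0 : 0 < p := by omega
  have hd0 : 0 < d := by omega
  have hpR : (2:ℝ) ≤ (p:ℝ) := by exact_mod_cast hp
  have hdR : (1:ℝ) ≤ (d:ℝ) := by exact_mod_cast hd
  have hpm1 : (0:ℝ) < (p:ℝ) - 1 := by linarith
  -- choose interval representations
  have hrep : ∀ s : Set ℝ, ∃ P : Finset (ℝ × ℝ), s ∈ H →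
      (P.card ≤ d ∧ s = ⋃ I ∈ P, Set.Icc I.1 I.2) := by
    intro s
    by_cases hs : s ∈ H
    · obtain ⟨-, P, h1, h2⟩ := hH s hs
      exact ⟨P, fun _ => ⟨h1, h2⟩⟩
    · exact ⟨∅, fun h => absurd h hs⟩
  choose P hP using hrep
  set LE : Set ℝ → Finset ℝ := fun s => (P s).image Prod.fst with hLE
  set UU : Finset ℝ := H.biUnion LE with hUU
  -- k-wise intersecting
  have hkwise : ∀ T ⊆ H, T.Nonempty → T.card ≤ p → (⋂ s ∈ (T : Finset (Set ℝ)), s).Nonempty := by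
    intro T hTH hTne hTcard
    obtain ⟨S, hTS, hSH, hScard⟩ := Finset.exists_subsuperset_card_eq hTH hTcard hcard
    obtain ⟨T', hT'S, hT'card, hT'ne⟩ := hprop S hSH hScard
    have hT'eq : T' = S := Finset.eq_of_subset_of_card_le hT'S (by rw [hT'card, hScard])
    subst hT'eq
    obtain ⟨x, hx⟩ := hT'ne
    refine ⟨x, ?_⟩
    rw [Set.mem_iInter₂]
    intro s hsT
    exact (Set.mem_iInter₂.mp hx) s (hTS hsT)
  -- canonical point
  haveI : Nonempty (Fin p) := ⟨⟨0, hp0⟩⟩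
  have hcanon : ∀ g : Fin p → Set ℝ, (∀ i, g i ∈ H) →
      ∃ u : ℝ, ∃ i : Fin p, u ∈ LE (g i) ∧ ∀ j, u ∈ g j := by
    intro g hg
    set T := Finset.image g Finset.univ with hT
    have hTH : T ⊆ H := by
      intro s hs
      obtain ⟨i, -, rfl⟩ := Finset.mem_image.mp hs
      exact hg i
    have hTne : T.Nonempty := ⟨g ⟨0, hp0⟩, Finset.mem_image_of_mem g (Finset.mem_univ _)⟩
    have hTcard : T.card ≤ p := le_trans Finset.card_image_le (by simp)
    obtain ⟨z, hz⟩ := hkwise T hTH hTne hTcard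
    have hzg : ∀ j, z ∈ g j := by
      intro j
      exact (Set.mem_iInter₂.mp hz) (g j) (Finset.mem_image_of_mem g (Finset.mem_univ j))
    have hcomp : ∀ j : Fin p, ∃ I : ℝ × ℝ, I ∈ P (g j) ∧ z ∈ Set.Icc I.1 I.2 := by
      intro j
      have heq := (hP (g j) (hg j)).2
      have hzj := hzg j
      rw [heq] at hzj
      rw [Set.mem_iUnion₂] at hzj
      obtain ⟨I, hI, hzI⟩ := hzj
      exact ⟨I, hI, hzI⟩
    choose I hI1 hI2 using hcomp
    obtain ⟨i, -, hmax⟩ := Finset.exists_max_image Finset.univ (fun j => (I j).1)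
      Finset.univ_nonempty
    refine ⟨(I i).1, i, ?_, ?_⟩
    · exact Finset.mem_image_of_mem Prod.fst (hI1 i)
    · intro j
      rw [(hP (g j) (hg j)).2]
      have hmem : (I i).1 ∈ Set.Icc (I j).1 (I j).2 :=
        ⟨hmax j (Finset.mem_univ j), le_trans (hI2 i).1 (hI2 j).2⟩
      exact Set.mem_biUnion (hI1 j) hmem
  -- B
  set B : ℝ := ((p:ℝ) * d) ^ (1 / ((p:ℝ) - 1)) with hB
  have hpdpos : (0:ℝ) < (p:ℝ) * d := by positivity
  have hBpos : 0 < B := Real.rpow_pos_of_pos hpdpos _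
  -- UU nonempty
  have hHne : H.Nonempty := Finset.card_pos.mp (by omega)
  have hUUne : UU.Nonempty := by
    obtain ⟨s, hs⟩ := hHne
    obtain ⟨x, hx⟩ := (hH s hs).1
    have heq := (hP s hs).2
    rw [heq] at hx
    simp only [Set.mem_iUnion] at hx
    obtain ⟨I, hI, -⟩ := hx
    exact ⟨I.1, Finset.mem_biUnion.mpr ⟨s, hs, Finset.mem_image_of_mem Prod.fst hI⟩⟩
  haveI : Nonempty {u // u ∈ UU} := ⟨⟨hUUne.choose, hUUne.choose_spec⟩⟩
  -- duality
  have hdual := lp_duality (U := {u // u ∈ UU}) (S := {s // s ∈ H})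
    (fun u s => if (u : ℝ) ∈ (s : Set ℝ) then (1:ℝ) else 0) B hBpos.le ?hmatch
  case hmatch =>
    intro y hy0 hycon
    set y' : Set ℝ → ℝ := fun s => if h : s ∈ H then y ⟨s, h⟩ else 0 with hy'
    have hy'0 : ∀ s, 0 ≤ y' s := by
      intro s
      rw [hy']
      by_cases h : s ∈ H
      · simp only [dif_pos h]; exact hy0 _
      · simp [dif_neg h]
    have hsum_eq : ∑ s : {s // s ∈ H}, y s = ∑ s ∈ H, y' s := by
      rw [← Finset.sum_attach H y']
      rw [Finset.univ_eq_attach]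
      apply Finset.sum_congr rfl
      intro s _
      rw [hy']
      simp [s.2]
    have hdeg : ∀ u ∈ H.biUnion LE, ∑ s ∈ H.filter (fun s => u ∈ s), y' s ≤ 1 := by
      intro u huUU
      have hcon := hycon ⟨u, by rw [hUU]; exact huUU⟩
      calc ∑ s ∈ H.filter (fun s => u ∈ s), y' s
          = ∑ s ∈ H, if u ∈ s then y' s else 0 := Finset.sum_filter _ _
        _ = ∑ s ∈ H.attach, (if u ∈ s.1 then y' s.1 else 0) := (Finset.sum_attach H _).symm
        _ = ∑ s : {s // s ∈ H}, y s * (if (u:ℝ) ∈ (s : Set ℝ) then (1:ℝ) else 0) := by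
            rw [Finset.univ_eq_attach]
            apply Finset.sum_congr rfl
            intro s _
            by_cases h : u ∈ s.1
            · simp [h, hy', s.2]
            · simp [h]
        _ ≤ 1 := hcon
    have hLEcard : ∀ s ∈ H, (LE s).card ≤ d := by
      intro s hs
      exact le_trans Finset.card_image_le (hP s hs).1
    have hcnt := counting_bound p d hp H LE hLEcard hcanon y' hy'0 hdeg
    rw [hsum_eq]
    set t := ∑ s ∈ H, y' s with ht
    have ht0 : 0 ≤ t := Finset.sum_nonneg fun s _ => hy'0 s
    rcases eq_or_lt_of_le ht0 with h | h
    · rw [← h]; exact hBpos.le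
    · have hpow : t ^ (p - 1) ≤ (p:ℝ) * d := by
        have hsplit : t ^ p = t ^ (p - 1) * t := by
          rw [← pow_succ]
          congr 1
          omega
        rw [hsplit] at hcnt
        exact le_of_mul_le_mul_right hcnt h
      have hcast : ((p:ℝ) - 1) = ((p - 1 : ℕ) : ℝ) := by
        have : (1:ℕ) ≤ p := by omega
        push_cast [this]
        ring
      have hmono := Real.rpow_le_rpow (by positivity) hpow
        (le_of_lt (by positivity : (0:ℝ) < 1 / ((p:ℝ) - 1)))
      have hlhs : (t ^ (p - 1) : ℝ) ^ (1 / ((p:ℝ) - 1)) = t := by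
        rw [← Real.rpow_natCast t (p - 1), ← Real.rpow_mul ht0, ← hcast]
        rw [mul_one_div, div_self (ne_of_gt hpm1), Real.rpow_one]
      rw [hlhs] at hmono
      exact hmono
  obtain ⟨w, hw0, hwcov, hwtot⟩ := hdual
  -- transfer w to ℝ
  set W : ℝ → ℝ := fun u => if h : u ∈ UU then w ⟨u, h⟩ else 0 with hW
  have hW0 : ∀ u, 0 ≤ W u := by
    intro u
    rw [hW]
    by_cases h : u ∈ UU
    · simp only [dif_pos h]; exact hw0 _
    · simp [dif_neg h]
  have hWtot : ∑ u ∈ UU, W u ≤ B := by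
    calc ∑ u ∈ UU, W u = ∑ u ∈ UU.attach, W u.1 := (Finset.sum_attach UU W).symm
      _ = ∑ u : {u // u ∈ UU}, w u := by
          rw [Finset.univ_eq_attach]
          apply Finset.sum_congr rfl
          intro u _
          rw [hW]
          simp [u.2]
      _ ≤ B := hwtot
  have hWcov : ∀ s ∈ H, (1:ℝ) ≤ ∑ u ∈ UU.filter (fun u => u ∈ s), W u := by
    intro s hs
    have hcon := hwcov ⟨s, hs⟩
    calc (1:ℝ) ≤ ∑ u : {u // u ∈ UU}, w u * (if (u:ℝ) ∈ s then (1:ℝ) else 0) := hcon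
      _ = ∑ u ∈ UU.attach, (if (u:ℝ) ∈ s then W u.1 else 0) := by
          rw [Finset.univ_eq_attach]
          apply Finset.sum_congr rfl
          intro u _
          by_cases h : (u:ℝ) ∈ s
          · simp [h, hW, u.2]
          · simp [h]
      _ = ∑ u ∈ UU, if u ∈ s then W u else 0 :=
          Finset.sum_attach UU (fun u => if u ∈ s then W u else 0)
      _ = ∑ u ∈ UU.filter (fun u => u ∈ s), W u := (Finset.sum_filter _ _).symm
  -- select heavy component for each member
  have hsel : ∀ s : Set ℝ, ∃ ab : ℝ × ℝ, s ∈ H →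
      (ab.1 ≤ ab.2 ∧ Set.Icc ab.1 ab.2 ⊆ s ∧
        (1:ℝ)/d ≤ ∑ u ∈ UU.filter (fun u => u ∈ Set.Icc ab.1 ab.2), W u) := by
    intro s
    by_cases hs : s ∈ H
    swap
    · exact ⟨(0,0), fun h => absurd h hs⟩
    have hIexists : ∃ I ∈ P s, (1:ℝ)/d ≤ ∑ u ∈ UU.filter (fun u => u ∈ Set.Icc I.1 I.2), W u := by
      by_contra hno
      push_neg at hno
      have hPne : (P s).Nonempty := by
        obtain ⟨x, hx⟩ := (hH s hs).1
        have heq := (hP s hs).2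
        rw [heq] at hx
        simp only [Set.mem_iUnion] at hx
        obtain ⟨I, hI, -⟩ := hx
        exact ⟨I, hI⟩
      have hsubadd : ∑ u ∈ UU.filter (fun u => u ∈ s), W u ≤
          ∑ I ∈ P s, ∑ u ∈ UU.filter (fun u => u ∈ Set.Icc I.1 I.2), W u := by
        apply sum_le_sum_biUnion_aux W hW0 (P s)
          (fun I => UU.filter (fun u => u ∈ Set.Icc I.1 I.2))
        intro u hu
        rw [Finset.mem_filter] at hu
        have hus := hu.2
        rw [(hP s hs).2] at hus
        simp only [Set.mem_iUnion] at hus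
        obtain ⟨I, hI, huI⟩ := hus
        exact Finset.mem_biUnion.mpr ⟨I, hI, Finset.mem_filter.mpr ⟨hu.1, huI⟩⟩
      have hstrict : ∑ I ∈ P s, ∑ u ∈ UU.filter (fun u => u ∈ Set.Icc I.1 I.2), W u
          < ∑ I ∈ P s, (1:ℝ)/d := by
        apply Finset.sum_lt_sum_of_nonempty hPne
        intro I hI
        exact hno I hI
      have hcardP : ((P s).card : ℝ) ≤ (d : ℝ) := by exact_mod_cast (hP s hs).1
      have hsum_const : ∑ _I ∈ P s, (1:ℝ)/d = ((P s).card : ℝ) / d := by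
        rw [Finset.sum_const, nsmul_eq_mul]
        ring
      have hle1 : ((P s).card : ℝ) / d ≤ 1 := by
        rw [div_le_one (by positivity)]
        exact hcardP
      have h1 := hWcov s hs
      linarith
    obtain ⟨I, hIP, hIm⟩ := hIexists
    refine ⟨I, fun _ => ⟨?_, ?_, hIm⟩⟩
    · by_contra hab
      push_neg at hab
      have hempty : UU.filter (fun u => u ∈ Set.Icc I.1 I.2) = ∅ := by
        apply Finset.filter_false_of_mem
        intro u _ hu
        exact absurd (le_trans hu.1 hu.2) (not_le.mpr hab)
      rw [hempty, Finset.sum_empty] at hIm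
      have : (0:ℝ) < 1/d := by positivity
      linarith
    · rw [(hP s hs).2]
      intro x hx
      exact Set.mem_biUnion hIP hx
  choose ab hab using hsel
  -- sweep
  obtain ⟨C, hCcov, hCcard⟩ := sweep_cover d hd0 UU W hW0 (fun s => (ab s).1)
    (fun s => (ab s).2) H (fun s hs => hab s hs)
  -- coverNum bound
  have hcnum : coverNum H ≤ C.card := by
    apply Nat.sInf_le
    exact ⟨C, rfl, hCcov⟩
  have hCtot : (C.card : ℝ) ≤ (d:ℝ) * B := by
    refine hCcard.trans ?_
    apply mul_le_mul_of_nonneg_left _ (by positivity : (0:ℝ) ≤ (d:ℝ))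
    refine le_trans ?_ hWtot
    apply Finset.sum_le_sum_of_subset_of_nonneg (Finset.filter_subset _ _)
    intro u _ _
    exact hW0 u
  have hfinal : (d:ℝ) * B = (p : ℝ) ^ (1 / ((p : ℝ) - 1)) * (d : ℝ) ^ ((p : ℝ) / ((p : ℝ) - 1)) := by
    rw [hB, Real.mul_rpow (by positivity) (by positivity)]
    have hexp : (p:ℝ) / ((p:ℝ) - 1) = 1 + 1 / ((p:ℝ) - 1) := by
      field_simp
      ring
    rw [hexp, Real.rpow_add (by linarith : (0:ℝ) < (d:ℝ)), Real.rpow_one]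
    ring
  have hcnumR : (coverNum H : ℝ) ≤ (d:ℝ) * B := by
    refine le_trans ?_ hCtot
    exact_mod_cast hcnum
  rw [hfinal] at hcnumR
  have : (0:ℝ) < (d:ℝ) := by linarith
  linarith
end

section
/- Let p ≥ q ≥ 2 and d ≥ 1 be integers and let H be a finite family of d-intervals with |H| ≥ p. If H satisfies the (p,q) property, then the covering number satisfies τ(H) ≤ max{ (2^{1/(q-1)} · (e·p)^{q/(q-1)} / q) · d^{q/(q-1)} + d , 2·p²·d }. -/
set_option maxHeartbeats 1000000

open Finset

variable {α : Type*} [DecidableEq α]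

noncomputable def esym (s : Finset α) (f : α → ℝ) (k : ℕ) : ℝ :=
  ∑ T ∈ s.powersetCard k, ∏ x ∈ T, f x

lemma esym_nonneg {s : Finset α} {f : α → ℝ} (hf : ∀ x ∈ s, 0 ≤ f x) (k : ℕ) :
    0 ≤ esym s f k := by
  refine Finset.sum_nonneg fun T hT => Finset.prod_nonneg fun x hx => ?_
  exact hf x ((Finset.mem_powersetCard.1 hT).1 hx)

lemma esym_zero (s : Finset α) (f : α → ℝ) : esym s f 0 = 1 := by
  simp [esym]

lemma esym_mono {s t : Finset α} {f : α → ℝ} (hst : s ⊆ t) (hf : ∀ x ∈ t, 0 ≤ f x) (k : ℕ) :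
    esym s f k ≤ esym t f k := by
  refine Finset.sum_le_sum_of_subset_of_nonneg (Finset.powersetCard_mono hst) ?_
  intro T hT _
  exact Finset.prod_nonneg fun x hx => hf x ((Finset.mem_powersetCard.1 hT).1 hx)

lemma esym_succ_identity (s : Finset α) (f : α → ℝ) (k : ℕ) :
    ((k : ℝ) + 1) * esym s f (k + 1) = ∑ i ∈ s, f i * esym (s.erase i) f k := by
  classical
  have h1 : ∀ T ∈ s.powersetCard (k + 1), ((k : ℝ) + 1) * ∏ x ∈ T, f x
      = ∑ i ∈ T, f i * ∏ x ∈ T.erase i, f x := by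
    intro T hT
    have hc : T.card = k + 1 := (Finset.mem_powersetCard.1 hT).2
    have : ∀ i ∈ T, f i * ∏ x ∈ T.erase i, f x = ∏ x ∈ T, f x := fun i hi =>
      Finset.mul_prod_erase T f hi
    rw [Finset.sum_congr rfl this, Finset.sum_const, hc]
    push_cast
    ring
  rw [esym, Finset.mul_sum, Finset.sum_congr rfl h1]
  rw [Finset.sum_sigma']
  have h2 : ∀ i ∈ s, f i * esym (s.erase i) f k
      = ∑ T ∈ (s.erase i).powersetCard k, f i * ∏ x ∈ T, f x := by
    intro i hi; rw [esym, Finset.mul_sum]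
  rw [Finset.sum_congr rfl h2, Finset.sum_sigma']
  refine Finset.sum_bij' (fun x hx => ⟨x.2, x.1.erase x.2⟩)
    (fun y hy => ⟨insert y.1 y.2, y.1⟩) ?_ ?_ ?_ ?_ ?_
  · rintro ⟨T, i⟩ hx
    simp only [Finset.mem_sigma] at hx ⊢
    obtain ⟨hT, hi⟩ := hx
    obtain ⟨hTs, hTc⟩ := Finset.mem_powersetCard.1 hT
    refine ⟨hTs hi, Finset.mem_powersetCard.2 ⟨?_, ?_⟩⟩
    · exact fun x hx => Finset.mem_erase.2 ⟨(Finset.mem_erase.1 hx).1,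
        hTs (Finset.mem_erase.1 hx).2⟩
    · rw [Finset.card_erase_of_mem hi, hTc]; rfl
  · rintro ⟨i, T⟩ hy
    simp only [Finset.mem_sigma] at hy ⊢
    obtain ⟨hi, hT⟩ := hy
    obtain ⟨hTs, hTc⟩ := Finset.mem_powersetCard.1 hT
    have hiT : i ∉ T := fun h => (Finset.mem_erase.1 (hTs h)).1 rfl
    refine ⟨Finset.mem_powersetCard.2 ⟨?_, ?_⟩, Finset.mem_insert_self _ _⟩
    · intro x hx
      rcases Finset.mem_insert.1 hx with rfl | hx
      · exact hi
      · exact Finset.mem_of_mem_erase (hTs hx)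
    · rw [Finset.card_insert_of_notMem hiT, hTc]
  · rintro ⟨T, i⟩ hx
    simp only [Finset.mem_sigma] at hx
    have : insert i (T.erase i) = T := Finset.insert_erase hx.2
    simp [this]
  · rintro ⟨i, T⟩ hy
    simp only [Finset.mem_sigma] at hy
    obtain ⟨hi, hT⟩ := hy
    obtain ⟨hTs, hTc⟩ := Finset.mem_powersetCard.1 hT
    have hiT : i ∉ T := fun h => (Finset.mem_erase.1 (hTs h)).1 rfl
    simp [Finset.erase_insert hiT]
  · rintro ⟨T, i⟩ hx
    rfl

lemma factorial_mul_esym_le (f : α → ℝ) :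
    ∀ (k : ℕ) (s : Finset α), (∀ x ∈ s, 0 ≤ f x) →
      (k.factorial : ℝ) * esym s f k ≤ (∑ x ∈ s, f x) ^ k := by
  intro k
  induction k with
  | zero => intro s _; simp [esym_zero]
  | succ k ih =>
    intro s hf
    have hM : 0 ≤ ∑ x ∈ s, f x := Finset.sum_nonneg hf
    have h1 : ((k : ℝ) + 1) * esym s f (k + 1) ≤ (∑ x ∈ s, f x) * esym s f k := by
      rw [esym_succ_identity]
      rw [Finset.sum_mul]
      refine Finset.sum_le_sum fun i hi => ?_
      exact mul_le_mul_of_nonneg_left (esym_mono (Finset.erase_subset _ _) hf k) (hf i hi)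
    calc ((k + 1).factorial : ℝ) * esym s f (k + 1)
        = (k.factorial : ℝ) * (((k : ℝ) + 1) * esym s f (k + 1)) := by
          rw [Nat.factorial_succ]; push_cast; ring
      _ ≤ (k.factorial : ℝ) * ((∑ x ∈ s, f x) * esym s f k) := by
          refine mul_le_mul_of_nonneg_left h1 (by positivity)
      _ = (∑ x ∈ s, f x) * ((k.factorial : ℝ) * esym s f k) := by ring
      _ ≤ (∑ x ∈ s, f x) * (∑ x ∈ s, f x) ^ k :=
          mul_le_mul_of_nonneg_left (ih s hf) hM
      _ = (∑ x ∈ s, f x) ^ (k + 1) := by ring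

lemma ff_le_factorial_mul_esym (f : α → ℝ) :
    ∀ (k : ℕ) (s : Finset α), (∀ x ∈ s, 0 ≤ f x) → (∀ x ∈ s, f x ≤ 1) →
      (k : ℝ) ≤ ∑ x ∈ s, f x →
      (∏ j ∈ Finset.range k, ((∑ x ∈ s, f x) - j)) ≤ (k.factorial : ℝ) * esym s f k := by
  intro k
  induction k with
  | zero => intro s _ _ _; simp [esym_zero]
  | succ k ih =>
    intro s hf0 hf1 hk
    set M := ∑ x ∈ s, f x with hM
    have hM0 : 0 ≤ M := Finset.sum_nonneg hf0
    have hprod : ∏ j ∈ Finset.range (k + 1), (M - j)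
        = (∏ j ∈ Finset.range k, ((M - 1) - j)) * M := by
      rw [Finset.prod_range_succ']
      congr 1
      · refine Finset.prod_congr rfl fun j _ => ?_
        push_cast; ring
      · simp
    have key : ∀ i ∈ s, f i * (∏ j ∈ Finset.range k, ((M - 1) - j))
        ≤ f i * ((k.factorial : ℝ) * esym (s.erase i) f k) := by
      intro i hi
      refine mul_le_mul_of_nonneg_left ?_ (hf0 i hi)
      have hsum : ∑ x ∈ s.erase i, f x = M - f i := by
        rw [hM, ← Finset.add_sum_erase s f hi]; ring
      have hk' : (k : ℝ) ≤ ∑ x ∈ s.erase i, f x := by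
        rw [hsum]
        have : (k : ℝ) + 1 ≤ M := by push_cast at hk ⊢; linarith
        have := hf1 i hi
        linarith
      have ihh := ih (s.erase i) (fun x hx => hf0 x (Finset.mem_of_mem_erase hx))
        (fun x hx => hf1 x (Finset.mem_of_mem_erase hx)) hk'
      refine le_trans ?_ ihh
      rw [hsum]
      refine Finset.prod_le_prod (fun j hj => ?_) (fun j hj => ?_)
      · have hjk : (j : ℝ) ≤ (k : ℝ) - 1 := by
          have := Finset.mem_range.1 hj
          have : (j : ℝ) + 1 ≤ (k : ℝ) := by exact_mod_cast this
          linarith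
        have hk1 : (k : ℝ) + 1 ≤ M := by push_cast at hk; linarith
        linarith
      · have := hf1 i hi; linarith
    calc ∏ j ∈ Finset.range (k + 1), (M - j)
        = (∏ j ∈ Finset.range k, ((M - 1) - j)) * M := hprod
      _ = ∑ i ∈ s, f i * (∏ j ∈ Finset.range k, ((M - 1) - j)) := by
          rw [← Finset.sum_mul]; ring
      _ ≤ ∑ i ∈ s, f i * ((k.factorial : ℝ) * esym (s.erase i) f k) :=
          Finset.sum_le_sum key
      _ = (k.factorial : ℝ) * ∑ i ∈ s, f i * esym (s.erase i) f k := by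
          rw [Finset.mul_sum]; congr 1; ext i; ring
      _ = (k.factorial : ℝ) * (((k : ℝ) + 1) * esym s f (k + 1)) := by
          rw [esym_succ_identity]
      _ = ((k + 1).factorial : ℝ) * esym s f (k + 1) := by
          rw [Nat.factorial_succ]; push_cast; ring


open Finset

lemma greedy_intervals : ∀ (F : Finset (ℝ × ℝ)),
    ∃ (C : Finset ℝ) (D : Finset (ℝ × ℝ)), D ⊆ F ∧
      (∀ I ∈ D, ∀ J ∈ D, I ≠ J → Disjoint (Set.Icc I.1 I.2) (Set.Icc J.1 J.2)) ∧
      C.card ≤ D.card ∧ ∀ I ∈ F, I.1 ≤ I.2 → ∃ x ∈ C, x ∈ Set.Icc I.1 I.2 := by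
  intro F
  induction F using Finset.strongInductionOn with
  | _ F ih =>
    classical
    by_cases hne : (F.filter (fun I => I.1 ≤ I.2)).Nonempty
    · obtain ⟨I₀, hI₀mem, hI₀min⟩ := Finset.exists_min_image _ (fun I => I.2) hne
      have hI₀F : I₀ ∈ F := (Finset.mem_filter.1 hI₀mem).1
      have hI₀ne : I₀.1 ≤ I₀.2 := (Finset.mem_filter.1 hI₀mem).2
      set b := I₀.2 with hb
      set G := F.filter (fun I => b ∉ Set.Icc I.1 I.2) with hG
      have hGF : G ⊆ F := Finset.filter_subset _ _
      have hI₀G : I₀ ∉ G := by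
        intro h
        exact (Finset.mem_filter.1 h).2 ⟨hI₀ne, le_refl _⟩
      have hGlt : G ⊂ F := Finset.ssubset_iff_of_subset hGF |>.2 ⟨I₀, hI₀F, hI₀G⟩
      obtain ⟨C', D', hD'G, hdisj, hcard, hcov⟩ := ih G hGlt
      refine ⟨insert b C', insert I₀ D', ?_, ?_, ?_, ?_⟩
      · intro J hJ
        rcases Finset.mem_insert.1 hJ with rfl | hJ
        · exact hI₀F
        · exact hGF (hD'G hJ)
      · -- disjointness
        have key : ∀ J ∈ D', Disjoint (Set.Icc I₀.1 I₀.2) (Set.Icc J.1 J.2) := by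
          intro J hJ
          have hJG : J ∈ G := hD'G hJ
          have hbJ : b ∉ Set.Icc J.1 J.2 := (Finset.mem_filter.1 hJG).2
          by_cases hJne : J.1 ≤ J.2
          · have hbJ2 : b ≤ J.2 := hI₀min J (Finset.mem_filter.2 ⟨hGF hJG, hJne⟩)
            have hJ1b : b < J.1 := by
              by_contra hcon
              exact hbJ ⟨le_of_not_gt hcon, hbJ2⟩
            rw [Set.disjoint_left]
            rintro x ⟨_, hx2⟩ ⟨hx3, _⟩
            exact absurd (le_trans hx3 (le_trans hx2 (le_of_lt hJ1b))) (by linarith)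
          · rw [Set.Icc_eq_empty hJne]
            exact Set.disjoint_empty _
        intro I hI J hJ hIJ
        rcases Finset.mem_insert.1 hI with hI0 | hI'
        · rcases Finset.mem_insert.1 hJ with hJ0 | hJ'
          · exact absurd (hI0.trans hJ0.symm) hIJ
          · rw [hI0]; exact key J hJ'
        · rcases Finset.mem_insert.1 hJ with hJ0 | hJ'
          · rw [hJ0]; exact (key I hI').symm
          · exact hdisj I hI' J hJ' hIJ
      · calc (insert b C').card ≤ C'.card + 1 := Finset.card_insert_le _ _
          _ ≤ D'.card + 1 := by omega
          _ = (insert I₀ D').card := by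
              rw [Finset.card_insert_of_notMem (fun h => hI₀G (hD'G h))]
      · intro I hIF hIne
        by_cases hbI : b ∈ Set.Icc I.1 I.2
        · exact ⟨b, Finset.mem_insert_self _ _, hbI⟩
        · obtain ⟨x, hx1, hx2⟩ := hcov I (Finset.mem_filter.2 ⟨hIF, hbI⟩) hIne
          exact ⟨x, Finset.mem_insert_of_mem hx1, hx2⟩
    · refine ⟨∅, ∅, Finset.empty_subset _, by simp, le_refl _, ?_⟩
      intro I hIF hIne
      exact absurd ⟨I, Finset.mem_filter.2 ⟨hIF, hIne⟩⟩ hne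


open Finset

section Cone

variable {E : Type*} [NormedAddCommGroup E] [NormedSpace ℝ E]

def coneOf {ι : Type*} (s : Finset ι) (v : ι → E) : Set E :=
  {x | ∃ c : ι → ℝ, (∀ i, 0 ≤ c i) ∧ x = ∑ i ∈ s, c i • v i}

lemma coneOf_mono {ι : Type*} {t s : Finset ι} (hts : t ⊆ s) (v : ι → E) :
    coneOf t v ⊆ coneOf s v := by
  classical
  rintro x ⟨c, hc, rfl⟩
  refine ⟨fun i => if i ∈ t then c i else 0,
    fun i => by by_cases h : i ∈ t <;> simp [h, hc i], ?_⟩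
  rw [← Finset.sum_subset hts (fun i _ hit => by simp [hit])]
  exact Finset.sum_congr rfl fun i hi => by simp [hi]

lemma coneOf_caratheodory {ι : Type*} (s : Finset ι) (v : ι → E) (x : E)
    (hx : x ∈ coneOf s v) :
    ∃ t : Finset ι, t ⊆ s ∧ LinearIndependent ℝ (fun i : t => v i) ∧ x ∈ coneOf t v := by
  classical
  induction s using Finset.strongInductionOn with
  | _ s ih =>
    by_cases hli : LinearIndependent ℝ (fun i : s => v i)
    · exact ⟨s, Finset.Subset.refl s, hli, hx⟩
    · obtain ⟨g, hg0, i₁, hi₁⟩ := Fintype.not_linearIndependent_iff.1 hli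
      obtain ⟨c, hc, rfl⟩ := hx
      set gg : ι → ℝ := fun i => if h : i ∈ s then g ⟨i, h⟩ else 0 with hgg
      have hggsum : ∑ i ∈ s, gg i • v i = 0 := by
        rw [← Finset.sum_attach s (fun i => gg i • v i)]
        rw [← hg0]
        refine Finset.sum_congr rfl fun i _ => ?_
        simp [hgg, i.2]
      have hex : ∃ g' : ι → ℝ, (∑ i ∈ s, g' i • v i = 0) ∧ (∃ i ∈ s, 0 < g' i) ∧
          (∀ i, i ∉ s → g' i = 0) := by
        by_cases hpos : ∃ i ∈ s, 0 < gg i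
        · exact ⟨gg, hggsum, hpos, fun i hi => by simp [hgg, hi]⟩
        · refine ⟨-gg, by simpa using congrArg Neg.neg hggsum, ⟨i₁, i₁.2, ?_⟩,
            fun i hi => by simp [hgg, hi]⟩
          push_neg at hpos
          have h1 : gg (i₁ : ι) = g i₁ := by simp [hgg, i₁.2]
          have h2 : gg (i₁ : ι) ≤ 0 := hpos _ i₁.2
          have : gg (i₁ : ι) ≠ 0 := by rw [h1]; exact hi₁
          simp only [Pi.neg_apply]
          cases lt_or_eq_of_le h2 with
          | inl h => linarith
          | inr h => exact absurd h this
      obtain ⟨g', hg'sum, ⟨iw, hiw, hiwpos⟩, hg'out⟩ := hex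
      set P := s.filter (fun i => 0 < g' i) with hP
      have hPne : P.Nonempty := ⟨iw, Finset.mem_filter.2 ⟨hiw, hiwpos⟩⟩
      obtain ⟨i₀, hi₀P, hi₀min⟩ := Finset.exists_min_image P (fun i => c i / g' i) hPne
      have hi₀s : i₀ ∈ s := (Finset.mem_filter.1 hi₀P).1
      have hg'i₀ : 0 < g' i₀ := (Finset.mem_filter.1 hi₀P).2
      set τ := c i₀ / g' i₀ with hτ
      have hτ0 : 0 ≤ τ := div_nonneg (hc i₀) (le_of_lt hg'i₀)
      set c' : ι → ℝ := fun i => if i ∈ s then c i - τ * g' i else 0 with hc'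
      have hc'0 : ∀ i, 0 ≤ c' i := by
        intro i
        rw [hc']
        by_cases his : i ∈ s
        · simp only [his, if_true]
          by_cases hgi : 0 < g' i
          · have := hi₀min i (Finset.mem_filter.2 ⟨his, hgi⟩)
            rw [hτ]
            rw [div_le_div_iff₀ hg'i₀ hgi] at this
            have h3 : c i₀ / g' i₀ * g' i ≤ c i := by
              rw [div_mul_eq_mul_div, div_le_iff₀ hg'i₀]
              linarith
            linarith
          · push_neg at hgi
            have : 0 ≤ -(τ * g' i) := by
              have := mul_nonneg hτ0 (neg_nonneg.2 hgi)
              linarith [mul_neg τ (g' i)]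
            linarith [hc i]
        · simp [his]
      have hc'i₀ : c' i₀ = 0 := by
        rw [hc']
        simp only [hi₀s, if_true, hτ]
        field_simp
        ring
      have hxsum : ∑ i ∈ s, c i • v i = ∑ i ∈ s.erase i₀, c' i • v i := by
        have h1 : ∑ i ∈ s.erase i₀, c' i • v i = ∑ i ∈ s, c' i • v i := by
          rw [← Finset.add_sum_erase s (fun i => c' i • v i) hi₀s, hc'i₀]
          simp
        rw [h1]
        have h2 : ∀ i ∈ s, c' i • v i = c i • v i - τ • (g' i • v i) := by
          intro i hi
          rw [hc']
          simp only [hi, if_true]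
          rw [sub_smul, smul_smul]
        rw [Finset.sum_congr rfl h2, Finset.sum_sub_distrib, ← Finset.smul_sum, hg'sum,
          smul_zero, sub_zero]
      have hxe : (∑ i ∈ s, c i • v i) ∈ coneOf (s.erase i₀) v :=
        ⟨c', hc'0, hxsum⟩
      obtain ⟨t, hts, hli', hxt⟩ := ih (s.erase i₀) (Finset.erase_ssubset hi₀s) hxe
      exact ⟨t, hts.trans (Finset.erase_subset _ _), hli', hxt⟩

lemma isClosed_coneOf [FiniteDimensional ℝ E] {ι : Type*} (s : Finset ι) (v : ι → E) :
    IsClosed (coneOf s v) := by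
  classical
  have hrw : coneOf s v = ⋃ t ∈ s.powerset.filter
      (fun t => LinearIndependent ℝ (fun i : {x // x ∈ t} => v i.1)), coneOf t v := by
    ext x
    constructor
    · intro hx
      obtain ⟨t, hts, hli, hxt⟩ := coneOf_caratheodory s v x hx
      exact Set.mem_biUnion (Finset.mem_filter.2 ⟨Finset.mem_powerset.2 hts, hli⟩) hxt
    · intro hx
      obtain ⟨t, ht, hxt⟩ := Set.mem_iUnion₂.1 hx
      exact coneOf_mono (Finset.mem_powerset.1 (Finset.mem_filter.1 ht).1) v hxt
  rw [hrw]
  refine Set.Finite.isClosed_biUnion (Finset.finite_toSet _) ?_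
  intro t ht
  have hli : LinearIndependent ℝ (fun i : {x // x ∈ t} => v i.1) := (Finset.mem_filter.1 ht).2
  set L : ({x // x ∈ t} → ℝ) →ₗ[ℝ] E := Fintype.linearCombination ℝ (fun i : {x // x ∈ t} => v i.1)
    with hL
  have hker : LinearMap.ker L = ⊥ := by
    rw [LinearMap.ker_eq_bot']
    intro m hm
    rw [hL, Fintype.linearCombination_apply] at hm
    have := Fintype.linearIndependent_iff.1 hli m hm
    exact funext this
  have himg : coneOf t v = L '' {c : {x // x ∈ t} → ℝ | ∀ i, 0 ≤ c i} := by
    ext x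
    constructor
    · rintro ⟨c, hc, rfl⟩
      refine ⟨fun i => c i, fun i => hc i, ?_⟩
      rw [hL, Fintype.linearCombination_apply]
      rw [← Finset.sum_coe_sort t (fun i => c i • v i)]
    · rintro ⟨c, hc, rfl⟩
      refine ⟨fun i => if h : i ∈ t then c ⟨i, h⟩ else 0, fun i => ?_, ?_⟩
      · by_cases h : i ∈ t
        · simpa [h] using hc ⟨i, h⟩
        · simp [h]
      rw [hL, Fintype.linearCombination_apply]
      rw [← Finset.sum_coe_sort t (fun i => (if h : i ∈ t then c ⟨i, h⟩ else 0) • v i)]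
      refine Finset.sum_congr rfl fun i _ => ?_
      simp [i.2]
  rw [himg]
  have hclosed : IsClosed {c : {x // x ∈ t} → ℝ | ∀ i, 0 ≤ c i} := by
    have : {c : {x // x ∈ t} → ℝ | ∀ i, 0 ≤ c i} = ⋂ i, (fun c => c i) ⁻¹' Set.Ici 0 := by
      ext c; simp [Set.mem_iInter]
    rw [this]
    exact isClosed_iInter fun i => isClosed_Ici.preimage (continuous_apply i)
  exact (LinearMap.isClosedEmbedding_of_injective hker).isClosedMap _ hclosed

end Cone

section Farkas

variable {κ : Type*} [Fintype κ]

theorem farkas_lemma {ι : Type*} (s : Finset ι) (v : ι → EuclideanSpace ℝ κ)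
    (b : EuclideanSpace ℝ κ) (hb : b ∉ coneOf s v) :
    ∃ u : EuclideanSpace ℝ κ, (∀ i ∈ s, 0 ≤ (inner ℝ (v i) u)) ∧ (inner ℝ u b) < 0 := by
  classical
  set K : ConvexCone ℝ (EuclideanSpace ℝ κ) :=
    { carrier := coneOf s v
      smul_mem' := by
        rintro r hr x ⟨c, hc, rfl⟩
        refine ⟨fun i => r * c i, fun i => mul_nonneg (le_of_lt hr) (hc i), ?_⟩
        rw [Finset.smul_sum]
        exact Finset.sum_congr rfl fun i _ => by rw [smul_smul]
      add_mem' := by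
        rintro x ⟨c, hc, rfl⟩ y ⟨c', hc', rfl⟩
        refine ⟨fun i => c i + c' i, fun i => add_nonneg (hc i) (hc' i), ?_⟩
        rw [← Finset.sum_add_distrib]
        exact Finset.sum_congr rfl fun i _ => by rw [add_smul] } with hK
  have hne : (K : Set (EuclideanSpace ℝ κ)).Nonempty :=
    ⟨0, ⟨fun _ => 0, fun _ => le_refl _, by simp⟩⟩
  have hcl : IsClosed (K : Set (EuclideanSpace ℝ κ)) := isClosed_coneOf s v
  let Kp : ProperCone ℝ (EuclideanSpace ℝ κ) :=
    { carrier := coneOf s v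
      add_mem' := fun ha hb => K.add_mem ha hb
      zero_mem' := hne.some_mem.elim fun _ _ => ⟨fun _ => 0, fun _ => le_refl _, by simp⟩
      smul_mem' := by
        rintro r x ⟨c, hc, rfl⟩
        refine ⟨fun i => (r : ℝ) * c i, fun i => mul_nonneg r.2 (hc i), ?_⟩
        rw [show r • (∑ i ∈ s, c i • v i) = (r : ℝ) • ∑ i ∈ s, c i • v i from rfl, Finset.smul_sum]
        exact Finset.sum_congr rfl fun i _ => by rw [smul_smul]
      isClosed' := hcl }
  obtain ⟨y, hy1, hy2⟩ := Kp.hyperplane_separation' (show b ∉ Kp from hb)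
  refine ⟨y, fun i hi => ?_, by rw [real_inner_comm]; exact hy2⟩
  refine hy1 (v i) ?_
  show v i ∈ coneOf s v
  refine ⟨fun j => if j = i then 1 else 0,
    fun j => by by_cases h : j = i <;> simp [h], ?_⟩
  have : ∀ j ∈ s, (if j = i then (1 : ℝ) else 0) • v j = if j = i then v j else 0 := by
    intro j _; split <;> simp
  rw [Finset.sum_congr rfl this, Finset.sum_ite_eq' s i (fun j => v j), if_pos hi]

end Farkas

lemma euclid_sum_apply {κ : Type*} [Fintype κ] {ι : Type*} (s : Finset ι)
    (f : ι → EuclideanSpace ℝ κ) (k : κ) : (∑ i ∈ s, f i) k = ∑ i ∈ s, f i k := by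
  classical
  induction s using Finset.cons_induction with
  | empty => rfl
  | cons a s ha ih => rw [Finset.sum_cons, Finset.sum_cons, ← ih]; rfl

open scoped Classical in
lemma lp_duality_s3 (H : Finset (Set ℝ)) (A : Finset ℝ) (hA : ∀ h ∈ H, ∃ a ∈ A, a ∈ h)
    (B : ℝ)
    (hmatch : ∀ m : Set ℝ → ℝ, (∀ h, 0 ≤ m h) →
      (∀ a ∈ A, ∑ h ∈ H.filter (fun h => a ∈ h), m h ≤ 1) → ∑ h ∈ H, m h ≤ B) :
    ∃ c : ℝ → ℝ, (∀ x, 0 ≤ c x) ∧ (∀ h ∈ H, 1 ≤ ∑ a ∈ A.filter (fun a => a ∈ h), c a) ∧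
      ∑ a ∈ A, c a ≤ B := by
  classical
  by_contra hcon
  push_neg at hcon
  set κ := ({h // h ∈ H} ⊕ Unit) with hκ
  set sgn : κ → ℝ := fun k => Sum.elim (fun _ => (-1 : ℝ)) (fun _ => (1 : ℝ)) k with hsgn
  set v : ({a // a ∈ A} ⊕ κ) → EuclideanSpace ℝ κ := fun j =>
    Sum.elim
      (fun (a : {a // a ∈ A}) => (WithLp.toLp 2 (fun k =>
        Sum.elim (fun (i : {h // h ∈ H}) => if (a : ℝ) ∈ (i : Set ℝ) then (1 : ℝ) else 0)
          (fun (_ : Unit) => (1 : ℝ)) k)))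
      (fun (k₀ : κ) => EuclideanSpace.single k₀ (sgn k₀)) j with hv
  set b : EuclideanSpace ℝ κ := (WithLp.toLp 2 (fun k =>
    Sum.elim (fun (_ : {h // h ∈ H}) => (1 : ℝ)) (fun (_ : Unit) => B) k)) with hbdef
  have happly : ∀ (r : ℝ) (x : EuclideanSpace ℝ κ) (k : κ), (r • x) k = r * x k :=
    fun _ _ _ => rfl
  have hb : b ∉ coneOf (Finset.univ : Finset ({a // a ∈ A} ⊕ κ)) v := by
    rintro ⟨c, hc0, hcb⟩
    set c' : ℝ → ℝ := fun a => if h : a ∈ A then c (Sum.inl ⟨a, h⟩) else 0 with hc'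
    have hc'0 : ∀ x, 0 ≤ c' x := by
      intro x; rw [hc']; by_cases h : x ∈ A <;> simp [h, hc0]
    have hcoord : ∀ k : κ, b k = (∑ a : {a // a ∈ A}, c (Sum.inl a) * v (Sum.inl a) k)
        + c (Sum.inr k) * sgn k := by
      intro k
      rw [hcb, euclid_sum_apply, Fintype.sum_sum_type]
      have e1 : ∑ a : {a // a ∈ A}, (c (Sum.inl a) • v (Sum.inl a)) k
          = ∑ a : {a // a ∈ A}, c (Sum.inl a) * v (Sum.inl a) k :=
        Finset.sum_congr rfl fun a _ => happly _ _ _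
      have hterm : ∀ k₀ : κ, (c (Sum.inr k₀) • v (Sum.inr k₀)) k
          = if k = k₀ then c (Sum.inr k₀) * sgn k₀ else 0 := by
        intro k₀
        rw [happly]
        have hre : v (Sum.inr k₀) k = (EuclideanSpace.single k₀ (sgn k₀)) k := rfl
        rw [hre, EuclideanSpace.single_apply]
        by_cases h : k = k₀ <;> simp [h]
      have e2 : ∑ k₀ : κ, (c (Sum.inr k₀) • v (Sum.inr k₀)) k = c (Sum.inr k) * sgn k := by
        rw [Finset.sum_congr rfl (fun k₀ _ => hterm k₀),
          Finset.sum_ite_eq Finset.univ k (fun k₀ => c (Sum.inr k₀) * sgn k₀),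
          if_pos (Finset.mem_univ k)]
      rw [e1, e2]
    have hcover : ∀ h ∈ H, 1 ≤ ∑ a ∈ A.filter (fun a => a ∈ h), c' a := by
      intro h hh
      have hco := hcoord (Sum.inl ⟨h, hh⟩)
      have hbk : b (Sum.inl ⟨h, hh⟩) = 1 := rfl
      have hsg : sgn (Sum.inl ⟨h, hh⟩) = -1 := rfl
      have hsum : (∑ a : {a // a ∈ A}, c (Sum.inl a) * v (Sum.inl a) (Sum.inl ⟨h, hh⟩))
          = ∑ a ∈ A.filter (fun a => a ∈ h), c' a := by
        rw [Finset.sum_filter]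
        rw [← Finset.sum_coe_sort A (fun a => if a ∈ h then c' a else 0)]
        refine Finset.sum_congr rfl fun a _ => ?_
        have hva : v (Sum.inl a) (Sum.inl ⟨h, hh⟩) = if (a : ℝ) ∈ h then (1:ℝ) else 0 := rfl
        rw [hva, hc']
        by_cases hax : (a : ℝ) ∈ h <;> simp [hax, a.2]
      rw [hbk, hsum, hsg] at hco
      have := hc0 (Sum.inr (Sum.inl ⟨h, hh⟩))
      nlinarith
    have hweight : ∑ a ∈ A, c' a ≤ B := by
      have hco := hcoord (Sum.inr ())
      have hbk : b (Sum.inr ()) = B := rfl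
      have hsg : sgn (Sum.inr ()) = 1 := rfl
      have hsum : (∑ a : {a // a ∈ A}, c (Sum.inl a) * v (Sum.inl a) (Sum.inr ()))
          = ∑ a ∈ A, c' a := by
        rw [← Finset.sum_coe_sort A c']
        refine Finset.sum_congr rfl fun a _ => ?_
        have hva : v (Sum.inl a) (Sum.inr ()) = 1 := rfl
        rw [hva, hc']
        simp [a.2]
      rw [hbk, hsum, hsg] at hco
      have := hc0 (Sum.inr (Sum.inr ()))
      linarith
    exact absurd (hcon c' hc'0 hcover) (not_lt.2 hweight)
  obtain ⟨u, hu1, hu2⟩ := farkas_lemma _ v b hb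
  set m : Set ℝ → ℝ := fun h => if hh : h ∈ H then -(u (Sum.inl ⟨h, hh⟩)) else 0 with hm
  set β : ℝ := u (Sum.inr ()) with hβ
  have hinner : ∀ (x y : EuclideanSpace ℝ κ), (inner ℝ x y) = ∑ k : κ, x k * y k := by
    intro x y
    rw [PiLp.inner_apply]
    exact Finset.sum_congr rfl fun k _ => by simp [RCLike.inner_apply, mul_comm]
  have hm0 : ∀ h, 0 ≤ m h := by
    intro h
    rw [hm]
    by_cases hh : h ∈ H
    · simp only [hh, dif_pos]
      have hthis := hu1 (Sum.inr (Sum.inl ⟨h, hh⟩)) (Finset.mem_univ _)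
      rw [hinner] at hthis
      have hval : ∀ k : κ, v (Sum.inr (Sum.inl ⟨h, hh⟩)) k * u k
          = if k = Sum.inl ⟨h, hh⟩ then -(u (Sum.inl ⟨h, hh⟩)) else 0 := by
        intro k
        have hre : v (Sum.inr (Sum.inl ⟨h, hh⟩)) k
            = (EuclideanSpace.single (Sum.inl ⟨h, hh⟩ : κ) (sgn (Sum.inl ⟨h, hh⟩))) k := rfl
        rw [hre, EuclideanSpace.single_apply]
        by_cases hk : k = Sum.inl ⟨h, hh⟩
        · subst hk
          have : sgn (Sum.inl ⟨h, hh⟩) = -1 := rfl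
          simp [this]
        · simp [hk]
      rw [Finset.sum_congr rfl (fun k _ => hval k), Finset.sum_ite_eq' Finset.univ
        (Sum.inl ⟨h, hh⟩ : κ) (fun _ => -(u (Sum.inl ⟨h, hh⟩))),
        if_pos (Finset.mem_univ _)] at hthis
      exact hthis
    · simp [hh]
  have hβ0 : 0 ≤ β := by
    have hthis := hu1 (Sum.inr (Sum.inr ())) (Finset.mem_univ _)
    rw [hinner] at hthis
    have hval : ∀ k : κ, v (Sum.inr (Sum.inr ())) k * u k
        = if k = Sum.inr () then u (Sum.inr ()) else 0 := by
      intro k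
      have hre : v (Sum.inr (Sum.inr ())) k
          = (EuclideanSpace.single (Sum.inr () : κ) (sgn (Sum.inr ()))) k := rfl
      rw [hre, EuclideanSpace.single_apply]
      by_cases hk : k = Sum.inr ()
      · subst hk
        have : sgn (Sum.inr ()) = 1 := rfl
        simp [this]
      · simp [hk]
    rw [Finset.sum_congr rfl (fun k _ => hval k), Finset.sum_ite_eq' Finset.univ
      (Sum.inr () : κ) (fun _ => u (Sum.inr ())), if_pos (Finset.mem_univ _)] at hthis
    exact hthis
  have hmatchpt : ∀ a ∈ A, ∑ h ∈ H.filter (fun h => a ∈ h), m h ≤ β := by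
    intro a ha
    have hthis := hu1 (Sum.inl ⟨a, ha⟩) (Finset.mem_univ _)
    rw [hinner, Fintype.sum_sum_type] at hthis
    have h2 : (∑ k : Unit, v (Sum.inl ⟨a, ha⟩) (Sum.inr k) * u (Sum.inr k)) = β := by
      rw [Finset.univ_unique, Finset.sum_singleton]
      show v (Sum.inl ⟨a, ha⟩) (Sum.inr ()) * u (Sum.inr ()) = β
      have hva : v (Sum.inl ⟨a, ha⟩) (Sum.inr ()) = 1 := rfl
      rw [hva, one_mul, hβ]
    have h1 : (∑ i : {h // h ∈ H}, v (Sum.inl ⟨a, ha⟩) (Sum.inl i) * u (Sum.inl i))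
        = - ∑ h ∈ H.filter (fun h => a ∈ h), m h := by
      rw [Finset.sum_filter, ← Finset.sum_coe_sort H (fun h => if a ∈ h then m h else 0),
        ← Finset.sum_neg_distrib]
      refine Finset.sum_congr rfl fun i _ => ?_
      have hvi : v (Sum.inl ⟨a, ha⟩) (Sum.inl i) = if a ∈ (i : Set ℝ) then (1:ℝ) else 0 := rfl
      rw [hvi, hm]
      by_cases hai : a ∈ (i : Set ℝ) <;> simp [hai, i.2]
    rw [h1, h2] at hthis
    linarith
  have hlast : β * B < ∑ h ∈ H, m h := by
    rw [hinner, Fintype.sum_sum_type] at hu2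
    have h2 : (∑ k : Unit, u (Sum.inr k) * b (Sum.inr k)) = β * B := by
      rw [Finset.univ_unique, Finset.sum_singleton]
      show u (Sum.inr ()) * b (Sum.inr ()) = β * B
      have hbk : b (Sum.inr ()) = B := rfl
      rw [hbk, hβ]
    have h1 : (∑ i : {h // h ∈ H}, u (Sum.inl i) * b (Sum.inl i)) = - ∑ h ∈ H, m h := by
      rw [← Finset.sum_coe_sort H m, ← Finset.sum_neg_distrib]
      refine Finset.sum_congr rfl fun i _ => ?_
      have hbi : b (Sum.inl i) = 1 := rfl
      rw [hbi, hm]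
      simp [i.2]
    rw [h1, h2] at hu2
    linarith
  by_cases hβpos : 0 < β
  · have hfin := hmatch (fun h => m h / β) (fun h => div_nonneg (hm0 h) (le_of_lt hβpos))
      (fun a ha => by
        rw [← Finset.sum_div]
        rw [div_le_one hβpos]
        exact hmatchpt a ha)
    rw [← Finset.sum_div, div_le_iff₀ hβpos] at hfin
    nlinarith
  · have hβeq : β = 0 := le_antisymm (not_lt.1 hβpos) hβ0
    have hzero : ∀ h ∈ H, m h = 0 := by
      intro h hh
      obtain ⟨a, ha, hah⟩ := hA h hh
      have h1 := hmatchpt a ha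
      rw [hβeq] at h1
      have h2 : m h ≤ ∑ h' ∈ H.filter (fun h' => a ∈ h'), m h' :=
        Finset.single_le_sum (fun h' _ => hm0 h') (Finset.mem_filter.2 ⟨hh, hah⟩)
      have := hm0 h
      linarith
    rw [Finset.sum_congr rfl hzero, Finset.sum_const, smul_zero, hβeq] at hlast
    simp at hlast


-- compactness of the members
lemma member_isCompact {d : ℕ} {h : Set ℝ} {P : Finset (ℝ × ℝ)}
    (hrep : h = ⋃ I ∈ P, Set.Icc I.1 I.2) : IsCompact h := by
  rw [hrep]
  exact P.finite_toSet.isCompact_biUnion (fun I _ => isCompact_Icc)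

-- the witness lemma: the minimum point of a nonempty intersection is a left endpoint
lemma witness_left_endpoint (T : Finset (Set ℝ)) (hTne : T.Nonempty)
    (rep : Set ℝ → Finset (ℝ × ℝ))
    (hrep : ∀ h ∈ T, h = ⋃ I ∈ rep h, Set.Icc I.1 I.2)
    (hX : (⋂ h ∈ T, (h : Set ℝ)).Nonempty) :
    ∃ y : ℝ, (∀ h ∈ T, y ∈ h) ∧ ∃ h ∈ T, ∃ I ∈ rep h, I.1 = y := by
  classical
  set X := ⋂ h ∈ T, (h : Set ℝ) with hXdef
  obtain ⟨h₀, hh₀⟩ := hTne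
  have hcomp : ∀ h ∈ T, IsCompact h := fun h hh => member_isCompact (d := 0) (hrep h hh)
  have hXclosed : IsClosed X := by
    refine isClosed_biInter fun h hh => (hcomp h hh).isClosed
  have hXsub : X ⊆ h₀ := Set.biInter_subset_of_mem hh₀
  have hXcomp : IsCompact X := (hcomp h₀ hh₀).of_isClosed_subset hXclosed hXsub
  set y := sInf X with hy
  have hyX : y ∈ X := hXcomp.sInf_mem hX
  have hymem : ∀ h ∈ T, y ∈ h := fun h hh => (Set.mem_iInter₂.1 hyX) h hh
  refine ⟨y, hymem, ?_⟩
  by_contra hno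
  push_neg at hno
  have hpick : ∀ h ∈ T, ∃ I ∈ rep h, y ∈ Set.Icc I.1 I.2 := by
    intro h hh
    have hmemh := hymem h hh
    rw [hrep h hh] at hmemh
    obtain ⟨I, hI, hyI⟩ := Set.mem_iUnion₂.1 hmemh
    exact ⟨I, hI, hyI⟩
  choose! pick hpick1 hpick2 using hpick
  obtain ⟨h₁, hh₁, hmax⟩ := T.exists_max_image (fun h => (pick h).1) ⟨h₀, hh₀⟩
  set z := (pick h₁).1 with hz
  have hzy : z < y := by
    have h1 : (pick h₁).1 ≤ y := (hpick2 h₁ hh₁).1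
    have h2 : (pick h₁).1 ≠ y := hno h₁ hh₁ (pick h₁) (hpick1 h₁ hh₁)
    exact lt_of_le_of_ne h1 h2
  have hzX : z ∈ X := by
    rw [hXdef]
    rw [Set.mem_iInter₂]
    intro h hh
    have hsub : Set.Icc (pick h).1 (pick h).2 ⊆ h := by
      intro x hx
      rw [hrep h hh]
      exact Set.mem_biUnion (hpick1 h hh) hx
    refine hsub ⟨hmax h hh, ?_⟩
    exact le_trans (le_of_lt hzy) (hpick2 h hh).2
  have : y ≤ z := csInf_le hXcomp.bddBelow hzX
  linarith

open scoped Classical in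
lemma matching_bound (p q d : ℕ) (hq : 2 ≤ q) (hqp : q ≤ p) (hd : 1 ≤ d)
    (H : Finset (Set ℝ)) (hprop : HasPQProperty H p q)
    (rep : Set ℝ → Finset (ℝ × ℝ))
    (hrepc : ∀ h ∈ H, (rep h).card ≤ d)
    (hrepe : ∀ h ∈ H, h = ⋃ I ∈ rep h, Set.Icc I.1 I.2)
    (A : Finset ℝ) (hArep : ∀ h ∈ H, ∀ I ∈ rep h, I.1 ∈ A)
    (hAh : ∀ h ∈ H, ∃ a ∈ A, a ∈ h)
    (m : Set ℝ → ℝ) (hm0 : ∀ h, 0 ≤ m h)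
    (hmA : ∀ a ∈ A, ∑ h ∈ H.filter (fun h => a ∈ h), m h ≤ 1) :
    ∑ h ∈ H, m h ≤ max (2 * (p:ℝ)^2) (((2*d*q*(p.choose q) : ℕ) : ℝ) ^ (1/((q:ℝ)-1))) := by
  by_contra hM
  push_neg at hM
  set M := ∑ h ∈ H, m h with hMdef
  have hq1 : (1:ℝ) ≤ (q:ℝ) - 1 := by
    have : (2:ℝ) ≤ (q:ℝ) := by exact_mod_cast hq
    linarith
  have hp2 : (2:ℝ) ≤ (p:ℝ) := by exact_mod_cast le_trans hq hqp
  have hp0 : 0 < (p:ℝ) := by linarith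
  have hM2p : 2 * (p:ℝ)^2 < M := lt_of_le_of_lt (le_max_left _ _) hM
  have hMpos : 0 < M := by nlinarith
  have hMp : (p:ℝ) ≤ M := by nlinarith
  have hm1 : ∀ h ∈ H, m h ≤ 1 := by
    intro h hh
    obtain ⟨a, ha, hah⟩ := hAh h hh
    have h1 : m h ≤ ∑ h' ∈ H.filter (fun h' => a ∈ h'), m h' :=
      Finset.single_le_sum (fun h' _ => hm0 h') (Finset.mem_filter.2 ⟨hh, hah⟩)
    exact le_trans h1 (hmA a ha)
  set Int := (H.powersetCard q).filter (fun T => (⋂ h ∈ T, (h : Set ℝ)).Nonempty) with hInt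
  -- Step 1 : upper bound on the weight of intersecting q-tuples
  have hup : ∑ T ∈ Int, ∏ h ∈ T, m h ≤ (d : ℝ) * M * (1 / (Nat.factorial (q-1) : ℝ)) := by
    have hq1fpos : (0:ℝ) < (Nat.factorial (q-1) : ℝ) := by positivity
    have hex : ∀ T, T ∈ Int → ∃ pa : Set ℝ × ℝ, pa.1 ∈ T ∧ (∀ h ∈ T, pa.2 ∈ h) ∧
        ∃ I ∈ rep pa.1, I.1 = pa.2 := by
      intro T hT
      rw [hInt] at hT
      obtain ⟨hT1, hT2⟩ := Finset.mem_filter.1 hT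
      obtain ⟨hTH, hTq⟩ := Finset.mem_powersetCard.1 hT1
      have hTne : T.Nonempty := by
        rw [← Finset.card_pos, hTq]; omega
      obtain ⟨y, hy1, h₁, hh₁, I, hI, hIy⟩ := witness_left_endpoint T hTne rep
        (fun h hh => hrepe h (hTH hh)) hT2
      exact ⟨(h₁, y), hh₁, hy1, I, hI, hIy⟩
    set gg : Finset (Set ℝ) → Set ℝ × ℝ := fun T =>
      if hT : T ∈ Int then (hex T hT).choose else (∅, 0) with hgg
    have hgg1 : ∀ T ∈ Int, (gg T).1 ∈ T := by
      intro T hT; rw [hgg]; simp only [hT, dif_pos]; exact (hex T hT).choose_spec.1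
    have hgg2 : ∀ T ∈ Int, ∀ h ∈ T, (gg T).2 ∈ h := by
      intro T hT; rw [hgg]; simp only [hT, dif_pos]; exact (hex T hT).choose_spec.2.1
    have hgg3 : ∀ T ∈ Int, ∃ I ∈ rep (gg T).1, I.1 = (gg T).2 := by
      intro T hT; rw [hgg]; simp only [hT, dif_pos]; exact (hex T hT).choose_spec.2.2
    have hTsubH : ∀ T ∈ Int, T ⊆ H := by
      intro T hT
      rw [hInt] at hT
      exact (Finset.mem_powersetCard.1 (Finset.mem_filter.1 hT).1).1
    have hTcard : ∀ T ∈ Int, T.card = q := by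
      intro T hT
      rw [hInt] at hT
      exact (Finset.mem_powersetCard.1 (Finset.mem_filter.1 hT).1).2
    have hmaps : ∀ T ∈ Int, gg T ∈ H ×ˢ A := by
      intro T hT
      refine Finset.mem_product.2 ⟨hTsubH T hT (hgg1 T hT), ?_⟩
      obtain ⟨I, hI, hIe⟩ := hgg3 T hT
      rw [← hIe]
      exact hArep _ (hTsubH T hT (hgg1 T hT)) I hI
    have htotal : ∑ T ∈ Int, ∏ h ∈ T, m h
        = ∑ pa ∈ H ×ˢ A, ∑ T ∈ Int.filter (fun T => gg T = pa), ∏ h ∈ T, m h :=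
      (Finset.sum_fiberwise_of_maps_to hmaps _).symm
    rw [htotal]
    have hfiber : ∀ pa ∈ H ×ˢ A, ∑ T ∈ Int.filter (fun T => gg T = pa), ∏ h ∈ T, m h
        ≤ (if pa.2 ∈ (rep pa.1).image Prod.fst
            then m pa.1 * (1 / (Nat.factorial (q-1) : ℝ)) else 0) := by
      intro pa hpa
      by_cases hmem : pa.2 ∈ (rep pa.1).image Prod.fst
      · rw [if_pos hmem]
        have hfb : ∀ T ∈ Int.filter (fun T => gg T = pa),
            ∏ h ∈ T, m h = m pa.1 * ∏ h ∈ T.erase pa.1, m h := by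
          intro T hT
          obtain ⟨hT1, hT2⟩ := Finset.mem_filter.1 hT
          have hpaT : pa.1 ∈ T := by rw [← hT2]; exact hgg1 T hT1
          exact (Finset.mul_prod_erase T m hpaT).symm
        rw [Finset.sum_congr rfl hfb, ← Finset.mul_sum]
        refine mul_le_mul_of_nonneg_left ?_ (hm0 pa.1)
        have hinjsum : ∑ T ∈ Int.filter (fun T => gg T = pa), ∏ h ∈ T.erase pa.1, m h
            = ∑ S ∈ (Int.filter (fun T => gg T = pa)).image (fun T => T.erase pa.1),
                ∏ h ∈ S, m h := by
          rw [Finset.sum_image ?_]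
          intro T1 h1 T2 h2 heq
          obtain ⟨h11, h12⟩ := Finset.mem_filter.1 h1
          obtain ⟨h21, h22⟩ := Finset.mem_filter.1 h2
          have e1 : pa.1 ∈ T1 := by rw [← h12]; exact hgg1 T1 h11
          have e2 : pa.1 ∈ T2 := by rw [← h22]; exact hgg1 T2 h21
          rw [← Finset.insert_erase e1, ← Finset.insert_erase e2]; simp only at heq; rw [heq]
        rw [hinjsum]
        have hsub : (Int.filter (fun T => gg T = pa)).image (fun T => T.erase pa.1)
            ⊆ (H.filter (fun h => pa.2 ∈ h)).powersetCard (q-1) := by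
          intro S hS
          obtain ⟨T, hT, rfl⟩ := Finset.mem_image.1 hS
          obtain ⟨hT1, hT2⟩ := Finset.mem_filter.1 hT
          refine Finset.mem_powersetCard.2 ⟨?_, ?_⟩
          · intro x hx
            obtain ⟨hxne, hxT⟩ := Finset.mem_erase.1 hx
            refine Finset.mem_filter.2 ⟨hTsubH T hT1 hxT, ?_⟩
            have := hgg2 T hT1 x hxT
            rw [hT2] at this
            exact this
          · rw [Finset.card_erase_of_mem (by rw [← hT2]; exact hgg1 T hT1), hTcard T hT1]
        have hmono := Finset.sum_le_sum_of_subset_of_nonneg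
          (f := fun S => ∏ h ∈ S, m h) hsub
          (fun S hS _ => Finset.prod_nonneg fun x hx => hm0 x)
        refine le_trans hmono ?_
        have hfac := factorial_mul_esym_le m (q-1) (H.filter (fun h => pa.2 ∈ h))
          (fun x _ => hm0 x)
        have hA2 : pa.2 ∈ A := (Finset.mem_product.1 hpa).2
        have hsum1 : ∑ x ∈ H.filter (fun h => pa.2 ∈ h), m x ≤ 1 := hmA pa.2 hA2
        have hsumnn : 0 ≤ ∑ x ∈ H.filter (fun h => pa.2 ∈ h), m x :=
          Finset.sum_nonneg (fun x _ => hm0 x)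
        have hpow1 : (∑ x ∈ H.filter (fun h => pa.2 ∈ h), m x) ^ (q-1) ≤ 1 :=
          pow_le_one₀ hsumnn hsum1
        show esym (H.filter (fun h => pa.2 ∈ h)) m (q-1) ≤ 1 / (Nat.factorial (q-1) : ℝ)
        rw [le_div_iff₀ hq1fpos]
        calc esym (H.filter (fun h => pa.2 ∈ h)) m (q-1) * (Nat.factorial (q-1) : ℝ)
            = (Nat.factorial (q-1) : ℝ) * esym (H.filter (fun h => pa.2 ∈ h)) m (q-1) := by
              ring
          _ ≤ (∑ x ∈ H.filter (fun h => pa.2 ∈ h), m x) ^ (q-1) := hfac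
          _ ≤ 1 := hpow1
      · rw [if_neg hmem]
        have hempty : Int.filter (fun T => gg T = pa) = ∅ := by
          rw [Finset.filter_eq_empty_iff]
          intro T hT heq
          obtain ⟨I, hI, hIe⟩ := hgg3 T hT
          rw [heq] at hI hIe
          exact hmem (Finset.mem_image.2 ⟨I, hI, hIe⟩)
        rw [hempty, Finset.sum_empty]
    refine le_trans (Finset.sum_le_sum hfiber) ?_
    rw [Finset.sum_product]
    have hinner : ∀ h ∈ H, (∑ a ∈ A, if a ∈ (rep h).image Prod.fst
          then m h * (1 / (Nat.factorial (q-1) : ℝ)) else 0)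
        ≤ (d:ℝ) * (m h * (1 / (Nat.factorial (q-1) : ℝ))) := by
      intro h hh
      rw [← Finset.sum_filter, Finset.sum_const, nsmul_eq_mul]
      have hcard : (A.filter (fun a => a ∈ (rep h).image Prod.fst)).card ≤ d := by
        refine le_trans (Finset.card_le_card (fun a ha => (Finset.mem_filter.1 ha).2)) ?_
        exact le_trans Finset.card_image_le (hrepc h hh)
      refine mul_le_mul_of_nonneg_right ?_ (mul_nonneg (hm0 h) (by positivity))
      exact_mod_cast hcard
    refine le_trans (Finset.sum_le_sum hinner) ?_
    have heq : ∑ h ∈ H, (d:ℝ) * (m h * (1 / (Nat.factorial (q-1) : ℝ)))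
        = (d : ℝ) * M * (1 / (Nat.factorial (q-1) : ℝ)) := by
      rw [← Finset.mul_sum, ← Finset.sum_mul, hMdef]
      ring
    rw [heq]
  -- Step 2 : lower bound coming from the (p,q) property
  have hlow : esym H m p ≤ (∑ T ∈ Int, ∏ h ∈ T, m h) * (M ^ (p - q) / (Nat.factorial (p-q) : ℝ)) := by
    have hchoice : ∀ S, S ∈ H.powersetCard p → ∃ T, T ⊆ S ∧ T.card = q ∧
        (⋂ h ∈ T, (h : Set ℝ)).Nonempty := fun S hS =>
      hprop S (Finset.mem_powersetCard.1 hS).1 (Finset.mem_powersetCard.1 hS).2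
    set τ : Finset (Set ℝ) → Finset (Set ℝ) := fun S =>
      if hS : S ∈ H.powersetCard p then (hchoice S hS).choose else ∅ with hτ
    have hτ1 : ∀ S ∈ H.powersetCard p, τ S ⊆ S := by
      intro S hS; rw [hτ]; simp only [hS, dif_pos]; exact (hchoice S hS).choose_spec.1
    have hτ2 : ∀ S ∈ H.powersetCard p, (τ S).card = q := by
      intro S hS; rw [hτ]; simp only [hS, dif_pos]; exact (hchoice S hS).choose_spec.2.1
    have hτ3 : ∀ S ∈ H.powersetCard p, (⋂ h ∈ τ S, (h : Set ℝ)).Nonempty := by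
      intro S hS; rw [hτ]; simp only [hS, dif_pos]; exact (hchoice S hS).choose_spec.2.2
    have hmaps : ∀ S ∈ H.powersetCard p, τ S ∈ Int := by
      intro S hS
      rw [hInt]
      refine Finset.mem_filter.2 ⟨Finset.mem_powersetCard.2 ⟨?_, hτ2 S hS⟩, hτ3 S hS⟩
      exact (hτ1 S hS).trans (Finset.mem_powersetCard.1 hS).1
    have htotal : esym H m p = ∑ T ∈ Int, ∑ S ∈ (H.powersetCard p).filter (fun S => τ S = T),
        ∏ h ∈ S, m h := (Finset.sum_fiberwise_of_maps_to hmaps _).symm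
    rw [htotal, Finset.sum_mul]
    refine Finset.sum_le_sum ?_
    intro T hT
    have hfb : ∀ S ∈ (H.powersetCard p).filter (fun S => τ S = T),
        ∏ h ∈ S, m h = (∏ h ∈ T, m h) * ∏ h ∈ S \ T, m h := by
      intro S hS
      obtain ⟨hS1, hS2⟩ := Finset.mem_filter.1 hS
      have hTS : T ⊆ S := by rw [← hS2]; exact hτ1 S hS1
      rw [← Finset.prod_sdiff hTS]; ring
    rw [Finset.sum_congr rfl hfb, ← Finset.mul_sum]
    refine mul_le_mul_of_nonneg_left ?_ (Finset.prod_nonneg fun x _ => hm0 x)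
    have hinjsum : ∑ S ∈ (H.powersetCard p).filter (fun S => τ S = T), ∏ h ∈ S \ T, m h
        = ∑ S' ∈ ((H.powersetCard p).filter (fun S => τ S = T)).image (fun S => S \ T),
            ∏ h ∈ S', m h := by
      rw [Finset.sum_image ?_]
      intro S1 h1 S2 h2 heq
      obtain ⟨h11, h12⟩ := Finset.mem_filter.1 h1
      obtain ⟨h21, h22⟩ := Finset.mem_filter.1 h2
      have e1 : T ⊆ S1 := by rw [← h12]; exact hτ1 S1 h11
      have e2 : T ⊆ S2 := by rw [← h22]; exact hτ1 S2 h21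
      rw [← Finset.sdiff_union_of_subset e1, ← Finset.sdiff_union_of_subset e2]; simp only at heq; rw [heq]
    rw [hinjsum]
    have hsub : ((H.powersetCard p).filter (fun S => τ S = T)).image (fun S => S \ T)
        ⊆ H.powersetCard (p - q) := by
      intro S' hS'
      obtain ⟨S, hS, rfl⟩ := Finset.mem_image.1 hS'
      obtain ⟨hS1, hS2⟩ := Finset.mem_filter.1 hS
      obtain ⟨hSH, hScard⟩ := Finset.mem_powersetCard.1 hS1
      have hTS : T ⊆ S := by rw [← hS2]; exact hτ1 S hS1
      refine Finset.mem_powersetCard.2 ⟨(Finset.sdiff_subset).trans hSH, ?_⟩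
      rw [Finset.card_sdiff_of_subset hTS, hScard]
      have hTq : T.card = q := by rw [← hS2]; exact hτ2 S hS1
      rw [hTq]
    have hmono : ∑ S' ∈ ((H.powersetCard p).filter (fun S => τ S = T)).image (fun S => S \ T),
        ∏ h ∈ S', m h ≤ esym H m (p - q) :=
      Finset.sum_le_sum_of_subset_of_nonneg hsub (fun S' hS' _ =>
        Finset.prod_nonneg fun x hx => hm0 x)
    refine le_trans hmono ?_
    have hfac := factorial_mul_esym_le m (p - q) H (fun x _ => hm0 x)
    have hpos : (0:ℝ) < (Nat.factorial (p-q) : ℝ) := by positivity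
    rw [le_div_iff₀ hpos]
    calc esym H m (p-q) * (Nat.factorial (p-q) : ℝ)
        = (Nat.factorial (p-q) : ℝ) * esym H m (p-q) := by ring
      _ ≤ M ^ (p - q) := hfac
  -- Step 3 : the falling factorial lower bound and Bernoulli
  have hff : M ^ p / 2 ≤ (Nat.factorial p : ℝ) * esym H m p := by
    have h1 : ∏ j ∈ Finset.range p, (M - j) ≤ (Nat.factorial p : ℝ) * esym H m p :=
      ff_le_factorial_mul_esym m p H (fun x _ => hm0 x) hm1 hMp
    have h2 : (M - p)^p ≤ ∏ j ∈ Finset.range p, (M - j) := by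
      have := Finset.prod_le_prod (s := Finset.range p) (f := fun _ : ℕ => M - (p:ℝ))
        (g := fun j : ℕ => M - (j:ℝ)) (fun j _ => by linarith) (fun j hj => by
          have : (j : ℝ) ≤ (p : ℝ) := by
            exact_mod_cast le_of_lt (Finset.mem_range.1 hj)
          linarith)
      rwa [Finset.prod_const, Finset.card_range] at this
    have h3 : M ^ p / 2 ≤ (M - p)^p := by
      have hMne : M ≠ 0 := ne_of_gt hMpos
      have hfrac : (p:ℝ)/M ≤ 2 := by
        rw [div_le_iff₀ hMpos]; nlinarith
      have hb : 1 - (p:ℝ)^2/M ≤ (1 - (p:ℝ)/M)^p := by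
        have := one_add_mul_le_pow (a := -((p:ℝ)/M)) (by linarith) p
        have heq : 1 + (p:ℝ) * -((p:ℝ)/M) = 1 - (p:ℝ)^2/M := by ring
        rw [heq] at this
        have heq2 : (1 + -((p:ℝ)/M)) = 1 - (p:ℝ)/M := by ring
        rwa [heq2] at this
      have hhalf : (1:ℝ)/2 ≤ 1 - (p:ℝ)^2/M := by
        have : (p:ℝ)^2/M ≤ 1/2 := by
          rw [div_le_iff₀ hMpos]; nlinarith
        linarith
      have h4 : (M - p)^p = M^p * (1 - (p:ℝ)/M)^p := by
        rw [← mul_pow]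
        congr 1
        field_simp
      rw [h4]
      have h5 : M^p * (1/2) ≤ M^p * (1 - (p:ℝ)/M)^p := by
        refine mul_le_mul_of_nonneg_left ?_ (by positivity)
        linarith
      linarith
    linarith
  -- Step 4 : combine and derive a contradiction
  have hIntnn : 0 ≤ ∑ T ∈ Int, ∏ h ∈ T, m h :=
    Finset.sum_nonneg fun T _ => Finset.prod_nonneg fun x _ => hm0 x
  have hcomb : M ^ p / 2 ≤ (Nat.factorial p : ℝ) *
      ((d : ℝ) * M * (1 / (Nat.factorial (q-1) : ℝ))) *
      (M ^ (p - q) / (Nat.factorial (p-q) : ℝ)) := by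
    have c1 : (Nat.factorial p : ℝ) * esym H m p ≤ (Nat.factorial p : ℝ) *
        ((∑ T ∈ Int, ∏ h ∈ T, m h) * (M ^ (p - q) / (Nat.factorial (p-q) : ℝ))) :=
      mul_le_mul_of_nonneg_left hlow (by positivity)
    have c2 : (∑ T ∈ Int, ∏ h ∈ T, m h) * (M ^ (p - q) / (Nat.factorial (p-q) : ℝ))
        ≤ ((d : ℝ) * M * (1 / (Nat.factorial (q-1) : ℝ)))
          * (M ^ (p - q) / (Nat.factorial (p-q) : ℝ)) := by
      refine mul_le_mul_of_nonneg_right hup (by positivity)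
    have c3 := mul_le_mul_of_nonneg_left c2 (show (0:ℝ) ≤ (Nat.factorial p : ℝ) by positivity)
    calc M ^ p / 2 ≤ (Nat.factorial p : ℝ) * esym H m p := hff
      _ ≤ _ := c1
      _ = (Nat.factorial p : ℝ) * ((∑ T ∈ Int, ∏ h ∈ T, m h)
            * (M ^ (p - q) / (Nat.factorial (p-q) : ℝ))) := rfl
      _ ≤ (Nat.factorial p : ℝ) * (((d : ℝ) * M * (1 / (Nat.factorial (q-1) : ℝ)))
            * (M ^ (p - q) / (Nat.factorial (p-q) : ℝ))) := c3
      _ = _ := by ring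
  have hfact : (Nat.factorial p : ℝ)
      = (q : ℝ) * (p.choose q : ℝ) * (Nat.factorial (q-1) : ℝ) * (Nat.factorial (p-q) : ℝ) := by
    have h1 : p.choose q * Nat.factorial q * Nat.factorial (p - q) = Nat.factorial p :=
      Nat.choose_mul_factorial_mul_factorial hqp
    have h2 : Nat.factorial q = q * Nat.factorial (q-1) := by
      conv_lhs => rw [show q = (q-1)+1 by omega]
      rw [Nat.factorial_succ]
      congr 1
      omega
    rw [← h1, h2]
    push_cast
    ring
  have hM1 : M^p ≤ 2*(d:ℝ)*(q:ℝ)*(p.choose q:ℝ)*(M^(p-q)*M) := by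
    have hq1f : (Nat.factorial (q-1):ℝ) ≠ 0 := by positivity
    have hpqf : (Nat.factorial (p-q):ℝ) ≠ 0 := by positivity
    have hsimp : (Nat.factorial p : ℝ) *
        ((d : ℝ) * M * (1 / (Nat.factorial (q-1) : ℝ))) *
        (M ^ (p - q) / (Nat.factorial (p-q) : ℝ))
        = (q : ℝ) * (p.choose q : ℝ) * (d:ℝ) * (M^(p-q)*M) := by
      rw [hfact]
      field_simp
    rw [hsimp] at hcomb
    linarith
  have hsplit : M^p = M^(q-1) * (M^(p-q)*M) := by
    rw [← pow_succ, ← pow_add]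
    congr 1
    omega
  have hMq1 : M^(q-1) ≤ 2*(d:ℝ)*(q:ℝ)*(p.choose q:ℝ) := by
    have hpow : (0:ℝ) < M^(p-q)*M := by positivity
    rw [hsplit] at hM1
    exact (mul_le_mul_iff_of_pos_right hpow).1 hM1
  have hcast : ((2*d*q*(p.choose q) : ℕ) : ℝ) = 2*(d:ℝ)*(q:ℝ)*(p.choose q:ℝ) := by
    push_cast; ring
  have hle : M ≤ ((2*d*q*(p.choose q) : ℕ) : ℝ) ^ (1/((q:ℝ)-1)) := by
    have hexp : ((q-1:ℕ):ℝ) * (1/((q:ℝ)-1)) = 1 := by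
      have hc : ((q-1:ℕ):ℝ) = (q:ℝ)-1 := by
        have : 1 ≤ q := by omega
        push_cast [Nat.cast_sub this]
        ring
      rw [hc]
      field_simp
    have h1 : M = (M^((q-1:ℕ))) ^ ((1:ℝ)/((q:ℝ)-1)) := by
      rw [← Real.rpow_natCast M (q-1), ← Real.rpow_mul hMpos.le, hexp, Real.rpow_one]
    rw [h1, hcast]
    exact Real.rpow_le_rpow (by positivity) hMq1 (by positivity)
  have hfin := lt_of_le_of_lt (le_max_right (2 * (p:ℝ)^2)
    (((2*d*q*(p.choose q) : ℕ) : ℝ) ^ (1/((q:ℝ)-1)))) hM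
  linarith

open scoped Classical in
lemma rounding (d : ℕ) (hd : 1 ≤ d) (H : Finset (Set ℝ))
    (rep : Set ℝ → Finset (ℝ × ℝ))
    (hrepc : ∀ h ∈ H, (rep h).card ≤ d)
    (hrepe : ∀ h ∈ H, h = ⋃ I ∈ rep h, Set.Icc I.1 I.2)
    (A : Finset ℝ) (c : ℝ → ℝ) (hc0 : ∀ x, 0 ≤ c x)
    (hcov : ∀ h ∈ H, 1 ≤ ∑ a ∈ A.filter (fun a => a ∈ h), c a) :
    ∃ C : Finset ℝ, (∀ h ∈ H, ∃ x ∈ C, x ∈ h) ∧ (C.card : ℝ) ≤ d * ∑ a ∈ A, c a := by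
  have hdpos : (0:ℝ) < d := by exact_mod_cast hd
  have heavy : ∀ h, h ∈ H → ∃ I, I ∈ rep h ∧
      1/(d:ℝ) ≤ ∑ a ∈ A.filter (fun a => a ∈ Set.Icc I.1 I.2), c a := by
    intro h hh
    by_contra hno
    push_neg at hno
    have hchain : ∑ a ∈ A.filter (fun a => a ∈ h), c a
        ≤ ∑ I ∈ rep h, ∑ a ∈ A.filter (fun a => a ∈ Set.Icc I.1 I.2), c a := by
      rw [Finset.sum_filter]
      have hswap : ∑ I ∈ rep h, ∑ a ∈ A.filter (fun a => a ∈ Set.Icc I.1 I.2), c a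
          = ∑ a ∈ A, ∑ I ∈ rep h, (if a ∈ Set.Icc I.1 I.2 then c a else 0) := by
        rw [Finset.sum_comm]
        exact Finset.sum_congr rfl fun I _ => by rw [Finset.sum_filter]
      rw [hswap]
      refine Finset.sum_le_sum fun a _ => ?_
      by_cases hah : a ∈ h
      · have hmem := hah
        rw [hrepe h hh] at hmem
        obtain ⟨I, hI, haI⟩ := Set.mem_iUnion₂.1 hmem
        rw [if_pos hah]
        calc c a = (if a ∈ Set.Icc I.1 I.2 then c a else 0) := by rw [if_pos haI]
          _ ≤ ∑ I ∈ rep h, (if a ∈ Set.Icc I.1 I.2 then c a else 0) :=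
            Finset.single_le_sum (f := fun I => if a ∈ Set.Icc I.1 I.2 then c a else 0)
              (fun I _ => by by_cases hx : a ∈ Set.Icc I.1 I.2 <;> simp [hx, hc0 a]) hI
      · rw [if_neg hah]
        exact Finset.sum_nonneg fun I _ => by
          by_cases hx : a ∈ Set.Icc I.1 I.2 <;> simp [hx, hc0 a]
    by_cases hne : (rep h).Nonempty
    · have hstrict : ∑ I ∈ rep h, ∑ a ∈ A.filter (fun a => a ∈ Set.Icc I.1 I.2), c a
          < ∑ I ∈ rep h, 1/(d:ℝ) :=
        Finset.sum_lt_sum_of_nonempty hne (fun I hI => hno I hI)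
      rw [Finset.sum_const] at hstrict
      have hcardle : ((rep h).card : ℝ) * (1/(d:ℝ)) ≤ 1 := by
        rw [mul_one_div, div_le_one hdpos]
        exact_mod_cast hrepc h hh
      rw [nsmul_eq_mul] at hstrict
      have := hcov h hh
      linarith
    · rw [Finset.not_nonempty_iff_eq_empty] at hne
      rw [hne, Finset.sum_empty] at hchain
      have h1 := hcov h hh
      linarith
  set pick : Set ℝ → ℝ × ℝ := fun h =>
    if hh : h ∈ H then (heavy h hh).choose else (1, 0) with hpick
  have hpick1 : ∀ h ∈ H, pick h ∈ rep h := by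
    intro h hh; rw [hpick]; simp only [hh, dif_pos]; exact (heavy h hh).choose_spec.1
  have hpick2 : ∀ h ∈ H, 1/(d:ℝ)
      ≤ ∑ a ∈ A.filter (fun a => a ∈ Set.Icc (pick h).1 (pick h).2), c a := by
    intro h hh; rw [hpick]; simp only [hh, dif_pos]; exact (heavy h hh).choose_spec.2
  have hpickne : ∀ h ∈ H, (pick h).1 ≤ (pick h).2 := by
    intro h hh
    by_contra hlt
    have : A.filter (fun a => a ∈ Set.Icc (pick h).1 (pick h).2) = ∅ := by
      refine Finset.filter_eq_empty_iff.2 fun a _ => ?_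
      rw [Set.Icc_eq_empty hlt]
      simp
    have h2 := hpick2 h hh
    rw [this, Finset.sum_empty] at h2
    have : (0:ℝ) < 1/(d:ℝ) := by positivity
    linarith
  set F : Finset (ℝ × ℝ) := H.image pick with hF
  obtain ⟨C, D, hDF, hdisj, hcard, hcov'⟩ := greedy_intervals F
  refine ⟨C, ?_, ?_⟩
  · intro h hh
    have hmemF : pick h ∈ F := Finset.mem_image.2 ⟨h, hh, rfl⟩
    obtain ⟨x, hxC, hxI⟩ := hcov' (pick h) hmemF (hpickne h hh)
    refine ⟨x, hxC, ?_⟩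
    rw [hrepe h hh]
    exact Set.mem_biUnion (hpick1 h hh) hxI
  · have hDprop : ∀ J ∈ D, 1/(d:ℝ) ≤ ∑ a ∈ A.filter (fun a => a ∈ Set.Icc J.1 J.2), c a := by
      intro J hJ
      obtain ⟨h, hh, rfl⟩ := Finset.mem_image.1 (hDF hJ)
      exact hpick2 h hh
    have hpd : Set.PairwiseDisjoint (D : Set (ℝ × ℝ))
        (fun J => A.filter (fun a => a ∈ Set.Icc J.1 J.2)) := by
      intro J hJ J' hJ' hne
      refine Finset.disjoint_left.2 fun a ha ha' => ?_
      have h1 := (Finset.mem_filter.1 ha).2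
      have h2 := (Finset.mem_filter.1 ha').2
      exact Set.disjoint_left.1 (hdisj J hJ J' hJ' hne) h1 h2
    have hsumD : ∑ J ∈ D, ∑ a ∈ A.filter (fun a => a ∈ Set.Icc J.1 J.2), c a
        ≤ ∑ a ∈ A, c a := by
      rw [← Finset.sum_biUnion hpd]
      refine Finset.sum_le_sum_of_subset_of_nonneg ?_ (fun a _ _ => hc0 a)
      intro a ha
      obtain ⟨J, hJ, haJ⟩ := Finset.mem_biUnion.1 ha
      exact (Finset.mem_filter.1 haJ).1
    have hlower : (D.card : ℝ) * (1/(d:ℝ))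
        ≤ ∑ J ∈ D, ∑ a ∈ A.filter (fun a => a ∈ Set.Icc J.1 J.2), c a := by
      calc (D.card : ℝ) * (1/(d:ℝ)) = ∑ _J ∈ D, 1/(d:ℝ) := by
            rw [Finset.sum_const, nsmul_eq_mul]
        _ ≤ _ := Finset.sum_le_sum hDprop
    have hDbound : (D.card : ℝ) ≤ d * ∑ a ∈ A, c a := by
      have h1 : (D.card : ℝ) * (1/(d:ℝ)) ≤ ∑ a ∈ A, c a := le_trans hlower hsumD
      rw [mul_one_div] at h1
      rw [div_le_iff₀ hdpos] at h1
      linarith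
    calc (C.card : ℝ) ≤ (D.card : ℝ) := by exact_mod_cast hcard
      _ ≤ d * ∑ a ∈ A, c a := hDbound

lemma numerics (p q d : ℕ) (hq : 2 ≤ q) (hqp : q ≤ p) (hd : 1 ≤ d) :
    (d : ℝ) * max (2*(p:ℝ)^2) (((2*d*q*(p.choose q) : ℕ) : ℝ) ^ (1/((q:ℝ)-1)))
      ≤ max ((2:ℝ) ^ (1 / ((q : ℝ) - 1)) * (Real.exp 1 * p) ^ ((q : ℝ) / ((q : ℝ) - 1)) / q
          * (d : ℝ) ^ ((q : ℝ) / ((q : ℝ) - 1)) + d)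
        (2 * (p : ℝ) ^ 2 * d) := by
  have hdpos : (0:ℝ) < d := by exact_mod_cast hd
  have hq2 : (2:ℝ) ≤ (q:ℝ) := by exact_mod_cast hq
  have hq1pos : (0:ℝ) < (q:ℝ) - 1 := by linarith
  have hqpos : (0:ℝ) < (q:ℝ) := by linarith
  have hppos : (0:ℝ) < (p:ℝ) := by
    have : (2:ℕ) ≤ p := le_trans hq hqp
    have : (2:ℝ) ≤ (p:ℝ) := by exact_mod_cast this
    linarith
  set e1 : ℝ := 1/((q:ℝ)-1) with he1
  have he1pos : 0 < e1 := by positivity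
  set E : ℝ := Real.exp 1 * p with hE
  have hEpos : 0 < E := mul_pos (Real.exp_pos 1) hppos
  rw [mul_max_of_nonneg _ _ (le_of_lt hdpos)]
  refine max_le (le_max_of_le_right (le_of_eq (by ring))) (le_max_of_le_left ?_)
  -- main branch
  set X : ℝ := ((2*d*q*(p.choose q) : ℕ) : ℝ) with hX
  have hXcast : X = 2*(d:ℝ)*((q:ℝ)*(p.choose q : ℝ)) := by
    rw [hX]; push_cast; ring
  have hqfpos : (0:ℝ) < (q.factorial : ℝ) := by positivity
  -- step 1 : q^q * choose ≤ E^q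
  have step1 : (q:ℝ)^q * (p.choose q : ℝ) ≤ E^q := by
    have hseries : (q:ℝ)^q / (q.factorial:ℝ) ≤ Real.exp q := by
      have hsum := Real.sum_le_exp_of_nonneg (x := (q:ℝ)) (by positivity) (q+1)
      refine le_trans ?_ hsum
      exact Finset.single_le_sum (f := fun i => (q:ℝ)^i/(i.factorial:ℝ))
        (fun i _ => by positivity) (Finset.self_mem_range_succ q)
    have hexp : Real.exp (q:ℝ) = Real.exp 1 ^ q := by
      rw [← Real.exp_one_rpow (q:ℝ), Real.rpow_natCast]
    have hqq : (q:ℝ)^q ≤ Real.exp 1 ^ q * (q.factorial:ℝ) := by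
      rw [div_le_iff₀ hqfpos] at hseries
      rw [← hexp]
      exact hseries
    have hdesc : (q.factorial : ℝ) * (p.choose q : ℝ) ≤ (p:ℝ)^q := by
      have h1 : (q.factorial * p.choose q : ℕ) ≤ p^q := by
        rw [← Nat.descFactorial_eq_factorial_mul_choose]
        exact Nat.descFactorial_le_pow p q
      exact_mod_cast h1
    have hchoose_nn : (0:ℝ) ≤ (p.choose q : ℝ) := by positivity
    calc (q:ℝ)^q * (p.choose q : ℝ)
        ≤ (Real.exp 1 ^ q * (q.factorial:ℝ)) * (p.choose q : ℝ) :=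
          mul_le_mul_of_nonneg_right hqq hchoose_nn
      _ = Real.exp 1 ^ q * ((q.factorial:ℝ) * (p.choose q : ℝ)) := by ring
      _ ≤ Real.exp 1 ^ q * (p:ℝ)^q :=
          mul_le_mul_of_nonneg_left hdesc (by positivity)
      _ = E^q := by rw [hE, mul_pow]
  -- step 2
  have step2 : X ≤ 2*(d:ℝ) * (E^q / (q:ℝ)^(q-1)) := by
    rw [hXcast]
    have hqq1pos : (0:ℝ) < (q:ℝ)^(q-1) := by positivity
    refine mul_le_mul_of_nonneg_left ?_ (by positivity)
    rw [le_div_iff₀ hqq1pos]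
    have hqsplit : (q:ℝ) * (p.choose q : ℝ) * (q:ℝ)^(q-1) = (q:ℝ)^q * (p.choose q : ℝ) := by
      have h1 : (q:ℝ) * (q:ℝ)^(q-1) = (q:ℝ)^q := by
        rw [← pow_succ']
        congr 1
        omega
      calc (q:ℝ) * (p.choose q : ℝ) * (q:ℝ)^(q-1)
          = ((q:ℝ) * (q:ℝ)^(q-1)) * (p.choose q : ℝ) := by ring
        _ = (q:ℝ)^q * (p.choose q : ℝ) := by rw [h1]
    rw [hqsplit]
    exact step1
  -- step 3 : take rpow
  have hXnn : (0:ℝ) ≤ X := by rw [hX]; positivity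
  have step3 : X ^ e1 ≤ (2*(d:ℝ) * (E^q / (q:ℝ)^(q-1))) ^ e1 :=
    Real.rpow_le_rpow hXnn step2 (le_of_lt he1pos)
  -- step 4 : expand
  have hexpE : ((E^q : ℝ)) ^ e1 = E ^ ((q:ℝ)/((q:ℝ)-1)) := by
    rw [← Real.rpow_natCast E q, ← Real.rpow_mul (le_of_lt hEpos)]
    congr 1
    rw [he1]
    field_simp
  have hexpQ : (((q:ℝ)^(q-1) : ℝ)) ^ e1 = (q:ℝ) := by
    rw [← Real.rpow_natCast (q:ℝ) (q-1), ← Real.rpow_mul (le_of_lt hqpos)]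
    have hcast : ((q-1:ℕ):ℝ) = (q:ℝ) - 1 := by
      have h1 : 1 ≤ q := by omega
      push_cast [Nat.cast_sub h1]
      ring
    rw [hcast, he1]
    rw [mul_one_div, div_self (ne_of_gt hq1pos), Real.rpow_one]
  have step4 : (2*(d:ℝ) * (E^q / (q:ℝ)^(q-1))) ^ e1
      = (2:ℝ)^e1 * (d:ℝ)^e1 * (E ^ ((q:ℝ)/((q:ℝ)-1)) / (q:ℝ)) := by
    rw [Real.mul_rpow (by positivity) (by positivity),
      Real.mul_rpow (by norm_num : (0:ℝ) ≤ 2) (by positivity),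
      Real.div_rpow (by positivity) (by positivity), hexpE, hexpQ]
  -- step 5 : multiply by d
  have hdd : (d:ℝ) * (d:ℝ)^e1 = (d:ℝ) ^ ((q:ℝ)/((q:ℝ)-1)) := by
    nth_rewrite 1 [← Real.rpow_one (d:ℝ)]
    rw [← Real.rpow_add hdpos]
    congr 1
    rw [he1]
    field_simp
    ring
  have step5 : (d:ℝ) * ((2:ℝ)^e1 * (d:ℝ)^e1 * (E ^ ((q:ℝ)/((q:ℝ)-1)) / (q:ℝ)))
      = (2:ℝ)^e1 * E ^ ((q:ℝ)/((q:ℝ)-1)) / (q:ℝ) * (d:ℝ) ^ ((q:ℝ)/((q:ℝ)-1)) := by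
    calc (d:ℝ) * ((2:ℝ)^e1 * (d:ℝ)^e1 * (E ^ ((q:ℝ)/((q:ℝ)-1)) / (q:ℝ)))
        = (2:ℝ)^e1 * E ^ ((q:ℝ)/((q:ℝ)-1)) / (q:ℝ) * ((d:ℝ) * (d:ℝ)^e1) := by ring
      _ = _ := by rw [hdd]
  have hfinal : (d:ℝ) * X ^ e1
      ≤ (2:ℝ)^e1 * E ^ ((q:ℝ)/((q:ℝ)-1)) / (q:ℝ) * (d:ℝ) ^ ((q:ℝ)/((q:ℝ)-1)) := by
    calc (d:ℝ) * X ^ e1 ≤ (d:ℝ) * ((2*(d:ℝ) * (E^q / (q:ℝ)^(q-1))) ^ e1) :=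
          mul_le_mul_of_nonneg_left step3 (le_of_lt hdpos)
      _ = (d:ℝ) * ((2:ℝ)^e1 * (d:ℝ)^e1 * (E ^ ((q:ℝ)/((q:ℝ)-1)) / (q:ℝ))) := by rw [step4]
      _ = _ := step5
  refine le_trans hfinal ?_
  exact le_add_of_nonneg_right (le_of_lt hdpos)

open scoped Classical in
theorem cover_of_pq_property (p q d : ℕ) (hq : 2 ≤ q) (hqp : q ≤ p) (hd : 1 ≤ d)
    (H : Finset (Set ℝ)) (hH : ∀ s ∈ H, IsDInterval d s) (hcard : p ≤ H.card)
    (hprop : HasPQProperty H p q) :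
    (coverNum H : ℝ) ≤ max
      ((2 : ℝ) ^ (1 / ((q : ℝ) - 1)) * (Real.exp 1 * p) ^ ((q : ℝ) / ((q : ℝ) - 1)) / q
        * (d : ℝ) ^ ((q : ℝ) / ((q : ℝ) - 1)) + d)
      (2 * (p : ℝ) ^ 2 * d) := by
  classical
  have hrep' : ∀ h : Set ℝ, ∃ P : Finset (ℝ × ℝ),
      h ∈ H → (P.card ≤ d ∧ h = ⋃ I ∈ P, Set.Icc I.1 I.2) := by
    intro h
    by_cases hh : h ∈ H
    · obtain ⟨ne, P, hP1, hP2⟩ := hH h hh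
      exact ⟨P, fun _ => ⟨hP1, hP2⟩⟩
    · exact ⟨∅, fun h' => absurd h' hh⟩
  choose rep hrep using hrep'
  have hrepc : ∀ h ∈ H, (rep h).card ≤ d := fun h hh => (hrep h hh).1
  have hrepe : ∀ h ∈ H, h = ⋃ I ∈ rep h, Set.Icc I.1 I.2 := fun h hh => (hrep h hh).2
  set A : Finset ℝ := H.biUnion (fun h => (rep h).image Prod.fst) with hA
  have hArep : ∀ h ∈ H, ∀ I ∈ rep h, I.1 ∈ A := fun h hh I hI =>
    Finset.mem_biUnion.2 ⟨h, hh, Finset.mem_image.2 ⟨I, hI, rfl⟩⟩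
  have hAh : ∀ h ∈ H, ∃ a ∈ A, a ∈ h := by
    intro h hh
    obtain ⟨x, hx⟩ := (hH h hh).1
    have hx2 := hx
    rw [hrepe h hh] at hx2
    obtain ⟨I, hI, hxI⟩ := Set.mem_iUnion₂.1 hx2
    refine ⟨I.1, hArep h hh I hI, ?_⟩
    rw [hrepe h hh]
    exact Set.mem_biUnion hI ⟨le_refl I.1, le_trans hxI.1 hxI.2⟩
  set B : ℝ := max (2*(p:ℝ)^2) (((2*d*q*(p.choose q) : ℕ) : ℝ) ^ (1/((q:ℝ)-1))) with hB
  have hmatch : ∀ m : Set ℝ → ℝ, (∀ h, 0 ≤ m h) →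
      (∀ a ∈ A, ∑ h ∈ H.filter (fun h => a ∈ h), m h ≤ 1) → ∑ h ∈ H, m h ≤ B :=
    fun m hm0 hmA =>
      matching_bound p q d hq hqp hd H hprop rep hrepc hrepe A hArep hAh m hm0 hmA
  obtain ⟨c, hc0, hccov, hcB⟩ := lp_duality_s3 H A hAh B hmatch
  obtain ⟨C, hCcov, hCcard⟩ := rounding d hd H rep hrepc hrepe A c hc0 hccov
  have hcn : coverNum H ≤ C.card := Nat.sInf_le ⟨C, rfl, hCcov⟩
  have hcnr : (coverNum H : ℝ) ≤ (C.card : ℝ) := by exact_mod_cast hcn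
  have hdB : (C.card : ℝ) ≤ (d:ℝ) * B := by
    refine le_trans hCcard ?_
    exact mul_le_mul_of_nonneg_left hcB (by positivity)
  exact le_trans hcnr (le_trans hdB (numerics p q d hq hqp hd))
end

section
/- Let p ≥ q ≥ 2 and d ≥ 1 be integers and let H be a finite family of d-intervals with |H| ≥ p. If H satisfies the (p,q) property, then the fractional covering number satisfies τ*(H) ≤ max{ (2^{1/(q-1)} · (e·p)^{q/(q-1)} / q) · d^{1/(q-1)} + 1 , 2·p² }. -/
open Finset

/-- step 1: `q^q ≤ e^q q!` -/
lemma PQ_pow_self_le (q : ℕ) : (q : ℝ) ^ q ≤ Real.exp q * q.factorial := by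
  induction q with
  | zero => simp
  | succ n ih =>
    rcases Nat.eq_zero_or_pos n with h0 | hn
    · subst h0; simpa using Real.one_le_exp (by norm_num : (0:ℝ) ≤ 1)
    · have hnR : (0:ℝ) < n := by exact_mod_cast hn
      have h1 : ((n:ℝ) + 1) ≤ n * Real.exp (1 / n) := by
        have := Real.add_one_le_exp (1 / (n:ℝ))
        calc ((n:ℝ) + 1) = n * (1/n + 1) := by field_simp; ring
        _ ≤ n * Real.exp (1/n) := by nlinarith [Real.add_one_le_exp (1 / (n:ℝ))]
      have h2 : ((n:ℝ) + 1) ^ n ≤ n ^ n * Real.exp 1 := by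
        calc ((n:ℝ)+1)^n ≤ (n * Real.exp (1/n))^n := by
              apply pow_le_pow_left₀ (by positivity) h1
        _ = n^n * Real.exp (1/n) ^ n := by rw [mul_pow]
        _ = n^n * Real.exp 1 := by
              rw [← Real.exp_nat_mul]
              congr 1
              field_simp
      have h3 : ((n:ℝ)+1)^(n+1) = ((n:ℝ)+1)^n * (n+1) := by ring
      calc ((n + 1 : ℕ) : ℝ) ^ (n+1) = ((n:ℝ)+1)^n * ((n:ℝ)+1) := by push_cast; ring
      _ ≤ (n^n * Real.exp 1) * ((n:ℝ)+1) := by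
            apply mul_le_mul_of_nonneg_right h2 (by positivity)
      _ ≤ (Real.exp n * n.factorial * Real.exp 1) * ((n:ℝ)+1) := by
            apply mul_le_mul_of_nonneg_right _ (by positivity)
            apply mul_le_mul_of_nonneg_right ih (by positivity)
      _ = Real.exp (n+1) * ((n+1) * n.factorial) := by
            rw [Real.exp_add]; ring
      _ = Real.exp ((n+1 : ℕ)) * ((n+1 : ℕ).factorial) := by
            rw [Nat.factorial_succ]; push_cast; ring
lemma PQ_choose_bound (p q : ℕ) : (p.choose q : ℝ) * q ^ q ≤ (Real.exp 1 * p) ^ q := by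
  have h1 : (p.choose q : ℝ) ≤ (p:ℝ)^q / q.factorial := Nat.choose_le_pow_div q p
  have hfac : (0:ℝ) < q.factorial := by exact_mod_cast q.factorial_pos
  have h2 := PQ_pow_self_le q
  have hexp : Real.exp 1 ^ q = Real.exp q := by
    rw [← Real.exp_nat_mul]; ring_nf
  calc (p.choose q : ℝ) * q ^ q ≤ ((p:ℝ)^q / q.factorial) * (Real.exp q * q.factorial) := by
        apply mul_le_mul h1 h2 (by positivity) (by positivity)
  _ = (p:ℝ)^q * Real.exp q := by field_simp
  _ = (Real.exp 1 * p) ^ q := by rw [mul_pow, hexp]; ring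


open Classical in
lemma PQ_sum_prod {p : ℕ} {α : Type*} [Fintype α] (ρ : α → ℝ) (c : Fin p → α → ℝ)
    (hρ1 : ∑ a, ρ a = 1) (Q : Finset (Fin p)) (hc : ∀ i ∉ Q, ∀ b, c i b = 1) :
    ∑ f : Fin p → α, ∏ i, (ρ (f i) * c i (f i)) = ∏ i ∈ Q, (∑ b, ρ b * c i b) := by
  classical
  rw [← Fintype.piFinset_univ, ← Finset.prod_univ_sum (fun _ => univ) (fun i b => ρ b * c i b)]
  rw [← Finset.prod_subset (Finset.subset_univ Q)]
  intro i _ hiQ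
  simp only [hc i hiQ, mul_one, hρ1]

open Classical in
lemma PQ_prod_split {p : ℕ} {α : Type*} [Fintype α] (ρ : α → ℝ) (c : Fin p → α → ℝ)
    (Q : Finset (Fin p)) (hc : ∀ i ∉ Q, ∀ b, c i b = 1) (f : Fin p → α) :
    ∏ i, (ρ (f i) * c i (f i)) = (∏ i, ρ (f i)) * ∏ i ∈ Q, c i (f i) := by
  rw [Finset.prod_mul_distrib]
  congr 1
  rw [← Finset.prod_subset (Finset.subset_univ Q)]
  intro i _ hiQ
  exact hc i hiQ (f i)


open Classical in
lemma PQ_core (p q d : ℕ) (hq : 2 ≤ q) (hqp : q ≤ p) (hd : 1 ≤ d)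
    {α : Type*} [Fintype α] (s : α → Set ℝ) (pts : α → Finset ℝ) (X : Finset ℝ)
    (hptsX : ∀ a, pts a ⊆ X) (hcardpts : ∀ a, (pts a).card ≤ d)
    (hptsne : ∀ a, (pts a).Nonempty) (hptsmem : ∀ a, ∀ x ∈ pts a, x ∈ s a)
    (hwit : ∀ f : Fin p → α, Function.Injective f →
      ∃ Q : Finset (Fin p), Q.card = q ∧ ∃ j ∈ Q, ∃ x ∈ pts (f j),
        ∀ i ∈ Q, x ∈ s (f i))
    (ρ : α → ℝ) (hρ0 : ∀ a, 0 ≤ ρ a) (hρ1 : ∑ a, ρ a = 1)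
    (β : ℝ) (hβ : ∀ x ∈ X, ∑ a, ρ a * (if x ∈ s a then (1:ℝ) else 0) ≤ β) :
    1 ≤ β ^ (q - 1) * (2 * q * d * (p.choose q)) ∨ 1 ≤ β * (2 * p ^ 2) := by
  classical
  set F : ℝ → ℝ := fun x => ∑ a, ρ a * (if x ∈ s a then (1:ℝ) else 0) with hF
  have hFnn : ∀ x, 0 ≤ F x := by
    intro x
    apply Finset.sum_nonneg
    intro a _
    have : (0:ℝ) ≤ (if x ∈ s a then (1:ℝ) else 0) := by positivity
    exact mul_nonneg (hρ0 a) this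
  have hne : Nonempty α := by
    by_contra h
    rw [not_nonempty_iff] at h
    rw [Finset.univ_eq_empty, Finset.sum_empty] at hρ1
    norm_num at hρ1
  have hρβ : ∀ a, ρ a ≤ β := by
    intro a
    obtain ⟨x, hx⟩ := hptsne a
    have hxX : x ∈ X := hptsX a hx
    have h1 : ρ a * (if x ∈ s a then (1:ℝ) else 0) ≤ F x := by
      apply Finset.single_le_sum (f := fun b => ρ b * (if x ∈ s b then (1:ℝ) else 0))
        _ (mem_univ a)
      intro b _
      have : (0:ℝ) ≤ (if x ∈ s b then (1:ℝ) else 0) := by positivity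
      exact mul_nonneg (hρ0 b) this
    rw [if_pos (hptsmem a x hx), mul_one] at h1
    exact h1.trans (hβ x hxX)
  have hβ0 : 0 ≤ β := le_trans (hρ0 (Classical.arbitrary α)) (hρβ _)
  have hsq : ∑ a, ρ a ^ 2 ≤ β := by
    calc ∑ a, ρ a ^ 2 ≤ ∑ a, ρ a * β := by
          apply Finset.sum_le_sum
          intro a _
          rw [sq]
          exact mul_le_mul_of_nonneg_left (hρβ a) (hρ0 a)
    _ = β := by rw [← Finset.sum_mul, hρ1, one_mul]
  by_cases hcase : 1 ≤ β * (2 * p ^ 2)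
  · exact Or.inr hcase
  left
  push_neg at hcase
  -- E1 : total sum is 1
  have E1 : ∑ f : Fin p → α, ∏ i, ρ (f i) = 1 := by
    rw [← Fintype.piFinset_univ, ← Finset.prod_univ_sum (fun _ => univ) (fun _ b => ρ b)]
    simp [hρ1]
  have hprodnn : ∀ f : Fin p → α, 0 ≤ ∏ i, ρ (f i) := fun f =>
    Finset.prod_nonneg (fun i _ => hρ0 (f i))
  -- noninjective part
  have E3 : ∑ f ∈ univ.filter (fun f : Fin p → α => ¬ Function.Injective f), ∏ i, ρ (f i)
      ≤ (p ^ 2 : ℝ) * β := by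
    set G : (Fin p × Fin p) → α → (Fin p → α) → ℝ := fun ij a f =>
      (if f ij.1 = a then (1:ℝ) else 0) * (if f ij.2 = a then 1 else 0) * ∏ i, ρ (f i) with hG
    have hGnn : ∀ ij a f, 0 ≤ G ij a f := by
      intro ij a f
      apply mul_nonneg (mul_nonneg _ _) (hprodnn f) <;> positivity
    have step1 : ∀ f : Fin p → α, ¬ Function.Injective f →
        (∏ i, ρ (f i)) ≤ ∑ ij ∈ (univ : Finset (Fin p)).offDiag, ∑ a : α, G ij a f := by
      intro f hf
      obtain ⟨i, j, hfij, hij⟩ := Function.not_injective_iff.mp hf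
      have hmem : (i, j) ∈ (univ : Finset (Fin p)).offDiag := by
        simp [Finset.mem_offDiag, hij]
      have h0 : (∏ k, ρ (f k)) = G (i, j) (f i) f := by
        rw [hG]; simp [hfij.symm]
      have h1 : G (i, j) (f i) f ≤ ∑ a : α, G (i, j) a f :=
        Finset.single_le_sum (fun a _ => hGnn _ a f) (mem_univ (f i))
      have h2 : ∑ a : α, G (i, j) a f ≤ ∑ ij ∈ (univ : Finset (Fin p)).offDiag, ∑ a : α, G ij a f :=
        Finset.single_le_sum (f := fun ij => ∑ a : α, G ij a f)
          (fun ij _ => Finset.sum_nonneg (fun a _ => hGnn ij a f)) hmem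
      calc (∏ k, ρ (f k)) = G (i,j) (f i) f := h0
      _ ≤ _ := h1.trans h2
    have step2 : ∀ ij ∈ (univ : Finset (Fin p)).offDiag,
        ∀ a : α, ∑ f : Fin p → α, G ij a f = ρ a ^ 2 := by
      rintro ⟨i, j⟩ hmem a
      rw [Finset.mem_offDiag] at hmem
      have hij : i ≠ j := hmem.2.2
      set c : Fin p → α → ℝ := fun k b =>
        if k = i then (if b = a then 1 else 0) else if k = j then (if b = a then 1 else 0) else 1
        with hc
      have hcout : ∀ k ∉ ({i, j} : Finset (Fin p)), ∀ b, c k b = 1 := by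
        intro k hk b
        simp only [Finset.mem_insert, Finset.mem_singleton] at hk
        push_neg at hk
        rw [hc]
        simp [hk.1, hk.2]
      have hper : ∀ f : Fin p → α, G (i, j) a f = ∏ k, (ρ (f k) * c k (f k)) := by
        intro f
        rw [PQ_prod_split ρ c {i, j} hcout f, Finset.prod_pair hij, hG, hc]
        simp [hij.symm]
      rw [Finset.sum_congr rfl (fun f _ => hper f),
        PQ_sum_prod ρ c hρ1 {i, j} hcout, Finset.prod_pair hij]
      have hval : ∀ k, (k = i ∨ k = j) → ∑ b, ρ b * c k b = ρ a := by
        intro k hk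
        have : ∀ b : α, ρ b * c k b = if b = a then ρ b else 0 := by
          intro b
          rw [hc]
          rcases hk with h | h <;> subst h <;> simp [hij, hij.symm] <;> split <;> ring
        rw [Finset.sum_congr rfl (fun b _ => this b), Finset.sum_ite_eq' univ a ρ]
        simp
      rw [hval i (Or.inl rfl), hval j (Or.inr rfl), sq]
    calc ∑ f ∈ univ.filter (fun f : Fin p → α => ¬ Function.Injective f), ∏ i, ρ (f i)
        ≤ ∑ f ∈ univ.filter (fun f : Fin p → α => ¬ Function.Injective f),
            ∑ ij ∈ (univ : Finset (Fin p)).offDiag, ∑ a : α, G ij a f := by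
          apply Finset.sum_le_sum
          intro f hf
          exact step1 f (Finset.mem_filter.mp hf).2
    _ ≤ ∑ f : Fin p → α, ∑ ij ∈ (univ : Finset (Fin p)).offDiag, ∑ a : α, G ij a f := by
          apply Finset.sum_le_sum_of_subset_of_nonneg (Finset.filter_subset _ _)
          intro f _ _
          exact Finset.sum_nonneg fun ij _ => Finset.sum_nonneg fun a _ => hGnn ij a f
    _ = ∑ ij ∈ (univ : Finset (Fin p)).offDiag, ∑ f : Fin p → α, ∑ a : α, G ij a f :=
          Finset.sum_comm
    _ = ∑ ij ∈ (univ : Finset (Fin p)).offDiag, ∑ a : α, ∑ f : Fin p → α, G ij a f := by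
          exact Finset.sum_congr rfl fun ij _ => Finset.sum_comm
    _ = ∑ ij ∈ (univ : Finset (Fin p)).offDiag, ∑ a : α, ρ a ^ 2 := by
          exact Finset.sum_congr rfl fun ij hij => Finset.sum_congr rfl fun a _ => step2 ij hij a
    _ = ((univ : Finset (Fin p)).offDiag.card : ℝ) * ∑ a : α, ρ a ^ 2 := by
          rw [Finset.sum_const, nsmul_eq_mul]
    _ ≤ (p ^ 2 : ℝ) * β := by
          apply mul_le_mul _ hsq (Finset.sum_nonneg fun a _ => by positivity) (by positivity)
          have : ((univ : Finset (Fin p)).offDiag.card : ℕ) ≤ p * p := by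
            rw [Finset.offDiag_card]
            simp
          calc ((univ : Finset (Fin p)).offDiag.card : ℝ) ≤ ((p * p : ℕ) : ℝ) := by
                exact_mod_cast this
          _ = (p:ℝ)^2 := by push_cast; ring
  -- injective part
  have E4 : ∑ f ∈ univ.filter (fun f : Fin p → α => Function.Injective f), ∏ i, ρ (f i)
      ≤ (p.choose q : ℝ) * q * (d * β ^ (q - 1)) := by
    set F : ℝ → ℝ := fun x => ∑ a, ρ a * (if x ∈ s a then (1:ℝ) else 0) with hF
    set S : ℝ → ℝ := fun x => ∑ a, ρ a * (if x ∈ pts a then (1:ℝ) else 0) with hS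
    have hSnn : ∀ x, 0 ≤ S x := by
      intro x
      apply Finset.sum_nonneg
      intro a _
      have : (0:ℝ) ≤ (if x ∈ pts a then (1:ℝ) else 0) := by positivity
      exact mul_nonneg (hρ0 a) this
    set T : Finset (Fin p) → Fin p → ℝ → (Fin p → α) → ℝ := fun Q j x f =>
      (if x ∈ pts (f j) then (1:ℝ) else 0) *
        (∏ i ∈ Q.erase j, if x ∈ s (f i) then (1:ℝ) else 0) * ∏ i, ρ (f i) with hT
    have hTnn : ∀ Q j x f, 0 ≤ T Q j x f := by
      intro Q j x f
      apply mul_nonneg (mul_nonneg _ _) (hprodnn f)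
      · positivity
      · apply Finset.prod_nonneg; intro i _; positivity
    set PS : Finset (Finset (Fin p)) := Finset.powersetCard q (univ : Finset (Fin p)) with hPS
    set W : (Fin p → α) → ℝ := fun f => ∑ Q ∈ PS, ∑ j ∈ Q, ∑ x ∈ X, T Q j x f with hW
    have step1 : ∀ f : Fin p → α, Function.Injective f → (∏ i, ρ (f i)) ≤ W f := by
      intro f hf
      obtain ⟨Q, hQcard, j, hjQ, x, hxpts, hxall⟩ := hwit f hf
      have hQPS : Q ∈ PS := Finset.mem_powersetCard.mpr ⟨Finset.subset_univ _, hQcard⟩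
      have hxX : x ∈ X := hptsX (f j) hxpts
      have h0 : (∏ i, ρ (f i)) = T Q j x f := by
        rw [hT]
        simp only [if_pos hxpts]
        rw [Finset.prod_congr rfl (fun i hi => if_pos (hxall i (Finset.mem_of_mem_erase hi)))]
        simp
      have h1 : T Q j x f ≤ ∑ x ∈ X, T Q j x f :=
        Finset.single_le_sum (fun y _ => hTnn Q j y f) hxX
      have h2 : ∑ x ∈ X, T Q j x f ≤ ∑ j ∈ Q, ∑ x ∈ X, T Q j x f :=
        Finset.single_le_sum (f := fun j => ∑ x ∈ X, T Q j x f)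
          (fun j' _ => Finset.sum_nonneg fun y _ => hTnn Q j' y f) hjQ
      have h3 : ∑ j ∈ Q, ∑ x ∈ X, T Q j x f ≤ W f :=
        Finset.single_le_sum (f := fun Q => ∑ j ∈ Q, ∑ x ∈ X, T Q j x f)
          (fun Q' _ => Finset.sum_nonneg fun j' _ => Finset.sum_nonneg fun y _ => hTnn Q' j' y f)
          hQPS
      rw [h0]
      exact h1.trans (h2.trans h3)
    have step2 : ∀ Q ∈ PS, ∀ j ∈ Q, ∀ x, ∑ f : Fin p → α, T Q j x f = S x * F x ^ (q - 1) := by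
      intro Q hQPS j hjQ x
      have hQcard : Q.card = q := (Finset.mem_powersetCard.mp hQPS).2
      set c : Fin p → α → ℝ := fun i b =>
        if i = j then (if x ∈ pts b then 1 else 0)
        else if i ∈ Q.erase j then (if x ∈ s b then 1 else 0) else 1 with hc
      have hcout : ∀ i ∉ Q, ∀ b, c i b = 1 := by
        intro i hiQ b
        have h1 : i ≠ j := fun h => hiQ (h ▸ hjQ)
        have h2 : i ∉ Q.erase j := fun h => hiQ (Finset.mem_of_mem_erase h)
        rw [hc]
        simp [h1, h2]
      have hper : ∀ f : Fin p → α, T Q j x f = ∏ i, (ρ (f i) * c i (f i)) := by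
        intro f
        rw [PQ_prod_split ρ c Q hcout f, ← Finset.mul_prod_erase Q _ hjQ, hT]
        have hcj : c j (f j) = (if x ∈ pts (f j) then (1:ℝ) else 0) := by rw [hc]; simp
        have hci : ∀ i ∈ Q.erase j, c i (f i) = (if x ∈ s (f i) then (1:ℝ) else 0) := by
          intro i hi
          rw [hc]
          simp [Finset.ne_of_mem_erase hi, hi]
        rw [hcj, Finset.prod_congr rfl hci]
        ring
      rw [Finset.sum_congr rfl (fun f _ => hper f), PQ_sum_prod ρ c hρ1 Q hcout,
        ← Finset.mul_prod_erase Q _ hjQ]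
      have hj' : (∑ b, ρ b * c j b) = S x := by
        rw [hS, hc]; simp
      have hi' : ∀ i ∈ Q.erase j, (∑ b, ρ b * c i b) = F x := by
        intro i hi
        rw [hF, hc]
        simp [Finset.ne_of_mem_erase hi, hi]
      rw [hj', Finset.prod_congr rfl hi', Finset.prod_const, Finset.card_erase_of_mem hjQ, hQcard]
    have step3 : ∑ x ∈ X, S x * F x ^ (q - 1) ≤ d * β ^ (q - 1) := by
      have h1 : ∑ x ∈ X, S x * F x ^ (q - 1) ≤ ∑ x ∈ X, S x * β ^ (q - 1) := by
        apply Finset.sum_le_sum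
        intro x hx
        exact mul_le_mul_of_nonneg_left
          (pow_le_pow_left₀ (hFnn x) (hβ x hx) (q - 1)) (hSnn x)
      have h2 : ∑ x ∈ X, S x = ∑ a, ρ a * ((pts a).card : ℝ) := by
        rw [hS, Finset.sum_comm]
        apply Finset.sum_congr rfl
        intro a _
        rw [← Finset.mul_sum]
        congr 1
        rw [Finset.sum_boole, Finset.filter_mem_eq_inter, Finset.inter_eq_right.mpr (hptsX a)]
      have h3 : ∑ a, ρ a * ((pts a).card : ℝ) ≤ (d : ℝ) := by
        calc ∑ a, ρ a * ((pts a).card : ℝ) ≤ ∑ a, ρ a * (d:ℝ) := by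
              apply Finset.sum_le_sum
              intro a _
              exact mul_le_mul_of_nonneg_left (by exact_mod_cast hcardpts a) (hρ0 a)
        _ = d := by rw [← Finset.sum_mul, hρ1, one_mul]
      calc ∑ x ∈ X, S x * F x ^ (q-1) ≤ ∑ x ∈ X, S x * β ^ (q-1) := h1
      _ = (∑ x ∈ X, S x) * β ^ (q-1) := by rw [Finset.sum_mul]
      _ ≤ d * β ^ (q-1) := by
          apply mul_le_mul_of_nonneg_right _ (by positivity)
          rw [h2]; exact h3
    calc ∑ f ∈ univ.filter (fun f : Fin p → α => Function.Injective f), ∏ i, ρ (f i)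
        ≤ ∑ f ∈ univ.filter (fun f : Fin p → α => Function.Injective f), W f := by
          apply Finset.sum_le_sum
          intro f hf
          exact step1 f (Finset.mem_filter.mp hf).2
    _ ≤ ∑ f : Fin p → α, W f := by
          apply Finset.sum_le_sum_of_subset_of_nonneg (Finset.filter_subset _ _)
          intro f _ _
          exact Finset.sum_nonneg fun Q _ => Finset.sum_nonneg fun j _ =>
            Finset.sum_nonneg fun x _ => hTnn Q j x f
    _ = ∑ Q ∈ PS, ∑ f : Fin p → α, ∑ j ∈ Q, ∑ x ∈ X, T Q j x f := Finset.sum_comm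
    _ = ∑ Q ∈ PS, ∑ j ∈ Q, ∑ f : Fin p → α, ∑ x ∈ X, T Q j x f :=
          Finset.sum_congr rfl fun Q _ => Finset.sum_comm
    _ = ∑ Q ∈ PS, ∑ j ∈ Q, ∑ x ∈ X, ∑ f : Fin p → α, T Q j x f :=
          Finset.sum_congr rfl fun Q _ => Finset.sum_congr rfl fun j _ => Finset.sum_comm
    _ = ∑ Q ∈ PS, ∑ j ∈ Q, ∑ x ∈ X, S x * F x ^ (q - 1) := by
          apply Finset.sum_congr rfl
          intro Q hQ
          apply Finset.sum_congr rfl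
          intro j hj
          exact Finset.sum_congr rfl fun x _ => step2 Q hQ j hj x
    _ ≤ ∑ Q ∈ PS, ∑ j ∈ Q, (d * β ^ (q - 1)) := by
          apply Finset.sum_le_sum
          intro Q _
          apply Finset.sum_le_sum
          intro j _
          exact step3
    _ = ∑ Q ∈ PS, (Q.card : ℝ) * (d * β ^ (q - 1)) := by
          apply Finset.sum_congr rfl
          intro Q _
          rw [Finset.sum_const, nsmul_eq_mul]
    _ = (p.choose q : ℝ) * q * (d * β ^ (q - 1)) := by
          rw [Finset.sum_congr rfl (fun Q hQ => by
            rw [(Finset.mem_powersetCard.mp hQ).2]), Finset.sum_const, nsmul_eq_mul, hPS,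
            Finset.card_powersetCard, Finset.card_univ, Fintype.card_fin]
          ring
  have Esplit : (∑ f ∈ univ.filter (fun f : Fin p → α => Function.Injective f), ∏ i, ρ (f i))
      + (∑ f ∈ univ.filter (fun f : Fin p → α => ¬ Function.Injective f), ∏ i, ρ (f i)) = 1 := by
    rw [Finset.sum_filter_add_sum_filter_not]
    exact E1
  -- conclude
  have hp2β : (p:ℝ)^2 * β < 1/2 := by nlinarith
  have : (1:ℝ)/2 ≤ (p.choose q : ℝ) * q * (d * β ^ (q - 1)) := by nlinarith
  have hgoal : 1 ≤ β ^ (q-1) * (2 * q * d * (p.choose q)) := by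
    have := this
    push_cast at this ⊢
    nlinarith
  exact hgoal

lemma PQ_rpow (p q d : ℕ) (hq : 2 ≤ q) (hqp : q ≤ p) (hd : 1 ≤ d) (β : ℝ) (hβ0 : 0 ≤ β)
    (h : 1 ≤ β ^ (q - 1) * (2 * q * d * (p.choose q))) :
    1 ≤ β * ((2 : ℝ) ^ (1 / ((q : ℝ) - 1)) * (Real.exp 1 * p) ^ ((q : ℝ) / ((q : ℝ) - 1)) / q
      * (d : ℝ) ^ (1 / ((q : ℝ) - 1))) := by
  have hq0 : (0:ℝ) < q := by positivity
  have hr : (0:ℝ) < (q : ℝ) - 1 := by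
    have : (2:ℝ) ≤ q := by exact_mod_cast hq
    linarith
  set r : ℝ := (q : ℝ) - 1 with hrdef
  have hrcast : ((q - 1 : ℕ) : ℝ) = r := by
    rw [hrdef]
    push_cast [Nat.cast_sub (by omega : 1 ≤ q)]
    ring
  set E : ℝ := Real.exp 1 * p with hE
  have hE0 : 0 ≤ E := by positivity
  set A : ℝ := (2 : ℝ) ^ (1 / r) * E ^ ((q:ℝ) / r) / q * (d : ℝ) ^ (1 / r) with hA
  have hA0 : 0 ≤ A := by
    rw [hA]
    positivity
  have hApow : A ^ (q - 1) = 2 * E ^ q / (q:ℝ) ^ (q - 1) * d := by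
    have h1 : A ^ (q - 1 : ℕ) = A ^ r := by
      rw [← Real.rpow_natCast A (q - 1), hrcast]
    rw [h1, hA]
    rw [Real.mul_rpow (by positivity) (by positivity),
      Real.div_rpow (by positivity) (le_of_lt hq0),
      Real.mul_rpow (by positivity) (by positivity)]
    rw [← Real.rpow_mul (by norm_num : (0:ℝ) ≤ 2),
      ← Real.rpow_mul hE0, ← Real.rpow_mul (by positivity : (0:ℝ) ≤ (d:ℝ))]
    rw [one_div_mul_cancel (ne_of_gt hr), div_mul_cancel₀ _ (ne_of_gt hr)]
    rw [Real.rpow_one, Real.rpow_one, Real.rpow_natCast, ← hrcast, Real.rpow_natCast]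
  -- 2 q d C ≤ A^(q-1)
  have hkey : (2 * q * d * (p.choose q) : ℝ) ≤ A ^ (q - 1) := by
    rw [hApow]
    have hcb : (p.choose q : ℝ) * (q:ℝ) ^ q ≤ E ^ q := by
      have := PQ_choose_bound p q
      rw [hE]
      exact_mod_cast this
    have hqpow : ((q:ℝ) ^ (q - 1)) * q = (q:ℝ) ^ q := by
      rw [← pow_succ]
      congr 1
      omega
    rw [div_mul_eq_mul_div, le_div_iff₀ (by positivity)]
    calc (2 * q * d * (p.choose q) : ℝ) * (q:ℝ) ^ (q-1)
        = 2 * d * ((p.choose q : ℝ) * ((q:ℝ)^(q-1) * q)) := by ring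
    _ = 2 * d * ((p.choose q : ℝ) * (q:ℝ)^q) := by rw [mul_comm ((q:ℝ)^(q-1)) (q:ℝ), ← hqpow]; ring_nf
    _ ≤ 2 * d * E ^ q := by
        apply mul_le_mul_of_nonneg_left hcb (by positivity)
    _ = 2 * E ^ q * d := by ring
  have hfin : 1 ≤ (β * A) ^ (q - 1) := by
    rw [mul_pow]
    calc (1:ℝ) ≤ β ^ (q - 1) * (2 * q * d * (p.choose q)) := h
    _ ≤ β ^ (q - 1) * A ^ (q - 1) := by
        apply mul_le_mul_of_nonneg_left hkey (by positivity)
  have := (one_le_pow_iff_of_nonneg (mul_nonneg hβ0 hA0) (by omega : q - 1 ≠ 0)).mp hfin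
  rw [hA] at this
  exact this


open Classical in
lemma PQ_mwu {α : Type*} [Fintype α] [Nonempty α] (s : α → Set ℝ) (B ε : ℝ)
    (hB : 1 ≤ B) (hε : 0 < ε)
    (hcore : ∀ v : α → ℝ, (∀ a, 0 < v a) → ∃ x : ℝ,
      (∑ a, v a) ≤ B * ∑ a, v a * (if x ∈ s a then (1:ℝ) else 0)) :
    ∃ w : ℝ →₀ ℝ, (∀ x, 0 ≤ w x) ∧
      (∀ a : α, 1 ≤ ∑ x ∈ w.support, Set.indicator (s a) (fun y => w y) x) ∧
      ∑ x ∈ w.support, w x ≤ B + ε := by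
  classical
  set m : ℕ := Fintype.card α with hm
  have hm1 : 1 ≤ m := Fintype.card_pos
  have hB0 : 0 < B := lt_of_lt_of_le one_pos hB
  set η : ℝ := ε / (2 * B + ε) with hη
  have hη0 : 0 < η := by positivity
  have hη1 : η < 1 := by
    rw [hη, div_lt_one (by positivity)]
    linarith
  have h1η : 1 - η = 2 * B / (2 * B + ε) := by
    rw [hη]; field_simp; ring
  have h1η0 : 0 < 1 - η := by rw [h1η]; positivity
  have hηB : η / B < 1 := by
    calc η / B ≤ η / 1 := by
          apply div_le_div_of_nonneg_left (le_of_lt hη0) one_pos hB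
    _ = η := div_one η
    _ < 1 := hη1
  have hηB0 : 0 < 1 - η / B := by linarith
  -- the choice function
  set pick : (α → ℝ) → ℝ := fun v =>
    if h : ∀ a, 0 < v a then (hcore v h).choose else 0 with hpick
  have hpickspec : ∀ v : α → ℝ, (∀ a, 0 < v a) →
      (∑ a, v a) ≤ B * ∑ a, v a * (if pick v ∈ s a then (1:ℝ) else 0) := by
    intro v hv
    rw [hpick]
    simp only [dif_pos hv]
    exact (hcore v hv).choose_spec
  -- the weight evolution
  set step : (α → ℝ) → (α → ℝ) := fun v a => v a * (if pick v ∈ s a then 1 - η else 1)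
    with hstep
  set ω : ℕ → α → ℝ := fun t => step^[t] (fun _ => 1) with hω
  have hωsucc : ∀ t, ω (t + 1) = step (ω t) := fun t => Function.iterate_succ_apply' step t _
  set xs : ℕ → ℝ := fun t => pick (ω t) with hxs
  have hω1 : ∀ t a, ω (t + 1) a = ω t a * (if xs t ∈ s a then 1 - η else 1) := by
    intro t a
    rw [hωsucc]
  have hωpos : ∀ t a, 0 < ω t a := by
    intro t
    induction t with
    | zero => intro a; rw [hω]; norm_num
    | succ n ih =>
      intro a
      rw [hω1]
      have : (0:ℝ) < (if xs n ∈ s a then 1 - η else 1) := by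
        split
        · exact h1η0
        · norm_num
      exact mul_pos (ih a) this
  set Ω : ℕ → ℝ := fun t => ∑ a, ω t a with hΩ
  have hΩpos : ∀ t, 0 < Ω t := fun t =>
    Finset.sum_pos (fun a _ => hωpos t a) univ_nonempty
  have hΩ0 : Ω 0 = m := by
    rw [hΩ, hω]
    simp [hm]
  have hΩstep : ∀ t, Ω (t + 1) ≤ Ω t * (1 - η / B) := by
    intro t
    have hgain := hpickspec (ω t) (hωpos t)
    have expand : Ω (t + 1) = Ω t - η * ∑ a, ω t a * (if xs t ∈ s a then (1:ℝ) else 0) := by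
      show (∑ a, ω (t+1) a) = (∑ a, ω t a) - η * ∑ a, ω t a * (if xs t ∈ s a then (1:ℝ) else 0)
      rw [Finset.sum_congr rfl (fun a _ => hω1 t a), Finset.mul_sum, ← Finset.sum_sub_distrib]
      apply Finset.sum_congr rfl
      intro a _
      by_cases h : xs t ∈ s a <;> simp [h] <;> ring
    have hG : Ω t / B ≤ ∑ a, ω t a * (if xs t ∈ s a then (1:ℝ) else 0) := by
      rw [div_le_iff₀ hB0]
      calc Ω t ≤ B * ∑ a, ω t a * (if xs t ∈ s a then (1:ℝ) else 0) := hgain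
      _ = _ := by ring
    have h2 : η * (Ω t / B) ≤ η * ∑ a, ω t a * (if xs t ∈ s a then (1:ℝ) else 0) :=
      mul_le_mul_of_nonneg_left hG (le_of_lt hη0)
    rw [expand]
    have : Ω t * (1 - η / B) = Ω t - η * (Ω t / B) := by ring
    rw [this]
    linarith
  have hΩle : ∀ T, Ω T ≤ (m : ℝ) * (1 - η / B) ^ T := by
    intro T
    induction T with
    | zero => simp [hΩ0]
    | succ n ih =>
      calc Ω (n+1) ≤ Ω n * (1 - η/B) := hΩstep n
      _ ≤ (m : ℝ) * (1 - η/B)^n * (1 - η/B) := by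
            apply mul_le_mul_of_nonneg_right ih (le_of_lt hηB0)
      _ = (m : ℝ) * (1 - η/B)^(n+1) := by ring
  -- counts
  set k : ℕ → α → ℕ := fun T a => ((Finset.range T).filter (fun t => xs t ∈ s a)).card with hk
  have hωeq : ∀ T a, ω T a = (1 - η) ^ (k T a) := by
    intro T
    induction T with
    | zero => intro a; rw [hω, hk]; simp
    | succ n ih =>
      intro a
      rw [hω1, ih a, hk]
      simp only
      rw [Finset.range_add_one, Finset.filter_insert]
      by_cases hmem : xs n ∈ s a
      · rw [if_pos hmem, if_pos hmem, Finset.card_insert_of_notMem (by simp), pow_succ]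
      · rw [if_neg hmem, if_neg hmem, mul_one]
  -- key count lower bound, for a given horizon T
  have hkey : ∀ T a, ((1 - η) ^ (k T a) : ℝ) ≤ (m : ℝ) * (1 - η / B) ^ T := by
    intro T a
    rw [← hωeq]
    calc ω T a ≤ Ω T := by
          apply Finset.single_le_sum (fun b _ => le_of_lt (hωpos T b)) (mem_univ a)
    _ ≤ _ := hΩle T
  -- logs
  set L1 : ℝ := -Real.log (1 - η) with hL1
  set L2 : ℝ := -Real.log (1 - η / B) with hL2
  have hL1pos : 0 < L1 := by
    rw [hL1, neg_pos]
    exact Real.log_neg h1η0 (by linarith)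
  have hL1le : L1 ≤ η / (1 - η) := by
    rw [hL1, ← Real.log_inv]
    calc Real.log (1 - η)⁻¹ ≤ (1 - η)⁻¹ - 1 := Real.log_le_sub_one_of_pos (by positivity)
    _ = η / (1 - η) := by field_simp; ring
  have hL2ge : η / B ≤ L2 := by
    rw [hL2, le_neg]
    have := Real.log_le_sub_one_of_pos hηB0
    linarith
  have hklog : ∀ (T : ℕ) (a : α), (T : ℝ) * L2 - Real.log m ≤ (k T a : ℝ) * L1 := by
    intro T a
    have h := Real.log_le_log (by positivity) (hkey T a)
    rw [Real.log_pow, Real.log_mul (by positivity) (by positivity), Real.log_pow] at h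
    rw [hL1, hL2]
    linarith [h]
  -- choose T
  set T : ℕ := ⌈(2 * B * (B + ε) * Real.log m) / (η * ε)⌉₊ + 1 with hT
  have hT1 : 1 ≤ T := Nat.le_add_left 1 _
  have hTpos : (0:ℝ) < T := by
    have : (0:ℕ) < T := hT1
    exact_mod_cast this
  have hlogm0 : 0 ≤ Real.log m := by
    apply Real.log_nonneg
    exact_mod_cast hm1
  have hTge : (2 * B * (B + ε) * Real.log m) / (η * ε) ≤ (T:ℝ) := by
    rw [hT]
    push_cast
    have := Nat.le_ceil ((2 * B * (B + ε) * Real.log m) / (η * ε))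
    linarith
  -- main count bound : (T : ℝ) ≤ (B + ε) * k T a
  have hcount : ∀ a, (T : ℝ) ≤ (B + ε) * (k T a) := by
    intro a
    have h1 : (T:ℝ) * L2 - Real.log m ≤ (k T a : ℝ) * L1 := hklog T a
    have h2 : (B + ε) * ((T:ℝ) * L2 - Real.log m) ≤ (B + ε) * ((k T a : ℝ) * L1) :=
      mul_le_mul_of_nonneg_left h1 (by positivity)
    -- (B+ε) L2 - L1 ≥ η ε / (2 B)
    have h3 : η * ε / (2 * B) ≤ (B + ε) * L2 - L1 := by
      have e1 : (B + ε) * (η / B) ≤ (B + ε) * L2 :=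
        mul_le_mul_of_nonneg_left hL2ge (by positivity)
      have e2 : L1 ≤ η / (1 - η) := hL1le
      have e3 : η / (1 - η) = η * (2 * B + ε) / (2 * B) := by
        rw [h1η]
        field_simp
      have e4 : (B + ε) * (η / B) = η * (B + ε) / B := by ring
      have e5 : η * (B + ε) / B - η * (2 * B + ε) / (2 * B) = η * ε / (2 * B) := by
        field_simp
        ring
      linarith
    -- T * (ηε/(2B)) ≥ (B+ε) log m
    have h4 : (B + ε) * Real.log m ≤ (T:ℝ) * (η * ε / (2 * B)) := by
      have hc : (0:ℝ) < η * ε / (2 * B) := by positivity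
      calc (B + ε) * Real.log m
          = (2 * B * (B + ε) * Real.log m / (η * ε)) * (η * ε / (2 * B)) := by
            field_simp
      _ ≤ (T:ℝ) * (η * ε / (2 * B)) := mul_le_mul_of_nonneg_right hTge (le_of_lt hc)
    have h5 : (B + ε) * Real.log m ≤ (T:ℝ) * ((B + ε) * L2 - L1) := by
      calc (B + ε) * Real.log m ≤ (T:ℝ) * (η * ε / (2 * B)) := h4
      _ ≤ (T:ℝ) * ((B + ε) * L2 - L1) := by
            apply mul_le_mul_of_nonneg_left h3 (le_of_lt hTpos)
    have h6 : (T:ℝ) * L1 ≤ ((B + ε) * (k T a : ℝ)) * L1 := by nlinarith [h2, h5]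
    have := le_of_mul_le_mul_right h6 hL1pos
    linarith
  -- build the cover
  set u : ℝ := (B + ε) / T with hu
  have hu0 : 0 < u := by positivity
  set P : Finset ℝ := (Finset.range T).image xs with hP
  set wf : ℝ → ℝ := fun x => (((Finset.range T).filter (fun t => xs t = x)).card : ℝ) * u
    with hwf
  have hwfnn : ∀ x, 0 ≤ wf x := fun x => mul_nonneg (Nat.cast_nonneg _) (le_of_lt hu0)
  have hwfsupp : ∀ x : ℝ, wf x ≠ 0 → x ∈ P := by
    intro x hx
    rw [hwf] at hx
    simp only at hx
    have hne : ((Finset.range T).filter (fun t => xs t = x)).Nonempty := by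
      rw [Finset.nonempty_iff_ne_empty]
      intro hemp
      rw [hemp] at hx
      simp at hx
    obtain ⟨t, ht⟩ := hne
    rw [Finset.mem_filter] at ht
    rw [hP]
    exact Finset.mem_image.mpr ⟨t, ht.1, ht.2⟩
  set w : ℝ →₀ ℝ := Finsupp.onFinset P wf hwfsupp with hw
  have hwapp : ∀ x, w x = wf x := fun x => rfl
  have hsuppP : w.support ⊆ P := Finsupp.support_onFinset_subset
  refine ⟨w, ?_, ?_, ?_⟩
  · intro x
    rw [hwapp]
    exact hwfnn x
  · -- coverage
    intro a
    have hext : ∑ x ∈ w.support, Set.indicator (s a) (fun y => w y) x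
        = ∑ x ∈ P, Set.indicator (s a) (fun y => w y) x := by
      apply Finset.sum_subset hsuppP
      intro x _ hxs
      have hw0 : w x = 0 := Finsupp.notMem_support_iff.mp hxs
      rw [Set.indicator_apply]
      split
      · exact hw0
      · rfl
    have hind : ∀ x, Set.indicator (s a) (fun y => w y) x
        = if x ∈ s a then wf x else 0 := by
      intro x
      rw [Set.indicator_apply, hwapp]
    -- fiberwise count
    have hfib : k T a = ∑ x ∈ P,
        (if x ∈ s a then ((Finset.range T).filter (fun t => xs t = x)).card else 0) := by
      rw [hk]
      simp only
      rw [Finset.card_eq_sum_card_fiberwise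
        (f := xs) (t := P) (fun t ht => by
          rw [hP]
          exact Finset.mem_image.mpr ⟨t, (Finset.mem_filter.mp ht).1, rfl⟩)]
      apply Finset.sum_congr rfl
      intro x _
      by_cases hxa : x ∈ s a
      · rw [if_pos hxa, Finset.filter_filter]
        congr 1
        apply Finset.filter_congr
        intro t _
        constructor
        · rintro ⟨-, h2⟩
          exact h2
        · intro h2
          exact ⟨h2 ▸ hxa, h2⟩
      · rw [if_neg hxa]
        rw [Finset.card_eq_zero, Finset.filter_filter, Finset.filter_eq_empty_iff]
        rintro t _ ⟨h1, h2⟩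
        exact hxa (h2 ▸ h1)
    have hsum : ∑ x ∈ P, (if x ∈ s a then wf x else 0) = ((k T a : ℕ) : ℝ) * u := by
      have e1 : ∀ x, (if x ∈ s a then wf x else 0)
          = ((if x ∈ s a then (((Finset.range T).filter (fun t => xs t = x)).card : ℕ) else 0 : ℕ) : ℝ) * u := by
        intro x
        by_cases hxa : x ∈ s a <;> simp [hxa, hwf]
      rw [Finset.sum_congr rfl (fun x _ => e1 x), ← Finset.sum_mul, ← Nat.cast_sum, ← hfib]
    rw [hext, Finset.sum_congr rfl (fun x _ => hind x), hsum]
    rw [hu, mul_div_assoc']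
    rw [one_le_div hTpos]
    linarith [hcount a]
  · -- total weight
    have hext : ∑ x ∈ w.support, w x = ∑ x ∈ P, wf x := by
      rw [Finset.sum_congr rfl (fun x _ => hwapp x)]
      apply Finset.sum_subset hsuppP
      intro x _ hxs
      have hw0 : w x = 0 := Finsupp.notMem_support_iff.mp hxs
      exact (hwapp x).symm.trans hw0
    have hfib : T = ∑ x ∈ P, ((Finset.range T).filter (fun t => xs t = x)).card := by
      conv_lhs => rw [← Finset.card_range T]
      exact Finset.card_eq_sum_card_fiberwise (fun t ht => by
        rw [hP]
        exact Finset.mem_image.mpr ⟨t, ht, rfl⟩)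
    have : ∑ x ∈ P, wf x = ((T : ℕ) : ℝ) * u := by
      rw [hwf]
      simp only
      rw [← Finset.sum_mul, ← Nat.cast_sum, ← hfib]
    rw [hext, this, hu, mul_comm, div_mul_cancel₀ _ (ne_of_gt hTpos)]

theorem fracCover_of_pq_property (p q d : ℕ) (hq : 2 ≤ q) (hqp : q ≤ p) (hd : 1 ≤ d)
    (H : Finset (Set ℝ)) (hH : ∀ s ∈ H, IsDInterval d s) (hcard : p ≤ H.card)
    (hprop : HasPQProperty H p q) :
    fracCoverNum H ≤ max
      ((2 : ℝ) ^ (1 / ((q : ℝ) - 1)) * (Real.exp 1 * p) ^ ((q : ℝ) / ((q : ℝ) - 1)) / q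
        * (d : ℝ) ^ (1 / ((q : ℝ) - 1)) + 1)
      (2 * (p : ℝ) ^ 2) := by
  classical
  set A : ℝ := (2 : ℝ) ^ (1 / ((q : ℝ) - 1)) * (Real.exp 1 * p) ^ ((q : ℝ) / ((q : ℝ) - 1)) / q
      * (d : ℝ) ^ (1 / ((q : ℝ) - 1)) with hAdef
  set B : ℝ := max A (2 * (p : ℝ) ^ 2) with hBdef
  have hp2 : (2:ℕ) ≤ p := le_trans hq hqp
  have hB1 : 1 ≤ B := by
    have h1 : (1:ℝ) ≤ 2 * (p:ℝ)^2 := by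
      have : (2:ℝ) ≤ (p:ℝ) := by exact_mod_cast hp2
      nlinarith
    exact le_trans h1 (le_max_right _ _)
  haveI hFin : Fintype {h : Set ℝ // h ∈ H} := FinsetCoe.fintype H
  haveI hne : Nonempty {h : Set ℝ // h ∈ H} := by
    have h0 : 0 < H.card := by omega
    obtain ⟨h, hh⟩ := Finset.card_pos.mp h0
    exact ⟨⟨h, hh⟩⟩
  set s : {h : Set ℝ // h ∈ H} → Set ℝ := fun a => (a : Set ℝ) with hs
  have hstruct : ∀ a : {h : Set ℝ // h ∈ H}, ∃ P : Finset (ℝ × ℝ), P.card ≤ d ∧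
      (a : Set ℝ) = ⋃ I ∈ P, Set.Icc I.1 I.2 := fun a => (hH a.1 a.2).2
  choose Pa hPcard hPeq using hstruct
  set pts : {h : Set ℝ // h ∈ H} → Finset ℝ :=
    fun a => ((Pa a).filter (fun I => I.1 ≤ I.2)).image Prod.fst with hpts
  have hptsmem : ∀ a, ∀ x ∈ pts a, x ∈ s a := by
    intro a x hx
    rw [hpts] at hx
    obtain ⟨I, hI, rfl⟩ := Finset.mem_image.mp hx
    rw [Finset.mem_filter] at hI
    show I.1 ∈ (a : Set ℝ)
    rw [hPeq a]
    exact Set.mem_iUnion₂.mpr ⟨I, hI.1, Set.left_mem_Icc.mpr hI.2⟩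
  have hspec : ∀ a : {h : Set ℝ // h ∈ H}, ∀ y ∈ (a : Set ℝ),
      ∃ x ∈ pts a, x ≤ y ∧ Set.Icc x y ⊆ (a : Set ℝ) := by
    intro a y hy
    rw [hPeq a] at hy
    obtain ⟨I, hI, hyI⟩ := Set.mem_iUnion₂.mp hy
    rw [Set.mem_Icc] at hyI
    refine ⟨I.1, ?_, hyI.1, ?_⟩
    · rw [hpts]
      exact Finset.mem_image.mpr ⟨I, Finset.mem_filter.mpr ⟨hI, le_trans hyI.1 hyI.2⟩, rfl⟩
    · intro z hz
      rw [Set.mem_Icc] at hz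
      rw [hPeq a]
      exact Set.mem_iUnion₂.mpr ⟨I, hI, Set.mem_Icc.mpr ⟨hz.1, le_trans hz.2 hyI.2⟩⟩
  have hptsne : ∀ a, (pts a).Nonempty := by
    intro a
    obtain ⟨y, hy⟩ := (hH a.1 a.2).1
    obtain ⟨x, hx, -, -⟩ := hspec a y hy
    exact ⟨x, hx⟩
  have hcardpts : ∀ a, (pts a).card ≤ d := by
    intro a
    calc (pts a).card ≤ ((Pa a).filter (fun I => I.1 ≤ I.2)).card := Finset.card_image_le
    _ ≤ (Pa a).card := Finset.card_filter_le _ _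
    _ ≤ d := hPcard a
  set X : Finset ℝ := Finset.univ.biUnion pts with hX
  have hptsX : ∀ a, pts a ⊆ X := fun a => Finset.subset_biUnion_of_mem pts (Finset.mem_univ a)
  have hXne : X.Nonempty := by
    obtain ⟨a⟩ := hne
    obtain ⟨x, hx⟩ := hptsne a
    exact ⟨x, hptsX a hx⟩
  have hwit : ∀ f : Fin p → {h : Set ℝ // h ∈ H}, Function.Injective f →
      ∃ Q : Finset (Fin p), Q.card = q ∧ ∃ j ∈ Q, ∃ x ∈ pts (f j), ∀ i ∈ Q, x ∈ s (f i) := by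
    intro f hf
    set vf : Fin p → Set ℝ := fun i => (f i : Set ℝ) with hvf
    have hvinj : Function.Injective vf := fun i j hij => hf (Subtype.val_injective hij)
    set S : Finset (Set ℝ) := Finset.univ.image vf with hS
    have hScard : S.card = p := by
      rw [hS, Finset.card_image_of_injective _ hvinj, Finset.card_univ, Fintype.card_fin]
    have hSsub : S ⊆ H := by
      intro h hh
      obtain ⟨i, -, rfl⟩ := Finset.mem_image.mp hh
      exact (f i).2
    obtain ⟨Tt, hTS, hTcard, y, hy⟩ := hprop S hSsub hScard
    have hyT : ∀ h ∈ Tt, y ∈ h := fun h hh => Set.mem_iInter₂.mp hy h hh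
    set Q : Finset (Fin p) := Finset.univ.filter (fun i => vf i ∈ Tt) with hQ
    have himg : Q.image vf = Tt := by
      apply Finset.Subset.antisymm
      · intro h hh
        obtain ⟨i, hi, rfl⟩ := Finset.mem_image.mp hh
        exact (Finset.mem_filter.mp hi).2
      · intro h hh
        have hhS := hTS hh
        rw [hS] at hhS
        obtain ⟨i, -, rfl⟩ := Finset.mem_image.mp hhS
        exact Finset.mem_image.mpr ⟨i, Finset.mem_filter.mpr ⟨Finset.mem_univ i, hh⟩, rfl⟩
    have hQcard : Q.card = q := by
      rw [← hTcard, ← himg, Finset.card_image_of_injective _ hvinj]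
    have hyQ : ∀ i ∈ Q, y ∈ (f i : Set ℝ) := by
      intro i hi
      exact hyT (vf i) (Finset.mem_filter.mp hi).2
    have hgex : ∀ i ∈ Q, ∃ x, x ∈ pts (f i) ∧ x ≤ y ∧ Set.Icc x y ⊆ (f i : Set ℝ) := by
      intro i hi
      obtain ⟨x, h1, h2, h3⟩ := hspec (f i) y (hyQ i hi)
      exact ⟨x, h1, h2, h3⟩
    choose! g hg using hgex
    have hQne : Q.Nonempty := Finset.card_pos.mp (by omega)
    obtain ⟨j, hjQ, hjmax⟩ := Finset.exists_max_image Q g hQne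
    refine ⟨Q, hQcard, j, hjQ, g j, (hg j hjQ).1, ?_⟩
    intro i hi
    exact (hg i hi).2.2 (Set.mem_Icc.mpr ⟨hjmax i hi, (hg j hjQ).2.1⟩)
  have hmain : ∀ ε : ℝ, 0 < ε → fracCoverNum H ≤ B + ε := by
    intro ε hε
    have hcore : ∀ v : {h : Set ℝ // h ∈ H} → ℝ, (∀ a, 0 < v a) → ∃ x : ℝ,
        (∑ a, v a) ≤ B * ∑ a, v a * (if x ∈ s a then (1:ℝ) else 0) := by
      intro v hv
      set V : ℝ := ∑ a, v a with hV
      have hV0 : 0 < V := Finset.sum_pos (fun a _ => hv a) Finset.univ_nonempty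
      set ρ : {h : Set ℝ // h ∈ H} → ℝ := fun a => v a / V with hρ
      have hρ0 : ∀ a, 0 ≤ ρ a := fun a => div_nonneg (le_of_lt (hv a)) (le_of_lt hV0)
      have hρ1 : ∑ a, ρ a = 1 := by
        rw [hρ, ← Finset.sum_div, ← hV, div_self (ne_of_gt hV0)]
      set Fρ : ℝ → ℝ := fun x => ∑ a, ρ a * (if x ∈ s a then (1:ℝ) else 0) with hFρ
      set β : ℝ := X.sup' hXne Fρ with hβdef
      have hβ : ∀ x ∈ X, (∑ a, ρ a * (if x ∈ s a then (1:ℝ) else 0)) ≤ β := fun x hx =>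
        Finset.le_sup' Fρ hx
      have hβ0 : 0 ≤ β := by
        obtain ⟨x, hx⟩ := hXne
        refine le_trans ?_ (Finset.le_sup' Fρ hx)
        apply Finset.sum_nonneg
        intro a _
        have h2 : (0:ℝ) ≤ (if x ∈ s a then (1:ℝ) else 0) := by positivity
        exact mul_nonneg (hρ0 a) h2
      have hdisj := PQ_core p q d hq hqp hd s pts X hptsX hcardpts hptsne hptsmem hwit
        ρ hρ0 hρ1 β hβ
      have h1B : 1 ≤ β * B := by
        rcases hdisj with h | h
        · have hA' := PQ_rpow p q d hq hqp hd β hβ0 h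
          rw [← hAdef] at hA'
          have h2 : β * A ≤ β * B := mul_le_mul_of_nonneg_left (le_max_left _ _) hβ0
          linarith
        · have h2 : β * (2 * (p:ℝ)^2) ≤ β * B := mul_le_mul_of_nonneg_left (le_max_right _ _) hβ0
          linarith
      obtain ⟨x₀, hx₀X, hx₀⟩ := Finset.exists_mem_eq_sup' hXne Fρ
      refine ⟨x₀, ?_⟩
      have hFx : Fρ x₀ = (∑ a, v a * (if x₀ ∈ s a then (1:ℝ) else 0)) / V := by
        rw [hFρ]
        simp only
        rw [Finset.sum_div]
        apply Finset.sum_congr rfl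
        intro a _
        rw [hρ]
        ring
      have h2 : 1 ≤ Fρ x₀ * B := by
        rw [hβdef, hx₀] at h1B
        exact h1B
      rw [hFx, div_mul_eq_mul_div, le_div_iff₀ hV0] at h2
      calc V ≤ (∑ a, v a * (if x₀ ∈ s a then (1:ℝ) else 0)) * B := by linarith
      _ = B * ∑ a, v a * (if x₀ ∈ s a then (1:ℝ) else 0) := by ring
    obtain ⟨w, hw0, hwcov, hwtot⟩ := PQ_mwu s B ε hB1 hε hcore
    have hmem : (∑ x ∈ w.support, w x) ∈ {t : ℝ | ∃ w : ℝ →₀ ℝ, (∀ x, 0 ≤ w x) ∧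
        (∀ h ∈ H, 1 ≤ ∑ x ∈ w.support, Set.indicator h (fun y => w y) x) ∧
        t = ∑ x ∈ w.support, w x} := by
      refine ⟨w, hw0, ?_, rfl⟩
      intro h hh
      exact hwcov ⟨h, hh⟩
    have hbdd : BddBelow {t : ℝ | ∃ w : ℝ →₀ ℝ, (∀ x, 0 ≤ w x) ∧
        (∀ h ∈ H, 1 ≤ ∑ x ∈ w.support, Set.indicator h (fun y => w y) x) ∧
        t = ∑ x ∈ w.support, w x} := by
      refine ⟨0, ?_⟩
      rintro t ⟨w', hw1', -, hw3'⟩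
      rw [hw3']
      exact Finset.sum_nonneg fun x _ => hw1' x
    calc fracCoverNum H ≤ ∑ x ∈ w.support, w x := csInf_le hbdd hmem
    _ ≤ B + ε := hwtot
  have hfinal : fracCoverNum H ≤ B := le_of_forall_pos_le_add hmain
  calc fracCoverNum H ≤ B := hfinal
  _ ≤ max (A + 1) (2 * (p:ℝ)^2) := by
      rw [hBdef]
      apply max_le_max _ (le_refl _)
      linarith
end
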